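/- arXiv:1512.00333 — 7 statements merged into one kernel-verified Lean document; each statement's English description precedes it below -/
import Mathlib

section
/- The boundary B_q of the q-T-fractal △_q contains exactly 2^q edges, and every vertex of △_q is incident with some edge of B_q; moreover B_q forms a σ-τ path visiting all vertices of △_q. -/
/-- Auxiliary adjacency: `b = a + 2^(q-i)` for some `i ≤ q` with `2^(q-i) ∣ a`.
These are exactly the (directed versions of the) edges of the `q`-T-fractal,
where the boundary `B_i` consists of the edges at scale `2^(q-i)`. -/
def fracAdjAux (q a b : ℕ) : Prop :=
  ∃ i ≤ q, 2 ^ (q - i) ∣ a ∧ b = a + 2 ^ (q - i)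

/-- The `q`-T-fractal, realized on the vertex set `{0, 1, …, 2^q}` (the vertices of the
outermost boundary path): the left copy of `△_{q-1}` lives on `{0,…,2^{q-1}}`, the right
copy on `{2^{q-1},…,2^q}`, and `{0, 2^q}` is the extra edge; `σ = 0` and `τ = 2^q`. -/
def TFractal (q : ℕ) : SimpleGraph (Fin (2 ^ q + 1)) where
  Adj a b := fracAdjAux q a.val b.val ∨ fracAdjAux q b.val a.val
  symm := ⟨fun _ _ h => h.symm⟩
  loopless := by
    constructor
    intro a h
    rcases h with ⟨i, _, _, h⟩ | ⟨i, _, _, h⟩ <;>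
      · have := Nat.two_pow_pos (q - i)
        omega

/-- The special vertex `σ` of the `q`-T-fractal. -/
def sigV (q : ℕ) : Fin (2 ^ q + 1) := ⟨0, Nat.succ_pos _⟩

/-- The special vertex `τ` of the `q`-T-fractal. -/
def tauV (q : ℕ) : Fin (2 ^ q + 1) := ⟨2 ^ q, Nat.lt_succ_self _⟩

/-- The boundary `B_i` of the `q`-T-fractal: the edges created in round `i`,
i.e. the edges `{a, a + 2^(q-i)}` with `2^(q-i) ∣ a`. -/
def boundaryB (q i : ℕ) : Set (Sym2 (Fin (2 ^ q + 1))) :=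
  { e | ∃ a b : Fin (2 ^ q + 1),
      e = s(a, b) ∧ 2 ^ (q - i) ∣ a.val ∧ b.val = a.val + 2 ^ (q - i) }

/-- `C` is a `σ`-`τ` edge cut in the `q`-T-fractal. -/
def IsSTCut (q : ℕ) (C : Set (Sym2 (Fin (2 ^ q + 1)))) : Prop :=
  ¬ ((TFractal q).deleteEdges C).Reachable (sigV q) (tauV q)

/-- `C` is a minimum `σ`-`τ` edge cut in the `q`-T-fractal. -/
def MinSTCut (q : ℕ) (C : Set (Sym2 (Fin (2 ^ q + 1)))) : Prop :=
  C ⊆ (TFractal q).edgeSet ∧ IsSTCut q C ∧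
    ∀ C' ⊆ (TFractal q).edgeSet, IsSTCut q C' → C.ncard ≤ C'.ncard


/-- The walk `0 → 1 → ⋯ → n` in the `q`-T-fractal. -/
def pathTo (q : ℕ) : (n : ℕ) → (h : n ≤ 2 ^ q) → (TFractal q).Walk (sigV q) ⟨n, by omega⟩
  | 0, _ => SimpleGraph.Walk.nil
  | n+1, h => (pathTo q n (by omega)).concat
      (show (TFractal q).Adj _ _ from Or.inl ⟨q, le_rfl, by simp, by simp⟩)

lemma pathTo_support (q n : ℕ) (h : n ≤ 2 ^ q) :
    (pathTo q n h).support.map Fin.val = List.range (n + 1) := by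
  induction n with
  | zero => simp [pathTo, sigV, List.range_succ]
  | succ n ih =>
    simp only [pathTo, SimpleGraph.Walk.support_concat, List.concat_eq_append,
      List.map_append, ih, List.range_succ, List.map_cons, List.map_nil]

lemma pathTo_edges (q n : ℕ) (h : n ≤ 2 ^ q) (e : Sym2 (Fin (2 ^ q + 1))) :
    e ∈ (pathTo q n h).edges ↔
      ∃ a b : Fin (2 ^ q + 1), e = s(a, b) ∧ b.val = a.val + 1 ∧ b.val ≤ n := by
  induction n with
  | zero =>
    simp only [pathTo, SimpleGraph.Walk.edges_nil, List.not_mem_nil, false_iff]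
    change e ∈ ([] : List (Sym2 (Fin (2 ^ q + 1)))) ↔ _
    simp only [List.not_mem_nil, false_iff]
    rintro ⟨a, b, _, hb, hb0⟩; omega
  | succ n ih =>
    simp only [pathTo, SimpleGraph.Walk.edges_concat, List.concat_eq_append,
      List.mem_append, ih, List.mem_cons, List.not_mem_nil, or_false]
    constructor
    · rintro (⟨a, b, rfl, hb, hbn⟩ | rfl)
      · exact ⟨a, b, rfl, hb, by omega⟩
      · exact ⟨_, _, rfl, rfl, le_refl (n+1)⟩
    · rintro ⟨a, b, rfl, hb, hbn⟩
      rcases Nat.lt_or_ge b.val (n + 1) with hlt | hge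
      · exact Or.inl ⟨a, b, rfl, hb, by omega⟩
      · right
        have ha : a = (⟨n, by omega⟩ : Fin (2 ^ q + 1)) := Fin.ext (show a.val = n by omega)
        have hb' : b = (⟨n + 1, by omega⟩ : Fin (2 ^ q + 1)) :=
          Fin.ext (show b.val = n + 1 by omega)
        rw [Sym2.eq_iff]
        exact Or.inl ⟨ha, hb'⟩

lemma boundaryB_self (q : ℕ) :
    boundaryB q q = { e | ∃ a b : Fin (2 ^ q + 1), e = s(a, b) ∧ b.val = a.val + 1 } := by
  ext e
  simp [boundaryB, Nat.sub_self]

/-- the boundary `B_q` of `△_q` has exactly `2^q` edges, every vertex of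
`△_q` is incident with some edge of `B_q`, and `B_q` forms a `σ`-`τ` path visiting all
vertices of `△_q`. -/
theorem tfractal_outer_boundary (q : ℕ) :
    (boundaryB q q).ncard = 2 ^ q ∧
      (∀ v : Fin (2 ^ q + 1), ∃ e ∈ boundaryB q q, v ∈ e) ∧
      (∃ p : (TFractal q).Walk (sigV q) (tauV q),
        p.IsPath ∧ {e | e ∈ p.edges} = boundaryB q q ∧
          ∀ v : Fin (2 ^ q + 1), v ∈ p.support) := by
  have key : ∀ e, e ∈ boundaryB q q ↔
      ∃ a b : Fin (2 ^ q + 1), e = s(a, b) ∧ b.val = a.val + 1 := by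
    intro e; rw [boundaryB_self]; rfl
  refine ⟨?_, ?_, ?_⟩
  · -- cardinality
    have himg : boundaryB q q =
        (fun a : Fin (2 ^ q) =>
          s((⟨a.val, by omega⟩ : Fin (2 ^ q + 1)), ⟨a.val + 1, by omega⟩)) '' Set.univ := by
      ext e
      rw [key]
      constructor
      · rintro ⟨a, b, rfl, hb⟩
        refine ⟨⟨a.val, by omega⟩, trivial, ?_⟩
        exact congrArg (fun x => s(a, x)) (Fin.ext hb.symm)
      · rintro ⟨a, -, rfl⟩
        exact ⟨_, _, rfl, rfl⟩
    rw [himg, Set.ncard_image_of_injective _ ?_, Set.ncard_univ,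
      Nat.card_eq_fintype_card, Fintype.card_fin]
    intro a b hab
    rw [Sym2.eq_iff] at hab
    rcases hab with ⟨h1, _⟩ | ⟨h1, h2⟩
    · exact Fin.ext (by simpa using congrArg Fin.val h1)
    · have := congrArg Fin.val h1
      have := congrArg Fin.val h2
      simp at *
      omega
  · -- every vertex incident
    intro v
    rcases Nat.lt_or_ge v.val (2 ^ q) with hlt | hge
    · refine ⟨s(v, ⟨v.val + 1, by omega⟩), ?_, ?_⟩
      · rw [key]; exact ⟨_, _, rfl, rfl⟩
      · simp
    · have hv : v.val = 2 ^ q := by omega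
      have hq : 1 ≤ 2 ^ q := Nat.one_le_two_pow
      refine ⟨s((⟨2 ^ q - 1, by omega⟩ : Fin (2 ^ q + 1)), v), ?_, ?_⟩
      · rw [key]; exact ⟨_, _, rfl, by simp; omega⟩
      · simp
  · -- the path
    refine ⟨pathTo q (2 ^ q) le_rfl, ?_, ?_, ?_⟩
    · refine (SimpleGraph.Walk.isPath_def _).mpr ?_
      have := pathTo_support q (2 ^ q) le_rfl
      have hnodup : ((pathTo q (2 ^ q) le_rfl).support.map Fin.val).Nodup := by
        rw [this]; exact List.nodup_range
      exact hnodup.of_map _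
    · ext e
      rw [Set.mem_setOf_eq, key]
      refine (pathTo_edges q (2 ^ q) le_rfl e).trans ?_
      constructor
      · rintro ⟨a, b, rfl, hb, -⟩; exact ⟨a, b, rfl, hb⟩
      · rintro ⟨a, b, rfl, hb⟩; exact ⟨a, b, rfl, hb, by omega⟩
    · intro v
      have := pathTo_support q (2 ^ q) le_rfl
      have hv : v.val ∈ (pathTo q (2 ^ q) le_rfl).support.map Fin.val := by
        rw [this, List.mem_range]; omega
      rcases List.mem_map.mp hv with ⟨w, hw, hwv⟩
      rwa [show v = w from Fin.ext hwv.symm]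
end

section
/- Every minimum σ-τ edge cut in the q-T-fractal △_q has size exactly q+1. -/
-- vertex 2^(min j q)
def pw (q j : ℕ) : Fin (2 ^ q + 1) :=
  ⟨2 ^ min j q, by have := Nat.pow_le_pow_right (by norm_num : 1 ≤ 2) (min_le_right j q); omega⟩

def starCut (q : ℕ) : Set (Sym2 (Fin (2 ^ q + 1))) :=
  (fun j => s(sigV q, pw q j)) '' Set.Iic q

lemma starCut_subset (q : ℕ) : starCut q ⊆ (TFractal q).edgeSet := by
  rintro e ⟨j, hj, rfl⟩
  simp only [Set.mem_Iic] at hj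
  show (TFractal q).Adj _ _
  simp only [TFractal]
  left
  exact ⟨q - j, Nat.sub_le _ _, by simp [sigV], by simp [sigV, pw, min_eq_left hj, Nat.sub_sub_self hj]⟩

lemma starCut_isCut (q : ℕ) : IsSTCut q (starCut q) := by
  intro ⟨w⟩
  have hne : sigV q ≠ tauV q := by
    have := Nat.two_pow_pos q
    simp only [sigV, tauV, ne_eq, Fin.mk.injEq]; omega
  have hnil := SimpleGraph.Walk.not_nil_of_ne hne (p := w)
  have hAdj := w.adj_snd hnil
  rw [SimpleGraph.deleteEdges_adj] at hAdj
  obtain ⟨hadj, hnot⟩ := hAdj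
  apply hnot
  rcases hadj with ⟨i, hi, _, hb⟩ | ⟨i, hi, _, hb⟩
  · refine ⟨q - i, Nat.sub_le _ _, ?_⟩
    have : pw q (q - i) = w.snd := by
      apply Fin.ext
      simp [sigV] at hb
      simp [pw, min_eq_left (Nat.sub_le q i), hb, sigV]
    simp only []
    rw [this]
  · have := Nat.two_pow_pos (q - i)
    simp only [sigV] at hb
    omega

lemma starCut_ncard (q : ℕ) : (starCut q).ncard = q + 1 := by
  rw [starCut, Set.ncard_image_of_injOn, ← Finset.coe_Iic, Set.ncard_coe_finset, Nat.card_Iic]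
  · intro i hi j hj h
    simp only [Set.mem_Iic] at hi hj
    rw [Sym2.eq, Sym2.rel_iff'] at h
    simp only [Prod.mk.injEq, Prod.swap_prod_mk] at h
    rcases h with h | h
    · have : (pw q i).val = (pw q j).val := by rw [h.2]
      simp only [pw, min_eq_left hi, min_eq_left hj] at this
      exact Nat.pow_right_injective (le_refl 2) this
    · exfalso
      have h1 : (sigV q).val = (pw q j).val := by rw [h.1]
      have := Nat.two_pow_pos (min j q)
      simp only [sigV, pw] at h1; omega

lemma cut_hits_boundary (q : ℕ) (C : Set (Sym2 (Fin (2 ^ q + 1)))) (h : IsSTCut q C)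
    {i : ℕ} (hi : i ≤ q) : (C ∩ boundaryB q i).Nonempty := by
  by_contra hemp
  rw [Set.not_nonempty_iff_eq_empty] at hemp
  apply h
  have hmul : 2 ^ i * 2 ^ (q - i) = 2 ^ q := by rw [← pow_add]; congr 1; omega
  have hbd : ∀ k, k ≤ 2 ^ i → k * 2 ^ (q - i) < 2 ^ q + 1 := by
    intro k hk
    have := Nat.mul_le_mul_right (2 ^ (q - i)) hk
    omega
  have key : ∀ k (hk : k ≤ 2 ^ i),
      ((TFractal q).deleteEdges C).Reachable (sigV q) ⟨k * 2 ^ (q - i), hbd k hk⟩ := by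
    intro k
    induction k with
    | zero =>
      intro hk
      have hv : (⟨0 * 2 ^ (q - i), hbd 0 hk⟩ : Fin (2 ^ q + 1)) = sigV q := by
        apply Fin.ext; simp [sigV]
      rw [hv]
    | succ k ih =>
      intro hk
      have hk' : k ≤ 2 ^ i := by omega
      refine (ih hk').trans (SimpleGraph.Adj.reachable ?_)
      rw [SimpleGraph.deleteEdges_adj]
      simp only [TFractal]
      refine ⟨Or.inl ⟨i, hi, ⟨k, mul_comm _ _⟩, by ring⟩, fun hmem => ?_⟩
      have hB : s((⟨k * 2 ^ (q - i), hbd k hk'⟩ : Fin (2 ^ q + 1)),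
          (⟨(k + 1) * 2 ^ (q - i), hbd (k + 1) hk⟩ : Fin (2 ^ q + 1))) ∈ C ∩ boundaryB q i :=
        ⟨hmem, ⟨_, _, rfl, ⟨k, mul_comm _ _⟩, by ring⟩⟩
      rw [hemp] at hB
      exact hB
  have hτ : tauV q = ⟨2 ^ i * 2 ^ (q - i), hbd _ le_rfl⟩ := by
    apply Fin.ext; simp [tauV, hmul]
  rw [hτ]
  exact key _ le_rfl

lemma cut_card_ge (q : ℕ) (C : Set (Sym2 (Fin (2 ^ q + 1)))) (h : IsSTCut q C) :
    q + 1 ≤ C.ncard := by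
  have hch : ∀ i : ℕ, ∃ e, i ≤ q → e ∈ C ∩ boundaryB q i := by
    intro i
    by_cases hi : i ≤ q
    · obtain ⟨e, he⟩ := cut_hits_boundary q C h hi
      exact ⟨e, fun _ => he⟩
    · exact ⟨s(sigV q, sigV q), fun hi' => absurd hi' hi⟩
  choose f hf using hch
  have hinj : Set.InjOn f (Finset.Iic q) := by
    intro i hi j hj hij
    simp only [Finset.coe_Iic, Set.mem_Iic] at hi hj
    obtain ⟨-, a, b, he, -, hb⟩ := hf i hi
    obtain ⟨-, a', b', he', -, hb'⟩ := hf j hj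
    rw [hij, he'] at he
    rw [Sym2.eq, Sym2.rel_iff'] at he
    have h1 := Nat.two_pow_pos (q - i)
    have h2 := Nat.two_pow_pos (q - j)
    simp only [Prod.mk.injEq, Prod.swap_prod_mk] at he
    rcases he with ⟨ha, hbb⟩ | ⟨ha, hbb⟩
    · have hav : a'.val = a.val := by rw [ha]
      have hbv : b'.val = b.val := by rw [hbb]
      have : 2 ^ (q - i) = 2 ^ (q - j) := by omega
      have := Nat.pow_right_injective (le_refl 2) this
      omega
    · have hav : a'.val = b.val := by rw [ha]
      have hbv : b'.val = a.val := by rw [hbb]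
      omega
  have hsub : ↑((Finset.Iic q).image f) ⊆ C := by
    intro e he
    simp only [Finset.coe_image, Set.mem_image, Finset.coe_Iic, Set.mem_Iic] at he
    obtain ⟨i, hi, rfl⟩ := he
    exact (hf i hi).1
  calc q + 1 = ((Finset.Iic q).image f).card := by
        rw [Finset.card_image_of_injOn hinj, Nat.card_Iic]
    _ = (↑((Finset.Iic q).image f) : Set (Sym2 (Fin (2 ^ q + 1)))).ncard := by
        rw [Set.ncard_coe_finset]
    _ ≤ C.ncard := Set.ncard_le_ncard hsub C.toFinite

/-- every minimum `σ`-`τ` edge cut in the `q`-T-fractal has size exactly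
`q + 1`. -/
theorem tfractal_min_cut_size (q : ℕ) (C : Set (Sym2 (Fin (2 ^ q + 1))))
    (hC : MinSTCut q C) :
    C.ncard = q + 1 := by
  obtain ⟨hsub, hcut, hmin⟩ := hC
  have h1 := cut_card_ge q C hcut
  have h2 := hmin (starCut q) (starCut_subset q) (starCut_isCut q)
  rw [starCut_ncard] at h2
  omega
end

section
/- In the q-T-fractal △_q there exist q+1 pairwise edge-disjoint σ-τ paths; consequently, by Menger's theorem, every σ-τ edge cut has size at least q+1. -/
lemma pow_mul_pow (q i : ℕ) (hi : i ≤ q) : 2 ^ i * 2 ^ (q - i) = 2 ^ q := by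
  rw [← pow_add]; congr 1; omega

def vtx (q i k : ℕ) (hi : i ≤ q) (hk : k ≤ 2 ^ i) : Fin (2 ^ q + 1) :=
  ⟨k * 2 ^ (q - i), by
    have h1 : k * 2 ^ (q - i) ≤ 2 ^ i * 2 ^ (q - i) := Nat.mul_le_mul_right _ hk
    have h2 := pow_mul_pow q i hi
    omega⟩

lemma vtx_adj (q i k : ℕ) (hi : i ≤ q) (hk : k + 1 ≤ 2 ^ i) :
    (TFractal q).Adj (vtx q i k hi (by omega)) (vtx q i (k + 1) hi hk) := by
  refine Or.inl ?_
  exact ⟨i, hi, dvd_mul_left _ _, by simp only [vtx]; ring⟩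

def walkFrom (q i : ℕ) (hi : i ≤ q) (k : ℕ) (hk : k ≤ 2 ^ i) :
    (TFractal q).Walk (vtx q i k hi hk) (tauV q) :=
  if h : k = 2 ^ i then
    (SimpleGraph.Walk.nil :
      (TFractal q).Walk (vtx q i k hi hk) (vtx q i k hi hk)).copy rfl
      (by subst h; apply Fin.ext; simp [vtx, tauV, pow_mul_pow q i hi])
  else
    SimpleGraph.Walk.cons (vtx_adj q i k hi (by omega))
      (walkFrom q i hi (k + 1) (by omega))
  termination_by 2 ^ i - k

lemma walkFrom_support_le (q i : ℕ) (hi : i ≤ q) (k : ℕ) (hk : k ≤ 2 ^ i) :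
    ∀ x ∈ (walkFrom q i hi k hk).support, k * 2 ^ (q - i) ≤ x.val := by
  intro x hx
  rw [walkFrom] at hx
  split at hx
  · rw [SimpleGraph.Walk.support_copy] at hx
    simp only [SimpleGraph.Walk.support_nil, List.mem_singleton] at hx
    subst hx
    simp only [vtx]
    omega
  · rw [SimpleGraph.Walk.support_cons] at hx
    rcases List.mem_cons.mp hx with h | h
    · subst h; simp [vtx]
    · have := walkFrom_support_le q i hi (k + 1) (by omega) x h
      have : (k + 1) * 2 ^ (q - i) ≤ x.val := this
      nlinarith [Nat.two_pow_pos (q - i)]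
  termination_by 2 ^ i - k

lemma walkFrom_isPath (q i : ℕ) (hi : i ≤ q) (k : ℕ) (hk : k ≤ 2 ^ i) :
    (walkFrom q i hi k hk).IsPath := by
  rw [walkFrom]
  split
  · simp
  · rw [SimpleGraph.Walk.cons_isPath_iff]
    refine ⟨walkFrom_isPath q i hi (k + 1) (by omega), ?_⟩
    intro hmem
    have := walkFrom_support_le q i hi (k + 1) (by omega) _ hmem
    simp only [vtx] at this
    have hp := Nat.two_pow_pos (q - i)
    nlinarith
  termination_by 2 ^ i - k

lemma walkFrom_edges (q i : ℕ) (hi : i ≤ q) (k : ℕ) (hk : k ≤ 2 ^ i) :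
    ∀ e ∈ (walkFrom q i hi k hk).edges,
      ∃ a b : Fin (2 ^ q + 1), e = s(a, b) ∧ b.val = a.val + 2 ^ (q - i) := by
  intro e he
  rw [walkFrom] at he
  split at he
  · rw [SimpleGraph.Walk.edges_copy] at he
    simp at he
  · rw [SimpleGraph.Walk.edges_cons] at he
    rcases List.mem_cons.mp he with h | h
    · subst h
      exact ⟨_, _, rfl, by simp [vtx, Nat.succ_mul]⟩
    · exact walkFrom_edges q i hi (k + 1) (by omega) e h
  termination_by 2 ^ i - k

/-- in the `q`-T-fractal there exist `q+1` pairwise edge-disjoint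
`σ`-`τ` paths; consequently (Menger), every `σ`-`τ` edge cut has size at least `q+1`. -/
theorem tfractal_disjoint_paths_and_cut_lower_bound (q : ℕ) :
    (∃ P : Fin (q + 1) → (TFractal q).Walk (sigV q) (tauV q),
        (∀ i, (P i).IsPath) ∧
          ∀ i j, i ≠ j → ∀ e, e ∈ (P i).edges → e ∉ (P j).edges) ∧
      (∀ C ⊆ (TFractal q).edgeSet, IsSTCut q C → q + 1 ≤ C.ncard) := by
  have hi : ∀ i : Fin (q + 1), (i : ℕ) ≤ q := fun i => Nat.lt_succ_iff.mp i.isLt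
  set P : Fin (q + 1) → (TFractal q).Walk (sigV q) (tauV q) := fun i =>
    (walkFrom q i (hi i) 0 (Nat.zero_le _)).copy
      (by apply Fin.ext; simp [vtx, sigV]) rfl with hP
  have hpath : ∀ i, (P i).IsPath := fun i => by
    rw [hP]; simpa using walkFrom_isPath q i (hi i) 0 (Nat.zero_le _)
  have hedge : ∀ (i : Fin (q + 1)) e, e ∈ (P i).edges →
      ∃ a b : Fin (2 ^ q + 1), e = s(a, b) ∧ b.val = a.val + 2 ^ (q - i) := by
    intro i e he
    rw [hP] at he
    rw [SimpleGraph.Walk.edges_copy] at he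
    exact walkFrom_edges q i (hi i) 0 (Nat.zero_le _) e he
  have hdisj : ∀ i j, i ≠ j → ∀ e, e ∈ (P i).edges → e ∉ (P j).edges := by
    intro i j hij e hei hej
    obtain ⟨a, b, rfl, hab⟩ := hedge i e hei
    obtain ⟨a', b', heq, hab'⟩ := hedge j _ hej
    have hp1 := Nat.two_pow_pos (q - (i : ℕ))
    have hp2 := Nat.two_pow_pos (q - (j : ℕ))
    rw [Sym2.eq_iff] at heq
    rcases heq with ⟨rfl, rfl⟩ | ⟨rfl, rfl⟩
    · have : 2 ^ (q - (i : ℕ)) = 2 ^ (q - (j : ℕ)) := by omega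
      have := Nat.pow_right_injective (le_refl 2) this
      exact hij (Fin.ext (by have := hi i; have := hi j; omega))
    · omega
  refine ⟨⟨P, hpath, hdisj⟩, ?_⟩
  intro C _ hC
  have hex : ∀ i : Fin (q + 1), ∃ e, e ∈ (P i).edges ∧ e ∈ C := by
    intro i
    by_contra h
    push_neg at h
    exact hC ⟨(P i).toDeleteEdges C (fun e he => h e he)⟩
  choose f hf1 hf2 using hex
  have hinj : Function.Injective f := by
    intro i j hij
    by_contra h
    exact hdisj i j h (f i) (hf1 i) (hij ▸ hf1 j)
  have : Nat.card (Fin (q + 1)) ≤ Nat.card C := by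
    have : Function.Injective (fun i : Fin (q + 1) => (⟨f i, hf2 i⟩ : C)) := by
      intro i j h
      exact hinj (by simpa using congrArg Subtype.val h)
    exact Nat.card_le_card_of_injective _ this
  simpa [Nat.card_coe_set_eq] using this
end

section
/- There is a one-to-one correspondence between the root-leaf paths in the dual structure T_q of the q-T-fractal △_q and the minimum σ-τ edge cuts of △_q. -/
/-- The dual structure `T_q` of the `q`-T-fractal, realized with heap numbering on
`Fin (2^(q+1))`: vertex `0` is the root (the split vertex next to the triangle
containing `{σ,τ}`), vertex `1` is the vertex dual to that triangle, every vertex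
`v ≥ 1` is adjacent to its parent `v / 2`, the vertices `v` with `2^i ≤ v < 2^(i+1)`
(`i < q`) are dual to the triangles of depth `i + 1`, and the vertices
`v ≥ 2^q` are the leaves (the remaining split vertices of the outer face). -/
def dualTree (q : ℕ) : SimpleGraph (Fin (2 ^ (q + 1))) where
  Adj a b := (a.val ≠ 0 ∧ b.val = a.val / 2) ∨ (b.val ≠ 0 ∧ a.val = b.val / 2)
  symm := ⟨fun _ _ h => h.symm⟩
  loopless := by
    constructor
    intro a h
    rcases h with ⟨h0, h⟩ | ⟨h0, h⟩ <;> omega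

/-- The root of the dual structure `T_q`. -/
def dualRoot (q : ℕ) : Fin (2 ^ (q + 1)) := ⟨0, Nat.two_pow_pos _⟩

/-- A vertex of `T_q` is a leaf iff its heap number is at least `2^q`. -/
def IsDualLeaf (q : ℕ) (v : Fin (2 ^ (q + 1))) : Prop := 2 ^ q ≤ v.val

/-- The edge of `△_q` dual to the `T_q`-edge between `v ≥ 1` and its parent `v / 2`
(described on the underlying natural-number vertex labels): for `v` at depth
`i = log₂ v` with offset `j = v - 2^i`, this is the `j`-th edge of the boundary `B_i`,
namely `{j·2^(q-i), (j+1)·2^(q-i)}`. -/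
def primalOfNode (q v : ℕ) : Sym2 ℕ :=
  s((v - 2 ^ Nat.log 2 v) * 2 ^ (q - Nat.log 2 v),
    (v - 2 ^ Nat.log 2 v + 1) * 2 ^ (q - Nat.log 2 v))

/-- The edge of `△_q` (as a pair of natural-number labels) dual to an edge of `T_q`:
an edge of the tree is `{v, v / 2}`, i.e. it is determined by its lower endpoint `v`,
which is the one with the larger heap number. -/
def primalOfDualEdge (q : ℕ) : Sym2 (Fin (2 ^ (q + 1))) → Sym2 ℕ :=
  Sym2.lift ⟨fun a b => primalOfNode q (max a.val b.val), fun a b => by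
    simp [max_comm]⟩

open SimpleGraph

/-- The natural-number edge at scale `k` crossing `m + 1/2`. -/
def natCutEdge (m k : ℕ) : Sym2 ℕ := s(2 ^ k * (m / 2 ^ k), 2 ^ k * (m / 2 ^ k) + 2 ^ k)

/-- The canonical minimum cut at position `m`. -/
def cutC (q m : ℕ) : Set (Sym2 (Fin (2 ^ q + 1))) :=
  {e | ∃ k ≤ q, Sym2.map Fin.val e = natCutEdge m k}

lemma addPowLe {a k q : ℕ} (hk : k ≤ q) (hd : 2 ^ k ∣ a) (ha : a < 2 ^ q) :
    a + 2 ^ k ≤ 2 ^ q := by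
  have h2 : 2 ^ k ∣ 2 ^ q := pow_dvd_pow 2 hk
  have h3 : 2 ^ k ∣ 2 ^ q - a := Nat.dvd_sub h2 hd
  have hp : 0 < 2 ^ q - a := by omega
  have := Nat.le_of_dvd hp h3
  omega

lemma crossing_eq {a k m : ℕ} (hd : 2 ^ k ∣ a) (h1 : a ≤ m) (h2 : m < a + 2 ^ k) :
    a = 2 ^ k * (m / 2 ^ k) := by
  obtain ⟨t, rfl⟩ := hd
  have h3 : t * 2 ^ k ≤ m := by rw [mul_comm]; exact h1
  have h4 : m < (t + 1) * 2 ^ k := by rw [add_mul, one_mul, mul_comm t]; exact h2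
  rw [Nat.div_eq_of_lt_le h3 h4]

lemma tfrac_adj {q : ℕ} {a b : Fin (2 ^ q + 1)} :
    (TFractal q).Adj a b ↔
      ∃ k ≤ q, (2 ^ k ∣ a.val ∧ b.val = a.val + 2 ^ k) ∨
               (2 ^ k ∣ b.val ∧ a.val = b.val + 2 ^ k) := by
  constructor
  · rintro (⟨i, hi, hd, he⟩ | ⟨i, hi, hd, he⟩)
    · exact ⟨q - i, Nat.sub_le _ _, Or.inl ⟨hd, he⟩⟩
    · exact ⟨q - i, Nat.sub_le _ _, Or.inr ⟨hd, he⟩⟩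
  · rintro ⟨k, hk, ⟨hd, he⟩ | ⟨hd, he⟩⟩
    · exact Or.inl ⟨q - k, Nat.sub_le _ _, by rwa [Nat.sub_sub_self hk], by rwa [Nat.sub_sub_self hk]⟩
    · exact Or.inr ⟨q - k, Nat.sub_le _ _, by rwa [Nat.sub_sub_self hk], by rwa [Nat.sub_sub_self hk]⟩

lemma scale_inj {a b k k' : ℕ} (h : s(a, a + 2 ^ k) = s(b, b + 2 ^ k')) : a = b ∧ k = k' := by
  rw [Sym2.eq_iff] at h
  have p := Nat.two_pow_pos k
  have p' := Nat.two_pow_pos k'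
  rcases h with ⟨h1, h2⟩ | ⟨h1, h2⟩
  · have : (2 : ℕ) ^ k = 2 ^ k' := by omega
    exact ⟨h1, Nat.pow_right_injective (by norm_num) this⟩
  · omega

lemma cutC_step_le {q m : ℕ} {u v : Fin (2 ^ q + 1)}
    (h : ((TFractal q).deleteEdges (cutC q m)).Adj u v) (hu : u.val ≤ m) : v.val ≤ m := by
  rw [SimpleGraph.deleteEdges_adj] at h
  obtain ⟨hadj, hnc⟩ := h
  rw [tfrac_adj] at hadj
  obtain ⟨k, hk, ⟨hd, he⟩ | ⟨hd, he⟩⟩ := hadj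
  · by_contra hv
    exact hnc ⟨k, hk, by
      rw [Sym2.map_pair_eq, he, crossing_eq hd hu (by omega)]
      rfl⟩
  · have := Nat.two_pow_pos k
    omega

lemma cutC_isCut {q m : ℕ} (hm : m < 2 ^ q) : IsSTCut q (cutC q m) := by
  intro hr
  obtain ⟨w⟩ := hr
  suffices H : ∀ (u v : Fin (2 ^ q + 1)) (_ : ((TFractal q).deleteEdges (cutC q m)).Walk u v),
      u.val ≤ m → v.val ≤ m by
    have := H _ _ w (by simp [sigV])
    simp only [tauV] at this
    omega
  intro u v w
  induction w with
  | nil => exact id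
  | cons h p ih => exact fun hu => ih (cutC_step_le h hu)

lemma natCutEdge_le {m k : ℕ} : 2 ^ k * (m / 2 ^ k) ≤ m := by
  rw [mul_comm]; exact Nat.div_mul_le_self m _

lemma natCutEdge_dvd (m k : ℕ) : 2 ^ k ∣ 2 ^ k * (m / 2 ^ k) := Dvd.intro _ rfl

/-- The Fin-valued cut edge at scale `k`. -/
def finCutEdge (q m k : ℕ) (hm : m < 2 ^ q) (hk : k ≤ q) : Sym2 (Fin (2 ^ q + 1)) :=
  s(⟨2 ^ k * (m / 2 ^ k), by have := natCutEdge_le (m := m) (k := k); omega⟩,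
    ⟨2 ^ k * (m / 2 ^ k) + 2 ^ k, by
      have := addPowLe hk (natCutEdge_dvd m k) (lt_of_le_of_lt (natCutEdge_le) hm); omega⟩)

lemma finCutEdge_map (q m k : ℕ) (hm : m < 2 ^ q) (hk : k ≤ q) :
    Sym2.map Fin.val (finCutEdge q m k hm hk) = natCutEdge m k := by
  rw [finCutEdge, Sym2.map_pair_eq]; rfl

lemma finCutEdge_mem (q m k : ℕ) (hm : m < 2 ^ q) (hk : k ≤ q) :
    finCutEdge q m k hm hk ∈ cutC q m :=
  ⟨k, hk, finCutEdge_map q m k hm hk⟩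

lemma cutC_eq_range {q m : ℕ} (hm : m < 2 ^ q) :
    cutC q m = Set.range (fun k : Fin (q + 1) => finCutEdge q m k.val hm (by omega)) := by
  ext e
  constructor
  · rintro ⟨k, hk, he⟩
    refine ⟨⟨k, by omega⟩, ?_⟩
    apply Sym2.map.injective Fin.val_injective
    rw [finCutEdge_map, he]
  · rintro ⟨k, rfl⟩
    exact finCutEdge_mem q m k.val hm (by omega)

lemma cutC_subset {q m : ℕ} (hm : m < 2 ^ q) : cutC q m ⊆ (TFractal q).edgeSet := by
  rw [cutC_eq_range hm]
  rintro e ⟨k, rfl⟩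
  simp only [finCutEdge, SimpleGraph.mem_edgeSet, tfrac_adj]
  exact ⟨k.val, by omega, Or.inl ⟨natCutEdge_dvd m k.val, rfl⟩⟩

lemma finCutEdge_inj {q m : ℕ} (hm : m < 2 ^ q) :
    Function.Injective (fun k : Fin (q + 1) => finCutEdge q m k.val hm (by omega)) := by
  intro k k' h
  simp only [finCutEdge] at h
  have h2 := congrArg (Sym2.map Fin.val) h
  rw [Sym2.map_pair_eq, Sym2.map_pair_eq] at h2
  have := scale_inj (a := 2 ^ k.val * (m / 2 ^ k.val)) (b := 2 ^ k'.val * (m / 2 ^ k'.val)) h2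
  exact Fin.ext this.2

lemma cutC_ncard {q m : ℕ} (hm : m < 2 ^ q) : (cutC q m).ncard = q + 1 := by
  rw [cutC_eq_range hm, ← Set.image_univ,
    Set.ncard_image_of_injective _ (finCutEdge_inj hm), Set.ncard_univ,
    Nat.card_eq_fintype_card, Fintype.card_fin]

lemma cutC_inj {q m m' : ℕ} (hm : m < 2 ^ q) (hm' : m' < 2 ^ q)
    (h : cutC q m = cutC q m') : m = m' := by
  have h0 := finCutEdge_mem q m 0 hm (Nat.zero_le _)
  rw [h] at h0
  obtain ⟨k, hk, he⟩ := h0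
  rw [finCutEdge_map] at he
  simp only [natCutEdge, pow_zero, Nat.div_one, one_mul] at he
  have h2 : s(m, m + 2 ^ 0) = s(2 ^ k * (m' / 2 ^ k), 2 ^ k * (m' / 2 ^ k) + 2 ^ k) := by
    simpa [natCutEdge] using he
  obtain ⟨h3, h4⟩ := scale_inj h2
  subst h4
  simpa using h3

lemma mul_pow_le {t k q : ℕ} (hk : k ≤ q) (ht : t ≤ 2 ^ (q - k)) : t * 2 ^ k ≤ 2 ^ q :=
  calc t * 2 ^ k ≤ 2 ^ (q - k) * 2 ^ k := Nat.mul_le_mul_right _ ht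
    _ = 2 ^ q := by rw [← pow_add]; congr 1; omega

lemma scale_reach {q k : ℕ} (hk : k ≤ q) {C : Set (Sym2 (Fin (2 ^ q + 1)))}
    (hC : ∀ e ∈ C, ∀ a : ℕ, Sym2.map Fin.val e ≠ s(a, a + 2 ^ k)) :
    ∀ (d t : ℕ), t + d = 2 ^ (q - k) → ∀ u v : Fin (2 ^ q + 1),
      u.val = t * 2 ^ k → v.val = 2 ^ q → ((TFractal q).deleteEdges C).Reachable u v := by
  intro d
  induction d with
  | zero =>
    intro t ht u v hu hv
    have : u = v := Fin.ext (by
      rw [hu, hv]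
      have : t = 2 ^ (q - k) := by omega
      subst this
      rw [← pow_add]
      congr 1
      omega)
    rw [this]
  | succ d ih =>
    intro t ht u v hu hv
    have htle : t + 1 ≤ 2 ^ (q - k) := by omega
    have hb : (t + 1) * 2 ^ k ≤ 2 ^ q := mul_pow_le hk htle
    set w : Fin (2 ^ q + 1) := ⟨(t + 1) * 2 ^ k, by omega⟩ with hw
    have hadj : ((TFractal q).deleteEdges C).Adj u w := by
      rw [SimpleGraph.deleteEdges_adj]
      have hval : w.val = u.val + 2 ^ k := by
        rw [hu]
        show (t + 1) * 2 ^ k = t * 2 ^ k + 2 ^ k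
        ring
      constructor
      · rw [tfrac_adj]
        exact ⟨k, hk, Or.inl ⟨by rw [hu]; exact ⟨t, mul_comm t (2 ^ k)⟩, hval⟩⟩
      · intro hmem
        exact hC _ hmem u.val (by rw [Sym2.map_pair_eq, hval])
    exact (hadj.reachable).trans (ih (t + 1) (by omega) w v rfl hv)

lemma base_reach {q : ℕ} {C : Set (Sym2 (Fin (2 ^ q + 1)))} :
    ∀ (d lo : ℕ), lo + d ≤ 2 ^ q →
      (∀ e ∈ C, ∀ x, lo ≤ x → x < lo + d → Sym2.map Fin.val e ≠ s(x, x + 1)) →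
      ∀ u v : Fin (2 ^ q + 1),
        u.val = lo → v.val = lo + d → ((TFractal q).deleteEdges C).Reachable u v := by
  intro d
  induction d with
  | zero =>
    intro lo _ _ u v hu hv
    have : u = v := Fin.ext (by omega)
    rw [this]
  | succ d ih =>
    intro lo hle hC u v hu hv
    set w : Fin (2 ^ q + 1) := ⟨lo + 1, by omega⟩ with hw
    have hadj : ((TFractal q).deleteEdges C).Adj u w := by
      rw [SimpleGraph.deleteEdges_adj]
      constructor
      · rw [tfrac_adj]
        exact ⟨0, Nat.zero_le _, Or.inl ⟨by simp, by rw [hu, hw, pow_zero]⟩⟩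
      · intro hmem
        exact hC _ hmem lo le_rfl (by omega) (by rw [Sym2.map_pair_eq, hu, hw])
    exact (hadj.reachable).trans
      (ih (lo + 1) (by omega) (fun e he x hx1 hx2 => hC e he x (by omega) (by omega))
        w v rfl (by omega))

lemma cut_hits_scale {q : ℕ} {C : Set (Sym2 (Fin (2 ^ q + 1)))} (hcut : IsSTCut q C)
    {k : ℕ} (hk : k ≤ q) :
    ∃ e ∈ C, ∃ a : ℕ, Sym2.map Fin.val e = s(a, a + 2 ^ k) := by
  by_contra h
  push_neg at h
  exact hcut (scale_reach hk h (2 ^ (q - k)) 0 (by omega) (sigV q) (tauV q) (by simp [sigV]) rfl)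

lemma mincut_ge {q : ℕ} {C : Set (Sym2 (Fin (2 ^ q + 1)))} (hcut : IsSTCut q C) :
    q + 1 ≤ C.ncard := by
  have H : ∀ k : Fin (q + 1), ∃ e, e ∈ C ∧ ∃ a, Sym2.map Fin.val e = s(a, a + 2 ^ k.val) :=
    fun k => by
      obtain ⟨e, he, ha⟩ := cut_hits_scale hcut (show k.val ≤ q by omega)
      exact ⟨e, he, ha⟩
  choose e he a ha using H
  have hinj : Function.Injective fun k => (⟨e k, he k⟩ : C) := by
    intro k k' h
    have heq : e k = e k' := congrArg Subtype.val h
    have : s(a k, a k + 2 ^ k.val) = s(a k', a k' + 2 ^ k'.val) := by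
      rw [← ha k, ← ha k', heq]
    exact Fin.ext (scale_inj this).2
  calc q + 1 = Nat.card (Fin (q + 1)) := by simp
    _ ≤ Nat.card C := Nat.card_le_card_of_injective _ hinj
    _ = C.ncard := Nat.card_coe_set_eq C

lemma edge_scale_props {q : ℕ} {e : Sym2 (Fin (2 ^ q + 1))} (he : e ∈ (TFractal q).edgeSet)
    {b k : ℕ} (hmap : Sym2.map Fin.val e = s(b, b + 2 ^ k)) :
    2 ^ k ∣ b ∧ k ≤ q ∧ b + 2 ^ k ≤ 2 ^ q := by
  induction e using Sym2.ind with
  | _ x y =>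
    rw [SimpleGraph.mem_edgeSet, tfrac_adj] at he
    rw [Sym2.map_pair_eq] at hmap
    obtain ⟨k', hk', ⟨hd, heq⟩ | ⟨hd, heq⟩⟩ := he
    · rw [heq] at hmap
      obtain ⟨h1, h2⟩ := scale_inj hmap
      subst h2
      have := y.isLt
      exact ⟨h1 ▸ hd, hk', by omega⟩
    · rw [Sym2.eq_swap, heq] at hmap
      obtain ⟨h1, h2⟩ := scale_inj hmap
      subst h2
      have := x.isLt
      exact ⟨h1 ▸ hd, hk', by omega⟩

lemma cut_eq_cutC {q : ℕ} {C : Set (Sym2 (Fin (2 ^ q + 1)))}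
    (hsub : C ⊆ (TFractal q).edgeSet) (hcut : IsSTCut q C) (hcard : C.ncard ≤ q + 1) :
    ∃ m < 2 ^ q, C = cutC q m := by
  have H : ∀ k : Fin (q + 1), ∃ e, e ∈ C ∧ ∃ a, Sym2.map Fin.val e = s(a, a + 2 ^ k.val) :=
    fun k => by
      obtain ⟨e, he, ha⟩ := cut_hits_scale hcut (show k.val ≤ q by omega)
      exact ⟨e, he, ha⟩
  choose e he a ha using H
  have hprops : ∀ k : Fin (q + 1), 2 ^ k.val ∣ a k ∧ k.val ≤ q ∧ a k + 2 ^ k.val ≤ 2 ^ q :=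
    fun k => edge_scale_props (hsub (he k)) (ha k)
  have hinj : Function.Injective e := by
    intro k k' h
    have : s(a k, a k + 2 ^ k.val) = s(a k', a k' + 2 ^ k'.val) := by
      rw [← ha k, ← ha k', h]
    exact Fin.ext (scale_inj this).2
  have hrange : Set.range e ⊆ C := by rintro _ ⟨k, rfl⟩; exact he k
  have hCr : C = Set.range e := by
    refine (Set.eq_of_subset_of_ncard_le hrange ?_ (Set.toFinite _)).symm
    calc C.ncard ≤ q + 1 := hcard
      _ = (Set.range e).ncard := by
        rw [← Set.image_univ, Set.ncard_image_of_injective _ hinj, Set.ncard_univ]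
        simp
  set m := a 0 with hma
  have hm : m < 2 ^ q := by
    have := (hprops 0).2.2
    have h1 : (0 : Fin (q + 1)).val = 0 := rfl
    rw [h1, pow_zero] at this
    omega
  have haK : ∀ k : Fin (q + 1), a k ≤ m ∧ m < a k + 2 ^ k.val := by
    intro k
    by_contra hn
    apply hcut
    set K := k.val with hK
    set c := 2 ^ K * (m / 2 ^ K) with hc
    have hkq : K ≤ q := by omega
    have hc1 : c ≤ m := natCutEdge_le
    have hc2 : m < c + 2 ^ K := by
      have := Nat.div_add_mod m (2 ^ K)
      have := Nat.mod_lt m (Nat.two_pow_pos K)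
      omega
    have hc3 : c + 2 ^ K ≤ 2 ^ q := addPowLe hkq (natCutEdge_dvd m K) (by omega)
    have havoid_base : ∀ e' ∈ C, ∀ x : ℕ, x ≠ m → Sym2.map Fin.val e' ≠ s(x, x + 1) := by
      intro e' he' x hx hmap
      rw [hCr] at he'
      obtain ⟨k', rfl⟩ := he'
      have : s(a k', a k' + 2 ^ k'.val) = s(x, x + 2 ^ 0) := by
        rw [← ha k', hmap, pow_zero]
      obtain ⟨h1, h2⟩ := scale_inj this
      have hk0 : k' = 0 := Fin.ext h2
      rw [hk0] at h1
      exact hx (by omega)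
    -- σ → c
    have r1 : ∀ u v : Fin (2 ^ q + 1), u.val = 0 → v.val = c →
        ((TFractal q).deleteEdges C).Reachable u v := by
      intro u v hu hv
      exact base_reach c 0 (by omega)
        (fun e' he' x hx1 hx2 => havoid_base e' he' x (by omega)) u v hu (by omega)
    -- c → c + 2^K
    have r2 : ∀ u v : Fin (2 ^ q + 1), u.val = c → v.val = c + 2 ^ K →
        ((TFractal q).deleteEdges C).Reachable u v := by
      intro u v hu hv
      refine SimpleGraph.Adj.reachable ?_
      rw [SimpleGraph.deleteEdges_adj]
      constructor
      · rw [tfrac_adj]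
        exact ⟨K, hkq, Or.inl ⟨by rw [hu]; exact natCutEdge_dvd m K, by omega⟩⟩
      · intro hmem
        rw [hCr] at hmem
        obtain ⟨k', hk'⟩ := hmem
        have : s(a k', a k' + 2 ^ k'.val) = s(c, c + 2 ^ K) := by
          rw [← ha k', hk', Sym2.map_pair_eq, hu, hv]
        obtain ⟨h1, h2⟩ := scale_inj this
        have : k' = k := Fin.ext (by omega)
        subst this
        exact hn ⟨by omega, by omega⟩
    -- c + 2^K → τ
    have r3 : ∀ u v : Fin (2 ^ q + 1), u.val = c + 2 ^ K → v.val = 2 ^ q →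
        ((TFractal q).deleteEdges C).Reachable u v := by
      intro u v hu hv
      exact base_reach (2 ^ q - (c + 2 ^ K)) (c + 2 ^ K) (by omega)
        (fun e' he' x hx1 hx2 => havoid_base e' he' x (by omega)) u v hu (by omega)
    exact ((r1 (sigV q) ⟨c, by omega⟩ rfl rfl).trans
      (r2 _ ⟨c + 2 ^ K, by omega⟩ rfl rfl)).trans (r3 _ (tauV q) rfl rfl)
  have haval : ∀ k : Fin (q + 1), a k = 2 ^ k.val * (m / 2 ^ k.val) :=
    fun k => crossing_eq (hprops k).1 (haK k).1 (haK k).2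
  refine ⟨m, hm, ?_⟩
  rw [hCr, cutC_eq_range hm]
  refine congrArg Set.range (funext fun k => ?_)
  apply Sym2.map.injective Fin.val_injective
  rw [ha k, finCutEdge_map, natCutEdge, haval k]

lemma minSTCut_iff {q : ℕ} {C : Set (Sym2 (Fin (2 ^ q + 1)))} :
    MinSTCut q C ↔ ∃ m < 2 ^ q, C = cutC q m := by
  constructor
  · rintro ⟨hsub, hcut, hmin⟩
    refine cut_eq_cutC hsub hcut ?_
    have h0 : (0 : ℕ) < 2 ^ q := Nat.two_pow_pos q
    have := hmin (cutC q 0) (cutC_subset h0) (cutC_isCut h0)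
    rwa [cutC_ncard h0] at this
  · rintro ⟨m, hm, rfl⟩
    exact ⟨cutC_subset hm, cutC_isCut hm,
      fun C' _ hc => by rw [cutC_ncard hm]; exact mincut_ge hc⟩

def cwalk (q : ℕ) (v : Fin (2 ^ (q + 1))) : (dualTree q).Walk v (dualRoot q) :=
  if h : v.val = 0 then
    Walk.nil.copy (Fin.ext h).symm rfl
  else
    Walk.cons (Or.inl ⟨h, rfl⟩ :
        (dualTree q).Adj v ⟨v.val / 2, Nat.lt_of_le_of_lt (Nat.div_le_self _ _) v.isLt⟩)
      (cwalk q ⟨v.val / 2, Nat.lt_of_le_of_lt (Nat.div_le_self _ _) v.isLt⟩)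
termination_by v.val
decreasing_by exact Nat.div_lt_self (Nat.pos_of_ne_zero h) one_lt_two

lemma cwalk_zero (q : ℕ) (v : Fin (2 ^ (q + 1))) (h : v.val = 0) :
    cwalk q v = Walk.nil.copy (Fin.ext h).symm rfl := by
  rw [cwalk, dif_pos h]

lemma dualTree_adj_half (q : ℕ) (v : Fin (2 ^ (q + 1))) (h : v.val ≠ 0) :
    (dualTree q).Adj v ⟨v.val / 2, Nat.lt_of_le_of_lt (Nat.div_le_self _ _) v.isLt⟩ :=
  Or.inl ⟨h, rfl⟩

lemma cwalk_ne (q : ℕ) (v : Fin (2 ^ (q + 1))) (h : v.val ≠ 0) :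
    cwalk q v = Walk.cons (dualTree_adj_half q v h)
      (cwalk q ⟨v.val / 2, Nat.lt_of_le_of_lt (Nat.div_le_self _ _) v.isLt⟩) := by
  rw [cwalk, dif_neg h]

lemma cwalk_support_le (q : ℕ) (v : Fin (2 ^ (q + 1))) :
    ∀ u ∈ (cwalk q v).support, u.val ≤ v.val := by
  have key : ∀ (n : ℕ) (v : Fin (2 ^ (q + 1))), v.val ≤ n →
      ∀ u ∈ (cwalk q v).support, u.val ≤ v.val := by
    intro n
    induction n with
    | zero =>
      intro v hv u hu
      rw [cwalk_zero q v (by omega), Walk.support_copy, Walk.support_nil] at hu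
      simp only [List.mem_singleton] at hu
      rw [hu]
      simp [dualRoot]
    | succ n ih =>
      intro v hv u hu
      by_cases h : v.val = 0
      · rw [cwalk_zero q v h, Walk.support_copy, Walk.support_nil] at hu
        simp only [List.mem_singleton] at hu
        rw [hu]
        simp [dualRoot]
      · rw [cwalk_ne q v h, Walk.support_cons] at hu
        rcases List.mem_cons.mp hu with rfl | hu
        · exact le_rfl
        · have := ih ⟨v.val / 2, Nat.lt_of_le_of_lt (Nat.div_le_self _ _) v.isLt⟩
            (by simp; omega) u hu
          simp at this
          omega
  exact key v.val v le_rfl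

lemma cwalk_isPath (q : ℕ) (v : Fin (2 ^ (q + 1))) : (cwalk q v).IsPath := by
  have key : ∀ (n : ℕ) (v : Fin (2 ^ (q + 1))), v.val ≤ n → (cwalk q v).IsPath := by
    intro n
    induction n with
    | zero =>
      intro v hv
      rw [cwalk_zero q v (by omega), Walk.isPath_copy]
      exact Walk.IsPath.nil
    | succ n ih =>
      intro v hv
      by_cases h : v.val = 0
      · rw [cwalk_zero q v h, Walk.isPath_copy]
        exact Walk.IsPath.nil
      · rw [cwalk_ne q v h, Walk.cons_isPath_iff]
        refine ⟨ih _ (by simp; omega), fun hmem => ?_⟩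
        have := cwalk_support_le q _ v hmem
        simp at this
        omega
  exact key v.val v le_rfl

lemma cwalk_unique_aux (q : ℕ) : ∀ (v r : Fin (2 ^ (q + 1))) (w : (dualTree q).Walk v r)
    (hr : r = dualRoot q), w.IsPath → w.copy rfl hr = cwalk q v := by
  intro v r w
  induction w with
  | nil =>
    intro hr _
    subst hr
    rw [Walk.copy_rfl_rfl, cwalk_zero q (dualRoot q) rfl]
    rfl
  | @cons v x r h p ih =>
    intro hr hp
    subst hr
    rw [Walk.copy_rfl_rfl]
    obtain ⟨hpp, hvn⟩ := (Walk.cons_isPath_iff h p).mp hp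
    have hpc : p = cwalk q x := by
      have := ih rfl hpp
      rwa [Walk.copy_rfl_rfl] at this
    rcases h with ⟨hv0, hx⟩ | ⟨hx0, hv⟩
    · have hxe : x = ⟨v.val / 2, Nat.lt_of_le_of_lt (Nat.div_le_self _ _) v.isLt⟩ :=
        Fin.ext hx
      subst hxe
      rw [cwalk_ne q v hv0]
      rw [hpc]
    · exfalso
      apply hvn
      rw [hpc, cwalk_ne q x hx0, Walk.support_cons]
      have : v = ⟨x.val / 2, Nat.lt_of_le_of_lt (Nat.div_le_self _ _) x.isLt⟩ := Fin.ext hv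
      rw [this]
      exact List.mem_cons_of_mem _ (Walk.start_mem_support _)

lemma cwalk_unique (q : ℕ) (v : Fin (2 ^ (q + 1))) (w : (dualTree q).Walk v (dualRoot q))
    (hp : w.IsPath) : w = cwalk q v := by
  have := cwalk_unique_aux q v _ w rfl hp
  rwa [Walk.copy_rfl_rfl] at this

lemma sym2_fin_ext {N : ℕ} {a b c d : ℕ} (h1 : a = c) (h2 : b = d)
    {pa : a < N} {pb : b < N} {pc : c < N} {pd : d < N} :
    (s((⟨a, pa⟩ : Fin N), ⟨b, pb⟩) = s((⟨c, pc⟩ : Fin N), ⟨d, pd⟩)) := by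
  subst h1; subst h2; rfl

lemma div_div_two (x j : ℕ) : x / 2 / 2 ^ j = x / 2 ^ (j + 1) := by
  rw [Nat.div_div_eq_div_mul, ← pow_succ']

lemma cwalk_edges_mem (q : ℕ) (v : Fin (2 ^ (q + 1))) (e : Sym2 (Fin (2 ^ (q + 1)))) :
    e ∈ (cwalk q v).edges ↔ ∃ j : ℕ, v.val / 2 ^ j ≠ 0 ∧
      e = s(⟨v.val / 2 ^ j, Nat.lt_of_le_of_lt (Nat.div_le_self _ _) v.isLt⟩,
            ⟨v.val / 2 ^ (j + 1), Nat.lt_of_le_of_lt (Nat.div_le_self _ _) v.isLt⟩) := by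
  have key : ∀ (n : ℕ) (v : Fin (2 ^ (q + 1))), v.val ≤ n →
      ∀ e, (e ∈ (cwalk q v).edges ↔ ∃ j : ℕ, v.val / 2 ^ j ≠ 0 ∧
        e = s(⟨v.val / 2 ^ j, Nat.lt_of_le_of_lt (Nat.div_le_self _ _) v.isLt⟩,
              ⟨v.val / 2 ^ (j + 1), Nat.lt_of_le_of_lt (Nat.div_le_self _ _) v.isLt⟩)) := by
    intro n
    induction n with
    | zero =>
      intro v hv e
      have h0 : v.val = 0 := by omega
      rw [cwalk_zero q v h0, Walk.edges_copy, Walk.edges_nil]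
      simp [h0]
    | succ n ih =>
      intro v hv e
      by_cases h : v.val = 0
      · rw [cwalk_zero q v h, Walk.edges_copy, Walk.edges_nil]
        simp [h]
      · rw [cwalk_ne q v h, Walk.edges_cons, List.mem_cons]
        set v2 : Fin (2 ^ (q + 1)) :=
          ⟨v.val / 2, Nat.lt_of_le_of_lt (Nat.div_le_self _ _) v.isLt⟩ with hv2
        rw [ih v2 (by simp [hv2]; omega) e]
        constructor
        · rintro (rfl | ⟨j, hj, rfl⟩)
          · refine ⟨0, by simpa using h, ?_⟩
            have hvv : v = ⟨v.val / 2 ^ 0, Nat.lt_of_le_of_lt (Nat.div_le_self _ _) v.isLt⟩ :=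
              Fin.ext (by simp)
            rw [hvv]
            exact sym2_fin_ext (by simp) (by simp [hv2])
          · refine ⟨j + 1, by simpa [hv2, div_div_two] using hj, ?_⟩
            exact sym2_fin_ext (by simp [hv2, div_div_two]) (by simp [hv2, div_div_two])
        · rintro ⟨j, hj, rfl⟩
          cases j with
          | zero =>
            left
            have hvv : v = ⟨v.val / 2 ^ 0, Nat.lt_of_le_of_lt (Nat.div_le_self _ _) v.isLt⟩ :=
              Fin.ext (by simp)
            conv_lhs => rw [hvv]
            exact sym2_fin_ext (by simp) (by simp [hv2])
          | succ j =>
            right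
            refine ⟨j, by simpa [hv2, div_div_two] using hj, ?_⟩
            exact sym2_fin_ext (by simp [hv2, div_div_two]) (by simp [hv2, div_div_two])
  exact key v.val v le_rfl e

lemma leaf_div (q m j : ℕ) (hj : j ≤ q) : (2 ^ q + m) / 2 ^ j = 2 ^ (q - j) + m / 2 ^ j := by
  rw [Nat.add_div_of_dvd_right (pow_dvd_pow 2 hj), Nat.pow_div hj (by norm_num)]

lemma leaf_div_ne (q m j : ℕ) (hm : m < 2 ^ q) : (2 ^ q + m) / 2 ^ j ≠ 0 ↔ j ≤ q := by
  constructor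
  · intro h
    by_contra hj
    push_neg at hj
    apply h
    apply Nat.div_eq_of_lt
    have h1 : 2 ^ (q + 1) ≤ 2 ^ j := Nat.pow_le_pow_right (by norm_num) (by omega)
    have h2 : (2 : ℕ) ^ (q + 1) = 2 ^ q * 2 := pow_succ 2 q
    omega
  · intro hj
    rw [leaf_div q m j hj]
    exact fun hc => (Nat.two_pow_pos (q - j)).ne' (Nat.add_eq_zero.mp hc).1

lemma leaf_mdiv_lt (q m j : ℕ) (hm : m < 2 ^ q) (hj : j ≤ q) : m / 2 ^ j < 2 ^ (q - j) := by
  rw [Nat.div_lt_iff_lt_mul (Nat.two_pow_pos j)]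
  calc m < 2 ^ q := hm
    _ = 2 ^ (q - j) * 2 ^ j := by rw [← pow_add]; congr 1; omega

lemma primal_step (q m j : ℕ) (hm : m < 2 ^ q) (hj : j ≤ q) :
    primalOfNode q ((2 ^ q + m) / 2 ^ j) = natCutEdge m j := by
  have hu : (2 ^ q + m) / 2 ^ j = 2 ^ (q - j) + m / 2 ^ j := leaf_div q m j hj
  have hmd := leaf_mdiv_lt q m j hm hj
  have hlog : Nat.log 2 ((2 ^ q + m) / 2 ^ j) = q - j := by
    apply Nat.log_eq_of_pow_le_of_lt_pow
    · rw [hu]; exact Nat.le_add_right _ _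
    · rw [hu]
      calc 2 ^ (q - j) + m / 2 ^ j < 2 ^ (q - j) + 2 ^ (q - j) := Nat.add_lt_add_left hmd _
        _ = 2 ^ (q - j) * 2 := (mul_two _).symm
        _ = 2 ^ (q - j + 1) := (pow_succ 2 (q - j)).symm
  rw [primalOfNode, hlog, hu, Nat.add_sub_cancel_left, Nat.sub_sub_self hj, natCutEdge]
  rw [add_mul, one_mul, mul_comm]

lemma primal_edge_mk (q : ℕ) (a b : Fin (2 ^ (q + 1))) :
    primalOfDualEdge q s(a, b) = primalOfNode q (max a.val b.val) := by
  rw [primalOfDualEdge, Sym2.lift_mk]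

lemma image_eq (q m : ℕ) (hm : m < 2 ^ q) (ℓ : Fin (2 ^ (q + 1))) (hℓ : ℓ.val = 2 ^ q + m) :
    Sym2.map Fin.val '' (cutC q m) =
      primalOfDualEdge q '' {e | e ∈ ((cwalk q ℓ).reverse).edges} := by
  have hprim : ∀ j : ℕ, j ≤ q →
      primalOfDualEdge q
        s((⟨ℓ.val / 2 ^ j, Nat.lt_of_le_of_lt (Nat.div_le_self _ _) ℓ.isLt⟩ : Fin (2 ^ (q + 1))),
          ⟨ℓ.val / 2 ^ (j + 1), Nat.lt_of_le_of_lt (Nat.div_le_self _ _) ℓ.isLt⟩) =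
        natCutEdge m j := by
    intro j hj
    rw [primal_edge_mk]
    have hle : ℓ.val / 2 ^ (j + 1) ≤ ℓ.val / 2 ^ j := by
      rw [← div_div_two]
      exact Nat.div_le_div_right (Nat.div_le_self _ _)
    have hmax : max ((⟨ℓ.val / 2 ^ j, Nat.lt_of_le_of_lt (Nat.div_le_self _ _) ℓ.isLt⟩ :
        Fin (2 ^ (q + 1))).val)
        ((⟨ℓ.val / 2 ^ (j + 1), Nat.lt_of_le_of_lt (Nat.div_le_self _ _) ℓ.isLt⟩ :
        Fin (2 ^ (q + 1))).val) = ℓ.val / 2 ^ j := max_eq_left hle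
    rw [hmax, hℓ]
    exact primal_step q m j hm hj
  have hedge : {e | e ∈ ((cwalk q ℓ).reverse).edges} = {e | e ∈ (cwalk q ℓ).edges} := by
    ext e
    simp [Walk.edges_reverse, List.mem_reverse]
  rw [hedge]
  ext E
  simp only [Set.mem_image, Set.mem_setOf_eq]
  constructor
  · rintro ⟨e, ⟨k, hk, hmap⟩, rfl⟩
    refine ⟨s(⟨ℓ.val / 2 ^ k, Nat.lt_of_le_of_lt (Nat.div_le_self _ _) ℓ.isLt⟩,
      ⟨ℓ.val / 2 ^ (k + 1), Nat.lt_of_le_of_lt (Nat.div_le_self _ _) ℓ.isLt⟩),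
      (cwalk_edges_mem q ℓ _).mpr ⟨k, by rw [hℓ]; exact (leaf_div_ne q m k hm).mpr hk, rfl⟩, ?_⟩
    rw [hprim k hk, hmap]
  · rintro ⟨e, he, rfl⟩
    rw [cwalk_edges_mem] at he
    obtain ⟨j, hne, rfl⟩ := he
    have hj : j ≤ q := (leaf_div_ne q m j hm).mp (by rwa [hℓ] at hne)
    exact ⟨finCutEdge q m j hm hj, finCutEdge_mem q m j hm hj,
      by rw [finCutEdge_map, hprim j hj]⟩

def leafVtx (q : ℕ) (m : Fin (2 ^ q)) : Fin (2 ^ (q + 1)) :=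
  ⟨2 ^ q + m.val, by
    have := m.isLt
    have h2 : (2 : ℕ) ^ (q + 1) = 2 ^ q * 2 := pow_succ 2 q
    omega⟩

def pathOf (q : ℕ) (m : Fin (2 ^ q)) :
    {pl : Σ ℓ : Fin (2 ^ (q + 1)), (dualTree q).Walk (dualRoot q) ℓ //
      IsDualLeaf q pl.1 ∧ pl.2.IsPath} :=
  ⟨⟨leafVtx q m, (cwalk q (leafVtx q m)).reverse⟩,
    Nat.le_add_right _ _, (cwalk_isPath q _).reverse⟩

def cutOf (q : ℕ) (m : Fin (2 ^ q)) : {C : Set (Sym2 (Fin (2 ^ q + 1))) // MinSTCut q C} :=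
  ⟨cutC q m.val, minSTCut_iff.mpr ⟨m.val, m.isLt, rfl⟩⟩

lemma pathOf_bijective (q : ℕ) : Function.Bijective (pathOf q) := by
  constructor
  · intro m m' h
    have := congrArg (fun z => z.val.1.val) h
    simp only [pathOf, leafVtx] at this
    exact Fin.ext (by omega)
  · rintro ⟨⟨ℓ, w⟩, hleaf, hpath⟩
    have hge : 2 ^ q ≤ ℓ.val := hleaf
    have hlt := ℓ.isLt
    have h2 : (2 : ℕ) ^ (q + 1) = 2 ^ q * 2 := pow_succ 2 q
    have hm : ℓ.val - 2 ^ q < 2 ^ q := by omega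
    obtain ⟨m0, rfl⟩ : ∃ m0 : Fin (2 ^ q), leafVtx q m0 = ℓ :=
      ⟨⟨ℓ.val - 2 ^ q, hm⟩, Fin.ext (by simp [leafVtx]; omega)⟩
    have hw : w = (cwalk q (leafVtx q m0)).reverse := by
      have := cwalk_unique q (leafVtx q m0) w.reverse hpath.reverse
      rw [← this, Walk.reverse_reverse]
    subst hw
    exact ⟨m0, rfl⟩

lemma cutOf_bijective (q : ℕ) : Function.Bijective (cutOf q) := by
  constructor
  · intro m m' h
    exact Fin.ext (cutC_inj m.isLt m'.isLt (congrArg Subtype.val h))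
  · rintro ⟨C, hC⟩
    obtain ⟨m, hm, rfl⟩ := minSTCut_iff.mp hC
    exact ⟨⟨m, hm⟩, rfl⟩


/-- there is a one-to-one correspondence between root-leaf paths in the
dual structure `T_q` and minimum `σ`-`τ` edge cuts of `△_q`; the cut corresponding to
a root-leaf path is precisely the set of `△_q`-edges dual to the edges of the path. -/
theorem dual_tree_paths_correspond_to_min_cuts (q : ℕ) :
    ∃ Φ : {pl : Σ ℓ : Fin (2 ^ (q + 1)), (dualTree q).Walk (dualRoot q) ℓ //
            IsDualLeaf q pl.1 ∧ pl.2.IsPath} ≃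
          {C : Set (Sym2 (Fin (2 ^ q + 1))) // MinSTCut q C},
      ∀ x, Sym2.map Fin.val '' (Φ x).val =
        primalOfDualEdge q '' {e | e ∈ x.val.2.edges} := by
  have h1 := pathOf_bijective q
  have h2 := cutOf_bijective q
  refine ⟨(Equiv.ofBijective _ h1).symm.trans (Equiv.ofBijective _ h2), ?_⟩
  intro x
  obtain ⟨m, rfl⟩ : ∃ m, pathOf q m = x :=
    ⟨(Equiv.ofBijective _ h1).symm x, (Equiv.ofBijective _ h1).apply_symm_apply x⟩
  have hΦ : ((Equiv.ofBijective _ h1).symm.trans (Equiv.ofBijective _ h2)) (pathOf q m) =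
      cutOf q m := by
    rw [Equiv.trans_apply]
    have h3 : (Equiv.ofBijective _ h1).symm (pathOf q m) = m := by
      rw [show pathOf q m = (Equiv.ofBijective _ h1) m from rfl, Equiv.symm_apply_apply]
    rw [h3]
    rfl
  rw [hΦ]
  show Sym2.map Fin.val '' (cutC q m.val) =
    primalOfDualEdge q '' {e | e ∈ ((cwalk q (leafVtx q m)).reverse).edges}
  exact image_eq q m.val m.isLt (leafVtx q m) rfl
end

section
/- Let D be a set of edges of the q-T-fractal △_q such that △_q − D is connected. Then every vertex x of △_q satisfies dist_{△_q − D}(σ, x) ≤ q + |D| + 1. -/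
namespace TFHelp

/-- The infinite fractal graph on ℕ. -/
def gInf : SimpleGraph ℕ where
  Adj a b := (∃ l : ℕ, 2 ^ l ∣ a ∧ b = a + 2 ^ l) ∨ (∃ l : ℕ, 2 ^ l ∣ b ∧ a = b + 2 ^ l)
  symm := ⟨fun a b h => h.symm⟩
  loopless := by
    constructor
    intro a h
    rcases h with ⟨l, _, h⟩ | ⟨l, _, h⟩ <;> · have := Nat.two_pow_pos l; omega

lemma gInf_adj {a b : ℕ} :
    gInf.Adj a b ↔ (∃ l : ℕ, 2 ^ l ∣ a ∧ b = a + 2 ^ l) ∨ (∃ l : ℕ, 2 ^ l ∣ b ∧ a = b + 2 ^ l) :=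
  Iff.rfl

lemma gInf_adj_step {a : ℕ} (l : ℕ) (h : 2 ^ l ∣ a) : gInf.Adj a (a + 2 ^ l) :=
  Or.inl ⟨l, h, rfl⟩

variable (D : Set (Sym2 ℕ))

/-- Reachability within a vertex set `s`, avoiding deleted edges `D`, with length bound `n`. -/
def RB (s : Set ℕ) (u v n : ℕ) : Prop :=
  ∃ w : (gInf.deleteEdges D).Walk u v, (∀ x ∈ w.support, x ∈ s) ∧ w.length ≤ n

/-- Reachability within a vertex set `s`, avoiding deleted edges `D`. -/
def RI (s : Set ℕ) (u v : ℕ) : Prop :=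
  ∃ w : (gInf.deleteEdges D).Walk u v, ∀ x ∈ w.support, x ∈ s

variable {D}

lemma RB.ri {s u v n} (h : RB D s u v n) : RI D s u v := ⟨h.choose, h.choose_spec.1⟩

lemma RI.refl {s u} (hu : u ∈ s) : RI D s u u := ⟨.nil, by simp [hu]⟩

lemma RB.refl {s u n} (hu : u ∈ s) : RB D s u u n := ⟨.nil, by simp [hu], by simp⟩

lemma RI.symm {s u v} (h : RI D s u v) : RI D s v u := by
  obtain ⟨w, hw⟩ := h
  exact ⟨w.reverse, by simpa using hw⟩

lemma RB.symm {s u v n} (h : RB D s u v n) : RB D s v u n := by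
  obtain ⟨w, hw, hl⟩ := h
  exact ⟨w.reverse, by simpa using hw, by simpa using hl⟩

lemma RI.trans {s u v x} (h : RI D s u v) (h' : RI D s v x) : RI D s u x := by
  obtain ⟨w, hw⟩ := h; obtain ⟨w', hw'⟩ := h'
  refine ⟨w.append w', fun y hy => ?_⟩
  rw [SimpleGraph.Walk.mem_support_append_iff] at hy
  exact hy.elim (hw y) (hw' y)

lemma RB.trans {s u v x n m} (h : RB D s u v n) (h' : RB D s v x m) : RB D s u x (n + m) := by
  obtain ⟨w, hw, hl⟩ := h; obtain ⟨w', hw', hl'⟩ := h'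
  refine ⟨w.append w', fun y hy => ?_, by rw [SimpleGraph.Walk.length_append]; omega⟩
  rw [SimpleGraph.Walk.mem_support_append_iff] at hy
  exact hy.elim (hw y) (hw' y)

lemma RI.mem_left {s u v} (h : RI D s u v) : u ∈ s := by
  obtain ⟨w, hw⟩ := h; exact hw u w.start_mem_support

lemma RI.mem_right {s u v} (h : RI D s u v) : v ∈ s := by
  obtain ⟨w, hw⟩ := h; exact hw v w.end_mem_support

lemma RI.mono {s s' : Set ℕ} {u v} (hs : s ⊆ s') (h : RI D s u v) : RI D s' u v := by
  obtain ⟨w, hw⟩ := h; exact ⟨w, fun x hx => hs (hw x hx)⟩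

lemma RB.mono {s s' : Set ℕ} {u v n m} (hs : s ⊆ s') (hn : n ≤ m) (h : RB D s u v n) :
    RB D s' u v m := by
  obtain ⟨w, hw, hl⟩ := h; exact ⟨w, fun x hx => hs (hw x hx), le_trans hl hn⟩

lemma RB.edge {s u v} (h : gInf.Adj u v) (hD : s(u, v) ∉ D) (hu : u ∈ s) (hv : v ∈ s) :
    RB D s u v 1 := by
  refine ⟨.cons (SimpleGraph.deleteEdges_adj.mpr ⟨h, hD⟩) .nil, ?_, by simp⟩
  intro x hx
  simp only [SimpleGraph.Walk.support_cons, SimpleGraph.Walk.support_nil, List.mem_cons,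
    List.mem_singleton] at hx
  rcases hx with rfl | rfl | h; exacts [hu, hv, absurd h (by simp)]

lemma RI.cons {s u v x} (h : gInf.Adj u v) (hD : s(u, v) ∉ D) (hu : u ∈ s)
    (h' : RI D s v x) : RI D s u x :=
  (RB.edge h hD hu h'.mem_left).ri.trans h'


lemma add_dvd_le {p a b : ℕ} (hp : 0 < p) (ha : p ∣ a) (hb : p ∣ b) (hab : a < b) :
    a + p ≤ b := by
  obtain ⟨k, rfl⟩ := ha; obtain ⟨k', rfl⟩ := hb
  have : k < k' := by
    by_contra h
    exact absurd (Nat.mul_le_mul_left p (not_lt.mp h)) (not_le.mpr hab)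
  calc p * k + p = p * (k + 1) := by ring
  _ ≤ p * k' := Nat.mul_le_mul_left p this

lemma pow_le_exp {l k : ℕ} (h : 2 ^ l ≤ 2 ^ k) : l ≤ k :=
  (Nat.pow_le_pow_iff_right (by norm_num)).mp h

/-- No multiple of `2^j` lies strictly between `a0` and `a0 + 2^j` when `2^j ∣ a0`. -/
lemma no_mult_between {j a0 u : ℕ} (hdiv : 2 ^ j ∣ a0) (h1 : a0 < u) (h2 : u < a0 + 2 ^ j)
    (hu : 2 ^ j ∣ u) : False := by
  have := add_dvd_le (Nat.two_pow_pos j) hdiv hu h1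
  omega

lemma nbr_interior {j a0 u y : ℕ} (hdiv : 2 ^ j ∣ a0) (h1 : a0 < u) (h2 : u < a0 + 2 ^ j)
    (h : gInf.Adj u y) : a0 ≤ y ∧ y ≤ a0 + 2 ^ j := by
  have hp : ∀ l : ℕ, 2 ^ l ∣ u → l < j := by
    intro l hl
    by_contra hc
    exact no_mult_between hdiv h1 h2 (dvd_trans (pow_dvd_pow 2 (not_lt.mp hc)) hl)
  rcases h with ⟨l, hl, rfl⟩ | ⟨l, hl, he⟩
  · have hlj : l < j := hp l hl
    have hla : 2 ^ l ∣ a0 := dvd_trans (pow_dvd_pow 2 hlj.le) hdiv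
    have hr : 2 ^ l ∣ u - a0 := Nat.dvd_sub hl hla
    have hj : 2 ^ l ∣ 2 ^ j := pow_dvd_pow 2 hlj.le
    have : 2 ^ l ∣ a0 + 2 ^ j - u := Nat.dvd_sub (Nat.dvd_add hla hj) hl
    have h3 : 2 ^ l ≤ a0 + 2 ^ j - u := Nat.le_of_dvd (by omega) this
    omega
  · have hu2 : 2 ^ l ∣ u := he ▸ Nat.dvd_add hl dvd_rfl
    have hlj : l < j := hp l hu2
    have hla : 2 ^ l ∣ a0 := dvd_trans (pow_dvd_pow 2 hlj.le) hdiv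
    have hr : 2 ^ l ∣ u - a0 := Nat.dvd_sub hu2 hla
    have h3 : 2 ^ l ≤ u - a0 := Nat.le_of_dvd (by omega) hr
    have := Nat.two_pow_pos l
    omega

lemma nbr_left {j a0 y : ℕ} (hdiv : 2 ^ (j + 1) ∣ a0) (h : gInf.Adj a0 y) (hy0 : a0 ≤ y)
    (hy : y ≤ a0 + 2 ^ (j + 1)) (hne : y ≠ a0 + 2 ^ (j + 1)) : a0 ≤ y ∧ y ≤ a0 + 2 ^ j := by
  rcases h with ⟨l, hl, rfl⟩ | ⟨l, hl, he⟩
  · have h1 : 2 ^ l ≤ 2 ^ (j + 1) := by omega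
    have h2 : l ≤ j + 1 := pow_le_exp h1
    have h3 : l ≠ j + 1 := by rintro rfl; omega
    have h4 : 2 ^ l ≤ 2 ^ j := Nat.pow_le_pow_right (by norm_num) (by omega)
    omega
  · have := Nat.two_pow_pos l; omega

lemma nbr_right {j a0 y : ℕ} (hdiv : 2 ^ (j + 1) ∣ a0) (h : gInf.Adj (a0 + 2 ^ (j + 1)) y)
    (hy0 : a0 ≤ y) (hy : y ≤ a0 + 2 ^ (j + 1)) (hne : y ≠ a0) :
    a0 + 2 ^ j ≤ y ∧ y ≤ a0 + 2 ^ (j + 1) := by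
  have hj : (2:ℕ) ^ (j+1) = 2 ^ j + 2 ^ j := by rw [pow_succ]; ring
  rcases h with ⟨l, hl, he⟩ | ⟨l, hl, he⟩
  · have := Nat.two_pow_pos l; omega
  · -- a0 + 2^(j+1) = y + 2^l, 2^l ∣ y
    have h1 : 2 ^ l ≤ 2 ^ (j + 1) := by omega
    have h2 : l ≤ j + 1 := pow_le_exp h1
    have h3 : l ≠ j + 1 := by
      rintro rfl
      have : y = a0 := by omega
      exact hne this
    have h4 : 2 ^ l ≤ 2 ^ j := Nat.pow_le_pow_right (by norm_num) (by omega)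
    omega

lemma nbr_mid {j a0 y : ℕ} (hdiv : 2 ^ (j + 1) ∣ a0) (h : gInf.Adj (a0 + 2 ^ j) y) :
    (a0 ≤ y ∧ y ≤ a0 + 2 ^ j) ∨ (a0 + 2 ^ j ≤ y ∧ y ≤ a0 + 2 ^ (j + 1)) := by
  have hj : (2:ℕ) ^ (j+1) = 2 ^ j + 2 ^ j := by rw [pow_succ]; ring
  have hmle : ∀ l : ℕ, 2 ^ l ∣ a0 + 2 ^ j → l ≤ j := by
    intro l hl
    by_contra hc
    have h1 : 2 ^ (j + 1) ∣ 2 ^ l := pow_dvd_pow 2 (by omega)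
    have h2 : 2 ^ (j + 1) ∣ a0 + 2 ^ j := dvd_trans h1 hl
    have h3 : 2 ^ (j + 1) ∣ 2 ^ j := (Nat.dvd_add_right hdiv).mp h2
    have := Nat.le_of_dvd (Nat.two_pow_pos j) h3
    omega
  rcases h with ⟨l, hl, rfl⟩ | ⟨l, hl, he⟩
  · have h4 : 2 ^ l ≤ 2 ^ j := Nat.pow_le_pow_right (by norm_num) (hmle l hl)
    omega
  · have hl2 : 2 ^ l ∣ a0 + 2 ^ j := he ▸ Nat.dvd_add hl dvd_rfl
    have h4 : 2 ^ l ≤ 2 ^ j := Nat.pow_le_pow_right (by norm_num) (hmle l hl2)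
    omega


section Walks

variable {D : Set (Sym2 ℕ)}

lemma RB.edgeH {s : Set ℕ} {u v : ℕ} (ha : (gInf.deleteEdges D).Adj u v) (hu : u ∈ s)
    (hv : v ∈ s) : RB D s u v 1 := by
  rw [SimpleGraph.deleteEdges_adj] at ha
  exact RB.edge ha.1 ha.2 hu hv

lemma RI.snoc {s : Set ℕ} {b u u' : ℕ} (h : RI D s b u) (ha : (gInf.deleteEdges D).Adj u u')
    (hu' : u' ∈ s) : RI D s b u' :=
  h.trans (RB.edgeH ha h.mem_right hu').ri

/-- A walk starting inside an interval either stays inside, or its start can reach one of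
the two interval endpoints inside the interval. -/
lemma exit {j a0 : ℕ} (hdiv : 2 ^ j ∣ a0) {u v : ℕ}
    (w : (gInf.deleteEdges D).Walk u v) (hu : u ∈ Set.Icc a0 (a0 + 2 ^ j)) :
    RI D (Set.Icc a0 (a0 + 2 ^ j)) u v ∨ RI D (Set.Icc a0 (a0 + 2 ^ j)) u a0 ∨
      RI D (Set.Icc a0 (a0 + 2 ^ j)) u (a0 + 2 ^ j) := by
  induction w with
  | nil => exact Or.inl (RI.refl hu)
  | @cons u u' v h p ih =>
    by_cases h0 : u = a0
    · exact Or.inr (Or.inl (by subst h0; exact RI.refl hu))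
    by_cases h1 : u = a0 + 2 ^ j
    · exact Or.inr (Or.inr (by subst h1; exact RI.refl hu))
    have hint : a0 < u ∧ u < a0 + 2 ^ j := by
      simp only [Set.mem_Icc] at hu; omega
    have hu' : u' ∈ Set.Icc a0 (a0 + 2 ^ j) := by
      have := nbr_interior hdiv hint.1 hint.2 (SimpleGraph.deleteEdges_adj.mp h).1
      simpa [Set.mem_Icc] using this
    rcases ih hu' with h2 | h2 | h2
    · exact Or.inl ((RB.edgeH h hu hu').ri.trans h2)
    · exact Or.inr (Or.inl ((RB.edgeH h hu hu').ri.trans h2))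
    · exact Or.inr (Or.inr ((RB.edgeH h hu hu').ri.trans h2))

end Walks


section Closure

variable {D : Set (Sym2 ℕ)} {j a0 : ℕ}

private lemma pow2succ : (2:ℕ) ^ (j+1) = 2 ^ j + 2 ^ j := by rw [pow_succ]; ring

/-- Closure lemma for the component of `a0` when the top edge is deleted. -/
lemma clK (hdiv : 2 ^ (j+1) ∣ a0) (ht : s(a0, a0 + 2 ^ (j+1)) ∈ D) {v : ℕ}
    (h : RI D (Set.Icc a0 (a0 + 2 ^ (j+1))) a0 v) :
    RI D (Set.Icc a0 (a0 + 2 ^ j)) a0 v ∨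
      (RI D (Set.Icc a0 (a0 + 2 ^ j)) a0 (a0 + 2 ^ j) ∧
        RI D (Set.Icc (a0 + 2 ^ j) (a0 + 2 ^ (j+1))) (a0 + 2 ^ j) v) := by
  have hp2 : (2:ℕ) ^ (j+1) = 2 ^ j + 2 ^ j := pow2succ
  have hpos : 0 < (2:ℕ) ^ j := Nat.two_pow_pos j
  have hd' : 2 ^ j ∣ a0 := dvd_trans (pow_dvd_pow 2 (Nat.le_succ j)) hdiv
  have hdm : 2 ^ j ∣ a0 + 2 ^ j := Nat.dvd_add hd' dvd_rfl
  obtain ⟨w, hw⟩ := h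
  suffices H : ∀ u v (w : (gInf.deleteEdges D).Walk u v)
      (_ : ∀ x ∈ w.support, x ∈ Set.Icc a0 (a0 + 2 ^ (j+1))),
      (RI D (Set.Icc a0 (a0 + 2 ^ j)) a0 u ∨
        (RI D (Set.Icc a0 (a0 + 2 ^ j)) a0 (a0 + 2 ^ j) ∧
          RI D (Set.Icc (a0 + 2 ^ j) (a0 + 2 ^ (j+1))) (a0 + 2 ^ j) u)) →
      (RI D (Set.Icc a0 (a0 + 2 ^ j)) a0 v ∨
        (RI D (Set.Icc a0 (a0 + 2 ^ j)) a0 (a0 + 2 ^ j) ∧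
          RI D (Set.Icc (a0 + 2 ^ j) (a0 + 2 ^ (j+1))) (a0 + 2 ^ j) v)) by
    exact H a0 v w hw (Or.inl (RI.refl (Set.mem_Icc.mpr ⟨le_refl _, by omega⟩)))
  intro u v w
  induction w with
  | nil => exact fun _ h => h
  | @cons u u' v hadj p ih =>
    intro hw hK
    have hga := (SimpleGraph.deleteEdges_adj.mp hadj).1
    have hnd := (SimpleGraph.deleteEdges_adj.mp hadj).2
    have hu : u ∈ Set.Icc a0 (a0 + 2 ^ (j+1)) := hw u (by simp)
    have hu' : u' ∈ Set.Icc a0 (a0 + 2 ^ (j+1)) := hw u' (by simp)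
    have hub := Set.mem_Icc.mp hu
    have hub' := Set.mem_Icc.mp hu'
    have hw' : ∀ x ∈ p.support, x ∈ Set.Icc a0 (a0 + 2 ^ (j+1)) := by
      intro x hx; exact hw x (by simp [hx])
    refine ih hw' ?_
    -- show the one-step closure
    rcases hK with hL | ⟨hLm, hRu⟩
    · have hul := Set.mem_Icc.mp hL.mem_right
      by_cases hm : u = a0 + 2 ^ j
      · have hgam : gInf.Adj (a0 + 2 ^ j) u' := hm ▸ hga
        rcases nbr_mid hdiv hgam with hy | hy
        · exact Or.inl (hL.snoc hadj (Set.mem_Icc.mpr (by omega)))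
        · exact Or.inr ⟨hm ▸ hL, (RB.edgeH (hm ▸ hadj) (Set.mem_Icc.mpr (by omega))
            (Set.mem_Icc.mpr (by omega))).ri⟩
      by_cases h0 : u = a0
      · have hga0 : gInf.Adj a0 u' := h0 ▸ hga
        have hne : u' ≠ a0 + 2 ^ (j+1) := by
          rintro rfl; exact hnd (by rw [h0]; exact ht)
        have hy := nbr_left hdiv hga0 hub'.1 hub'.2 hne
        exact Or.inl (hL.snoc hadj (Set.mem_Icc.mpr (by omega)))
      · have hy := nbr_interior hd' (by omega) (by omega) hga
        exact Or.inl (hL.snoc hadj (Set.mem_Icc.mpr (by omega)))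
    · have hur := Set.mem_Icc.mp hRu.mem_right
      by_cases hm : u = a0 + 2 ^ j
      · have hgam : gInf.Adj (a0 + 2 ^ j) u' := hm ▸ hga
        rcases nbr_mid hdiv hgam with hy | hy
        · exact Or.inl (hLm.snoc (hm ▸ hadj) (Set.mem_Icc.mpr (by omega)))
        · exact Or.inr ⟨hLm, hRu.snoc hadj (Set.mem_Icc.mpr (by omega))⟩
      by_cases h1 : u = a0 + 2 ^ (j+1)
      · have hga1 : gInf.Adj (a0 + 2 ^ (j+1)) u' := h1 ▸ hga
        have hne : u' ≠ a0 := by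
          rintro rfl
          exact hnd (by rw [h1, Sym2.eq_swap]; exact ht)
        have hy := nbr_right hdiv hga1 hub'.1 hub'.2 hne
        exact Or.inr ⟨hLm, hRu.snoc hadj (Set.mem_Icc.mpr (by omega))⟩
      · have hy : a0 + 2 ^ j ≤ u' ∧ u' ≤ a0 + 2 ^ j + 2 ^ j := by
          have := nbr_interior hdm (j := j) (by omega) (by omega) hga
          omega
        exact Or.inr ⟨hLm, hRu.snoc hadj (Set.mem_Icc.mpr (by omega))⟩


/-- Closure lemma for the component of `a1` when the top edge is deleted. -/
lemma clK1 (hdiv : 2 ^ (j+1) ∣ a0) (ht : s(a0, a0 + 2 ^ (j+1)) ∈ D) {v : ℕ}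
    (h : RI D (Set.Icc a0 (a0 + 2 ^ (j+1))) (a0 + 2 ^ (j+1)) v) :
    RI D (Set.Icc (a0 + 2 ^ j) (a0 + 2 ^ (j+1))) (a0 + 2 ^ (j+1)) v ∨
      (RI D (Set.Icc (a0 + 2 ^ j) (a0 + 2 ^ (j+1))) (a0 + 2 ^ (j+1)) (a0 + 2 ^ j) ∧
        RI D (Set.Icc a0 (a0 + 2 ^ j)) (a0 + 2 ^ j) v) := by
  have hp2 : (2:ℕ) ^ (j+1) = 2 ^ j + 2 ^ j := pow2succ
  have hpos : 0 < (2:ℕ) ^ j := Nat.two_pow_pos j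
  have hd' : 2 ^ j ∣ a0 := dvd_trans (pow_dvd_pow 2 (Nat.le_succ j)) hdiv
  have hdm : 2 ^ j ∣ a0 + 2 ^ j := Nat.dvd_add hd' dvd_rfl
  obtain ⟨w, hw⟩ := h
  suffices H : ∀ u v (w : (gInf.deleteEdges D).Walk u v)
      (_ : ∀ x ∈ w.support, x ∈ Set.Icc a0 (a0 + 2 ^ (j+1))),
      (RI D (Set.Icc (a0 + 2 ^ j) (a0 + 2 ^ (j+1))) (a0 + 2 ^ (j+1)) u ∨
        (RI D (Set.Icc (a0 + 2 ^ j) (a0 + 2 ^ (j+1))) (a0 + 2 ^ (j+1)) (a0 + 2 ^ j) ∧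
          RI D (Set.Icc a0 (a0 + 2 ^ j)) (a0 + 2 ^ j) u)) →
      (RI D (Set.Icc (a0 + 2 ^ j) (a0 + 2 ^ (j+1))) (a0 + 2 ^ (j+1)) v ∨
        (RI D (Set.Icc (a0 + 2 ^ j) (a0 + 2 ^ (j+1))) (a0 + 2 ^ (j+1)) (a0 + 2 ^ j) ∧
          RI D (Set.Icc a0 (a0 + 2 ^ j)) (a0 + 2 ^ j) v)) by
    exact H _ v w hw (Or.inl (RI.refl (Set.mem_Icc.mpr (by omega))))
  intro u v w
  induction w with
  | nil => exact fun _ h => h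
  | @cons u u' v hadj p ih =>
    intro hw hK
    have hga := (SimpleGraph.deleteEdges_adj.mp hadj).1
    have hnd := (SimpleGraph.deleteEdges_adj.mp hadj).2
    have hu : u ∈ Set.Icc a0 (a0 + 2 ^ (j+1)) := hw u (by simp)
    have hu' : u' ∈ Set.Icc a0 (a0 + 2 ^ (j+1)) := hw u' (by simp)
    have hub := Set.mem_Icc.mp hu
    have hub' := Set.mem_Icc.mp hu'
    have hw' : ∀ x ∈ p.support, x ∈ Set.Icc a0 (a0 + 2 ^ (j+1)) := by
      intro x hx; exact hw x (by simp [hx])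
    refine ih hw' ?_
    rcases hK with hR | ⟨hRm, hLu⟩
    · have hur := Set.mem_Icc.mp hR.mem_right
      by_cases hm : u = a0 + 2 ^ j
      · have hgam : gInf.Adj (a0 + 2 ^ j) u' := hm ▸ hga
        rcases nbr_mid hdiv hgam with hy | hy
        · exact Or.inr ⟨hm ▸ hR, (RB.edgeH (hm ▸ hadj) (Set.mem_Icc.mpr (by omega))
            (Set.mem_Icc.mpr (by omega))).ri⟩
        · exact Or.inl (hR.snoc hadj (Set.mem_Icc.mpr (by omega)))
      by_cases h1 : u = a0 + 2 ^ (j+1)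
      · have hga1 : gInf.Adj (a0 + 2 ^ (j+1)) u' := h1 ▸ hga
        have hne : u' ≠ a0 := by
          rintro rfl
          exact hnd (by rw [h1, Sym2.eq_swap]; exact ht)
        have hy := nbr_right hdiv hga1 hub'.1 hub'.2 hne
        exact Or.inl (hR.snoc hadj (Set.mem_Icc.mpr (by omega)))
      · have hy : a0 + 2 ^ j ≤ u' ∧ u' ≤ a0 + 2 ^ j + 2 ^ j := by
          have := nbr_interior hdm (j := j) (by omega) (by omega) hga
          omega
        exact Or.inl (hR.snoc hadj (Set.mem_Icc.mpr (by omega)))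
    · have hul := Set.mem_Icc.mp hLu.mem_right
      by_cases hm : u = a0 + 2 ^ j
      · have hgam : gInf.Adj (a0 + 2 ^ j) u' := hm ▸ hga
        rcases nbr_mid hdiv hgam with hy | hy
        · exact Or.inr ⟨hRm, hLu.snoc hadj (Set.mem_Icc.mpr (by omega))⟩
        · exact Or.inl (hRm.snoc (hm ▸ hadj) (Set.mem_Icc.mpr (by omega)))
      by_cases h0 : u = a0
      · have hga0 : gInf.Adj a0 u' := h0 ▸ hga
        have hne : u' ≠ a0 + 2 ^ (j+1) := by
          rintro rfl; exact hnd (by rw [h0]; exact ht)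
        have hy := nbr_left hdiv hga0 hub'.1 hub'.2 hne
        exact Or.inr ⟨hRm, hLu.snoc hadj (Set.mem_Icc.mpr (by omega))⟩
      · have hy := nbr_interior hd' (by omega) (by omega) hga
        exact Or.inr ⟨hRm, hLu.snoc hadj (Set.mem_Icc.mpr (by omega))⟩

/-- Closure lemma for the component of the midpoint when both halves are split. -/
lemma clM (hdiv : 2 ^ (j+1) ∣ a0)
    (hnl : ¬ RI D (Set.Icc a0 (a0 + 2 ^ j)) a0 (a0 + 2 ^ j))
    (hnr : ¬ RI D (Set.Icc (a0 + 2 ^ j) (a0 + 2 ^ (j+1))) (a0 + 2 ^ j) (a0 + 2 ^ (j+1)))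
    {v : ℕ} (h : RI D (Set.Icc a0 (a0 + 2 ^ (j+1))) (a0 + 2 ^ j) v) :
    RI D (Set.Icc a0 (a0 + 2 ^ j)) (a0 + 2 ^ j) v ∨
      RI D (Set.Icc (a0 + 2 ^ j) (a0 + 2 ^ (j+1))) (a0 + 2 ^ j) v := by
  have hp2 : (2:ℕ) ^ (j+1) = 2 ^ j + 2 ^ j := pow2succ
  have hpos : 0 < (2:ℕ) ^ j := Nat.two_pow_pos j
  have hd' : 2 ^ j ∣ a0 := dvd_trans (pow_dvd_pow 2 (Nat.le_succ j)) hdiv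
  have hdm : 2 ^ j ∣ a0 + 2 ^ j := Nat.dvd_add hd' dvd_rfl
  obtain ⟨w, hw⟩ := h
  suffices H : ∀ u v (w : (gInf.deleteEdges D).Walk u v)
      (_ : ∀ x ∈ w.support, x ∈ Set.Icc a0 (a0 + 2 ^ (j+1))),
      (RI D (Set.Icc a0 (a0 + 2 ^ j)) (a0 + 2 ^ j) u ∨
        RI D (Set.Icc (a0 + 2 ^ j) (a0 + 2 ^ (j+1))) (a0 + 2 ^ j) u) →
      (RI D (Set.Icc a0 (a0 + 2 ^ j)) (a0 + 2 ^ j) v ∨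
        RI D (Set.Icc (a0 + 2 ^ j) (a0 + 2 ^ (j+1))) (a0 + 2 ^ j) v) by
    exact H _ v w hw (Or.inl (RI.refl (Set.mem_Icc.mpr (by omega))))
  intro u v w
  induction w with
  | nil => exact fun _ h => h
  | @cons u u' v hadj p ih =>
    intro hw hK
    have hga := (SimpleGraph.deleteEdges_adj.mp hadj).1
    have hu : u ∈ Set.Icc a0 (a0 + 2 ^ (j+1)) := hw u (by simp)
    have hu' : u' ∈ Set.Icc a0 (a0 + 2 ^ (j+1)) := hw u' (by simp)
    have hub := Set.mem_Icc.mp hu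
    have hub' := Set.mem_Icc.mp hu'
    have hw' : ∀ x ∈ p.support, x ∈ Set.Icc a0 (a0 + 2 ^ (j+1)) := by
      intro x hx; exact hw x (by simp [hx])
    refine ih hw' ?_
    have hmidcase : u = a0 + 2 ^ j →
        (RI D (Set.Icc a0 (a0 + 2 ^ j)) (a0 + 2 ^ j) u' ∨
          RI D (Set.Icc (a0 + 2 ^ j) (a0 + 2 ^ (j+1))) (a0 + 2 ^ j) u') := by
      intro hm
      have hgam : gInf.Adj (a0 + 2 ^ j) u' := hm ▸ hga
      rcases nbr_mid hdiv hgam with hy | hy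
      · exact Or.inl ((RB.edgeH (hm ▸ hadj) (Set.mem_Icc.mpr (by omega))
          (Set.mem_Icc.mpr (by omega))).ri)
      · exact Or.inr ((RB.edgeH (hm ▸ hadj) (Set.mem_Icc.mpr (by omega))
          (Set.mem_Icc.mpr (by omega))).ri)
    rcases hK with hL | hR
    · have hul := Set.mem_Icc.mp hL.mem_right
      by_cases hm : u = a0 + 2 ^ j
      · exact hmidcase hm
      by_cases h0 : u = a0
      · exact absurd (h0 ▸ hL).symm hnl
      · have hy := nbr_interior hd' (by omega) (by omega) hga
        exact Or.inl (hL.snoc hadj (Set.mem_Icc.mpr (by omega)))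
    · have hur := Set.mem_Icc.mp hR.mem_right
      by_cases hm : u = a0 + 2 ^ j
      · exact hmidcase hm
      by_cases h1 : u = a0 + 2 ^ (j+1)
      · exact absurd (h1 ▸ hR) hnr
      · have hy : a0 + 2 ^ j ≤ u' ∧ u' ≤ a0 + 2 ^ j + 2 ^ j := by
          have := nbr_interior hdm (j := j) (by omega) (by omega) hga
          omega
        exact Or.inr (hR.snoc hadj (Set.mem_Icc.mpr (by omega)))

end Closure


section Counting

/-- The edges of `gInf` lying inside the interval `[a0, a0 + 2^j]`. -/
def ET (j a0 : ℕ) : Set (Sym2 ℕ) :=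
  {e | e ∈ gInf.edgeSet ∧ ∀ v ∈ e, v ∈ Set.Icc a0 (a0 + 2 ^ j)}

variable {D : Set (Sym2 ℕ)} {j a0 : ℕ}

lemma topEdge_mem (hdiv : 2 ^ j ∣ a0) : s(a0, a0 + 2 ^ j) ∈ ET j a0 := by
  constructor
  · exact gInf_adj_step j hdiv
  · intro v hv
    rcases Sym2.mem_iff.mp hv with rfl | rfl <;> simp [Set.mem_Icc]

lemma ET_left_subset : ET j a0 ⊆ ET (j+1) a0 := by
  rintro e ⟨he, hv⟩
  refine ⟨he, fun v hvv => ?_⟩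
  have := Set.mem_Icc.mp (hv v hvv)
  have hp2 : (2:ℕ) ^ (j+1) = 2 ^ j + 2 ^ j := pow2succ
  exact Set.mem_Icc.mpr (by omega)

lemma ET_right_subset : ET j (a0 + 2 ^ j) ⊆ ET (j+1) a0 := by
  rintro e ⟨he, hv⟩
  refine ⟨he, fun v hvv => ?_⟩
  have := Set.mem_Icc.mp (hv v hvv)
  have hp2 : (2:ℕ) ^ (j+1) = 2 ^ j + 2 ^ j := pow2succ
  exact Set.mem_Icc.mpr (by omega)

lemma ET_disjoint : Disjoint (ET j a0) (ET j (a0 + 2 ^ j)) := by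
  rw [Set.disjoint_left]
  rintro e ⟨he, hv⟩ ⟨_, hv'⟩
  induction e using Sym2.ind with
  | _ u v =>
    have hadj : gInf.Adj u v := gInf.mem_edgeSet.mp he
    have h1 := Set.mem_Icc.mp (hv u (Sym2.mem_mk_left u v))
    have h2 := Set.mem_Icc.mp (hv' u (Sym2.mem_mk_left u v))
    have h3 := Set.mem_Icc.mp (hv v (Sym2.mem_mk_right u v))
    have h4 := Set.mem_Icc.mp (hv' v (Sym2.mem_mk_right u v))
    have hu : u = a0 + 2 ^ j := by omega
    have hvm : v = a0 + 2 ^ j := by omega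
    exact gInf.ne_of_adj hadj (hu.trans hvm.symm)

lemma top_notmem_left : s(a0, a0 + 2 ^ (j+1)) ∉ ET j a0 := by
  rintro ⟨_, hv⟩
  have := Set.mem_Icc.mp (hv (a0 + 2 ^ (j+1)) (Sym2.mem_mk_right _ _))
  have hp2 : (2:ℕ) ^ (j+1) = 2 ^ j + 2 ^ j := pow2succ
  have := Nat.two_pow_pos j
  omega

lemma top_notmem_right : s(a0, a0 + 2 ^ (j+1)) ∉ ET j (a0 + 2 ^ j) := by
  rintro ⟨_, hv⟩
  have := Set.mem_Icc.mp (hv a0 (Sym2.mem_mk_left _ _))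
  have := Nat.two_pow_pos j
  omega

lemma cnt_add_le (hDfin : D.Finite) :
    (D ∩ ET j a0).ncard + (D ∩ ET j (a0 + 2 ^ j)).ncard ≤ (D ∩ ET (j+1) a0).ncard := by
  have hdisj : Disjoint (D ∩ ET j a0) (D ∩ ET j (a0 + 2 ^ j)) :=
    (ET_disjoint.mono (Set.inter_subset_right) (Set.inter_subset_right))
  have hsub : (D ∩ ET j a0) ∪ (D ∩ ET j (a0 + 2 ^ j)) ⊆ D ∩ ET (j+1) a0 := by
    rintro e (⟨h1, h2⟩ | ⟨h1, h2⟩)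
    exacts [⟨h1, ET_left_subset h2⟩, ⟨h1, ET_right_subset h2⟩]
  calc (D ∩ ET j a0).ncard + (D ∩ ET j (a0 + 2 ^ j)).ncard
      = ((D ∩ ET j a0) ∪ (D ∩ ET j (a0 + 2 ^ j))).ncard :=
        (Set.ncard_union_eq hdisj (hDfin.subset Set.inter_subset_left)
          (hDfin.subset Set.inter_subset_left)).symm
    _ ≤ _ := Set.ncard_le_ncard hsub (hDfin.subset Set.inter_subset_left)

lemma cnt_add_le' (hDfin : D.Finite) (hdiv : 2 ^ (j+1) ∣ a0)
    (ht : s(a0, a0 + 2 ^ (j+1)) ∈ D) :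
    (D ∩ ET j a0).ncard + (D ∩ ET j (a0 + 2 ^ j)).ncard + 1 ≤ (D ∩ ET (j+1) a0).ncard := by
  set A := D ∩ ET j a0
  set B := D ∩ ET j (a0 + 2 ^ j)
  have hdisj : Disjoint A B :=
    (ET_disjoint.mono (Set.inter_subset_right) (Set.inter_subset_right))
  have htn : s(a0, a0 + 2 ^ (j+1)) ∉ A ∪ B := by
    rintro (⟨_, h⟩ | ⟨_, h⟩)
    exacts [top_notmem_left h, top_notmem_right h]
  have hdisj2 : Disjoint (A ∪ B) {s(a0, a0 + 2 ^ (j+1))} := by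
    rw [Set.disjoint_singleton_right]; exact htn
  have hsub : (A ∪ B) ∪ {s(a0, a0 + 2 ^ (j+1))} ⊆ D ∩ ET (j+1) a0 := by
    rintro e ((⟨h1, h2⟩ | ⟨h1, h2⟩) | he)
    · exact ⟨h1, ET_left_subset h2⟩
    · exact ⟨h1, ET_right_subset h2⟩
    · rcases he with rfl
      exact ⟨ht, topEdge_mem hdiv⟩
  have hfA : A.Finite := hDfin.subset Set.inter_subset_left
  have hfB : B.Finite := hDfin.subset Set.inter_subset_left
  calc A.ncard + B.ncard + 1
      = (A ∪ B).ncard + ({s(a0, a0 + 2 ^ (j+1))} : Set (Sym2 ℕ)).ncard := by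
        rw [Set.ncard_union_eq hdisj hfA hfB, Set.ncard_singleton]
    _ = ((A ∪ B) ∪ {s(a0, a0 + 2 ^ (j+1))}).ncard :=
        (Set.ncard_union_eq hdisj2 (hfA.union hfB) (Set.finite_singleton _)).symm
    _ ≤ _ := Set.ncard_le_ncard hsub (hDfin.subset Set.inter_subset_left)

/-- A set of edges separating `a0` from `a0 + 2^j` inside the interval has at least
`j + 1` edges inside the interval. -/
lemma mincut (hDfin : D.Finite) :
    ∀ j a0, 2 ^ j ∣ a0 → ¬ RI D (Set.Icc a0 (a0 + 2 ^ j)) a0 (a0 + 2 ^ j) →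
      j + 1 ≤ (D ∩ ET j a0).ncard := by
  intro j
  induction j with
  | zero =>
    intro a0 hdiv hsep
    have ht : s(a0, a0 + 2 ^ 0) ∈ D := by
      by_contra hc
      exact hsep ((RB.edge (gInf_adj_step 0 hdiv) hc (Set.mem_Icc.mpr (by omega))
        (Set.mem_Icc.mpr (by omega))).ri)
    have hsub : {s(a0, a0 + 2 ^ 0)} ⊆ D ∩ ET 0 a0 :=
      Set.singleton_subset_iff.mpr ⟨ht, topEdge_mem hdiv⟩
    calc 0 + 1 = ({s(a0, a0 + 2 ^ 0)} : Set (Sym2 ℕ)).ncard := (Set.ncard_singleton _).symm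
      _ ≤ _ := Set.ncard_le_ncard hsub (hDfin.subset Set.inter_subset_left)
  | succ j ih =>
    intro a0 hdiv hsep
    have hp2 : (2:ℕ) ^ (j+1) = 2 ^ j + 2 ^ j := pow2succ
    have hpos : 0 < (2:ℕ) ^ j := Nat.two_pow_pos j
    have hd' : 2 ^ j ∣ a0 := dvd_trans (pow_dvd_pow 2 (Nat.le_succ j)) hdiv
    have hdm : 2 ^ j ∣ a0 + 2 ^ j := Nat.dvd_add hd' dvd_rfl
    have ht : s(a0, a0 + 2 ^ (j+1)) ∈ D := by
      by_contra hc
      exact hsep ((RB.edge (gInf_adj_step (j+1) hdiv) hc (Set.mem_Icc.mpr (by omega))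
        (Set.mem_Icc.mpr (by omega))).ri)
    have hsubL : Set.Icc a0 (a0 + 2 ^ j) ⊆ Set.Icc a0 (a0 + 2 ^ (j+1)) := by
      intro x hx; have := Set.mem_Icc.mp hx; exact Set.mem_Icc.mpr (by omega)
    have hsubR : Set.Icc (a0 + 2 ^ j) (a0 + 2 ^ j + 2 ^ j) ⊆ Set.Icc a0 (a0 + 2 ^ (j+1)) := by
      intro x hx; have := Set.mem_Icc.mp hx; exact Set.mem_Icc.mpr (by omega)
    have hkey : ¬ RI D (Set.Icc a0 (a0 + 2 ^ j)) a0 (a0 + 2 ^ j) ∨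
        ¬ RI D (Set.Icc (a0 + 2 ^ j) (a0 + 2 ^ j + 2 ^ j)) (a0 + 2 ^ j) (a0 + 2 ^ j + 2 ^ j) := by
      by_contra hc
      push_neg at hc
      have h := (hc.1.mono hsubL).trans (hc.2.mono hsubR)
      have he : a0 + 2 ^ j + 2 ^ j = a0 + 2 ^ (j+1) := by omega
      rw [he] at h
      exact hsep h
    have hcnt := cnt_add_le' hDfin hdiv ht
    rcases hkey with hk | hk
    · have := ih a0 hd' hk
      omega
    · have h2 : a0 + 2 ^ j + 2 ^ j = a0 + 2 ^ j + 2 ^ j := rfl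
      have := ih (a0 + 2 ^ j) hdm hk
      omega

end Counting


section MainSplit

variable {D : Set (Sym2 ℕ)}

lemma RI.front {s : Set ℕ} {u v : ℕ} (hne : u ≠ v) (h : RI D s u v) :
    ∃ u', (gInf.deleteEdges D).Adj u u' ∧ u' ∈ s ∧ RI D s u' v := by
  obtain ⟨w, hw⟩ := h
  cases w with
  | nil => exact absurd rfl hne
  | cons hadj p =>
    exact ⟨_, hadj, hw _ (by simp), ⟨p, fun x hx => hw x (by simp [hx])⟩⟩

theorem mainsplit (hDfin : D.Finite) : ∀ j a0, 2 ^ j ∣ a0 →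
    ((∀ v ∈ Set.Icc a0 (a0 + 2 ^ j), RI D (Set.Icc a0 (a0 + 2 ^ j)) a0 v) →
      (∀ x ∈ Set.Icc a0 (a0 + 2 ^ j),
          RB D (Set.Icc a0 (a0 + 2 ^ j)) a0 x (j + (D ∩ ET j a0).ncard + 1)) ∧
      (∀ x ∈ Set.Icc a0 (a0 + 2 ^ j),
          RB D (Set.Icc a0 (a0 + 2 ^ j)) (a0 + 2 ^ j) x (j + (D ∩ ET j a0).ncard + 1)) ∧
      RB D (Set.Icc a0 (a0 + 2 ^ j)) a0 (a0 + 2 ^ j) ((D ∩ ET j a0).ncard + 1)) ∧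
    (¬ RI D (Set.Icc a0 (a0 + 2 ^ j)) a0 (a0 + 2 ^ j) →
      (∀ v ∈ Set.Icc a0 (a0 + 2 ^ j),
          RI D (Set.Icc a0 (a0 + 2 ^ j)) a0 v ∨ RI D (Set.Icc a0 (a0 + 2 ^ j)) (a0 + 2 ^ j) v) →
      (∀ x, RI D (Set.Icc a0 (a0 + 2 ^ j)) a0 x →
          RB D (Set.Icc a0 (a0 + 2 ^ j)) a0 x (D ∩ ET j a0).ncard) ∧
      (∀ x, RI D (Set.Icc a0 (a0 + 2 ^ j)) (a0 + 2 ^ j) x →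
          RB D (Set.Icc a0 (a0 + 2 ^ j)) (a0 + 2 ^ j) x (D ∩ ET j a0).ncard)) := by
  intro j
  induction j with
  | zero =>
    intro a0 hdiv
    have h20 : (2:ℕ) ^ 0 = 1 := pow_zero 2
    have hmem0 : a0 ∈ Set.Icc a0 (a0 + 2 ^ 0) := Set.mem_Icc.mpr (by omega)
    have hmem1 : a0 + 2 ^ 0 ∈ Set.Icc a0 (a0 + 2 ^ 0) := Set.mem_Icc.mpr (by omega)
    constructor
    · intro hconn
      have hre : RI D (Set.Icc a0 (a0 + 2 ^ 0)) a0 (a0 + 2 ^ 0) := hconn _ hmem1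
      obtain ⟨u', hadj, hu', _⟩ := hre.front (by omega)
      have hne : u' ≠ a0 := fun h => (gInf.deleteEdges D).ne_of_adj hadj h.symm
      have hu'' : u' = a0 + 2 ^ 0 := by
        have := Set.mem_Icc.mp hu'; omega
      have hedge : RB D (Set.Icc a0 (a0 + 2 ^ 0)) a0 (a0 + 2 ^ 0) 1 :=
        RB.edgeH (hu'' ▸ hadj) hmem0 hmem1
      refine ⟨?_, ?_, hedge.mono Set.Subset.rfl (by omega)⟩
      · intro x hx
        have hx' := Set.mem_Icc.mp hx
        rcases (by omega : x = a0 ∨ x = a0 + 2 ^ 0) with rfl | rfl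
        · exact RB.refl hmem0
        · exact hedge.mono Set.Subset.rfl (by omega)
      · intro x hx
        have hx' := Set.mem_Icc.mp hx
        rcases (by omega : x = a0 ∨ x = a0 + 2 ^ 0) with rfl | rfl
        · exact hedge.symm.mono Set.Subset.rfl (by omega)
        · exact RB.refl hmem1
    · intro hsep _
      constructor
      · intro x hx
        have hx' := Set.mem_Icc.mp hx.mem_right
        rcases (by omega : x = a0 ∨ x = a0 + 2 ^ 0) with rfl | rfl
        · exact RB.refl hmem0
        · exact absurd hx hsep
      · intro x hx
        have hx' := Set.mem_Icc.mp hx.mem_right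
        rcases (by omega : x = a0 ∨ x = a0 + 2 ^ 0) with rfl | rfl
        · exact absurd hx.symm hsep
        · exact RB.refl hmem1
  | succ j ih =>
    intro a0 hdiv
    have hp2 : (2:ℕ) ^ (j+1) = 2 ^ j + 2 ^ j := pow2succ
    have hpos : 0 < (2:ℕ) ^ j := Nat.two_pow_pos j
    have hd' : 2 ^ j ∣ a0 := dvd_trans (pow_dvd_pow 2 (Nat.le_succ j)) hdiv
    have hdm : 2 ^ j ∣ a0 + 2 ^ j := Nat.dvd_add hd' dvd_rfl
    have hER : a0 + 2 ^ j + 2 ^ j = a0 + 2 ^ (j+1) := by omega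
    have hsubL : Set.Icc a0 (a0 + 2 ^ j) ⊆ Set.Icc a0 (a0 + 2 ^ (j+1)) := by
      intro x hx; have := Set.mem_Icc.mp hx; exact Set.mem_Icc.mpr (by omega)
    have hsubR : Set.Icc (a0 + 2 ^ j) (a0 + 2 ^ (j+1)) ⊆ Set.Icc a0 (a0 + 2 ^ (j+1)) := by
      intro x hx; have := Set.mem_Icc.mp hx; exact Set.mem_Icc.mpr (by omega)
    have hc1 := cnt_add_le (D := D) (j := j) (a0 := a0) hDfin
    have ihL := ih a0 hd'
    have ihR := ih (a0 + 2 ^ j) hdm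
    rw [hER] at ihR
    have hmemT0 : a0 ∈ Set.Icc a0 (a0 + 2 ^ (j+1)) := Set.mem_Icc.mpr (by omega)
    have hmemT1 : a0 + 2 ^ (j+1) ∈ Set.Icc a0 (a0 + 2 ^ (j+1)) := Set.mem_Icc.mpr (by omega)
    have hmemTm : a0 + 2 ^ j ∈ Set.Icc a0 (a0 + 2 ^ (j+1)) := Set.mem_Icc.mpr (by omega)
    have hmemL0 : a0 ∈ Set.Icc a0 (a0 + 2 ^ j) := Set.mem_Icc.mpr (by omega)
    have hmemLm : a0 + 2 ^ j ∈ Set.Icc a0 (a0 + 2 ^ j) := Set.mem_Icc.mpr (by omega)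
    have hmemRm : a0 + 2 ^ j ∈ Set.Icc (a0 + 2 ^ j) (a0 + 2 ^ (j+1)) := Set.mem_Icc.mpr (by omega)
    have hmemR1 : a0 + 2 ^ (j+1) ∈ Set.Icc (a0 + 2 ^ j) (a0 + 2 ^ (j+1)) :=
      Set.mem_Icc.mpr (by omega)
    -- exit lemma specialized to the right half
    have hexitR : ∀ v ∈ Set.Icc (a0 + 2 ^ j) (a0 + 2 ^ (j+1)), ∀ {z : ℕ}
        (_ : (gInf.deleteEdges D).Walk v z),
        RI D (Set.Icc (a0 + 2 ^ j) (a0 + 2 ^ (j+1))) v z ∨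
          RI D (Set.Icc (a0 + 2 ^ j) (a0 + 2 ^ (j+1))) v (a0 + 2 ^ j) ∨
          RI D (Set.Icc (a0 + 2 ^ j) (a0 + 2 ^ (j+1))) v (a0 + 2 ^ (j+1)) := by
      intro v hv z w
      have hv' : v ∈ Set.Icc (a0 + 2 ^ j) (a0 + 2 ^ j + 2 ^ j) := by rw [hER]; exact hv
      have h := exit hdm w hv'
      rw [hER] at h
      exact h
    constructor
    · -- MAIN
      intro hconn
      have hcovL : ∀ v ∈ Set.Icc a0 (a0 + 2 ^ j),
          RI D (Set.Icc a0 (a0 + 2 ^ j)) v a0 ∨ RI D (Set.Icc a0 (a0 + 2 ^ j)) v (a0 + 2 ^ j) := by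
        intro v hv
        obtain ⟨w, hw⟩ := (hconn v (hsubL hv)).symm
        rcases exit hd' w hv with h | h | h
        exacts [Or.inl h, Or.inl h, Or.inr h]
      have hcovR : ∀ v ∈ Set.Icc (a0 + 2 ^ j) (a0 + 2 ^ (j+1)),
          RI D (Set.Icc (a0 + 2 ^ j) (a0 + 2 ^ (j+1))) v (a0 + 2 ^ j) ∨
            RI D (Set.Icc (a0 + 2 ^ j) (a0 + 2 ^ (j+1))) v (a0 + 2 ^ (j+1)) := by
        intro v hv
        obtain ⟨w, hw⟩ := (hconn v (hsubR hv)).symm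
        rcases hexitR v hv w with h | h | h
        · have := Set.mem_Icc.mp h.mem_right; omega
        exacts [Or.inl h, Or.inr h]
      by_cases hPL : RI D (Set.Icc a0 (a0 + 2 ^ j)) a0 (a0 + 2 ^ j)
      · by_cases hPR : RI D (Set.Icc (a0 + 2 ^ j) (a0 + 2 ^ (j+1))) (a0 + 2 ^ j) (a0 + 2 ^ (j+1))
        · -- both halves connected
          have hconnL : ∀ v ∈ Set.Icc a0 (a0 + 2 ^ j), RI D (Set.Icc a0 (a0 + 2 ^ j)) a0 v :=
            fun v hv => ((hcovL v hv).elim (fun h => h.symm) (fun h => hPL.trans h.symm))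
          have hconnR : ∀ v ∈ Set.Icc (a0 + 2 ^ j) (a0 + 2 ^ (j+1)),
              RI D (Set.Icc (a0 + 2 ^ j) (a0 + 2 ^ (j+1))) (a0 + 2 ^ j) v :=
            fun v hv => ((hcovR v hv).elim (fun h => h.symm) (fun h => hPR.trans h.symm))
          obtain ⟨hM1L, hM2L, hM3L⟩ := ihL.1 hconnL
          obtain ⟨hM1R, hM2R, hM3R⟩ := ihR.1 hconnR
          have hM3T : RB D (Set.Icc a0 (a0 + 2 ^ (j+1))) a0 (a0 + 2 ^ (j+1))
              ((D ∩ ET (j+1) a0).ncard + 1) := by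
            by_cases ht : s(a0, a0 + 2 ^ (j+1)) ∈ D
            · have hcnt := cnt_add_le' hDfin hdiv ht
              exact ((hM3L.mono hsubL le_rfl).trans (hM3R.mono hsubR le_rfl)).mono
                Set.Subset.rfl (by omega)
            · exact (RB.edge (gInf_adj_step (j+1) hdiv) ht hmemT0 hmemT1).mono
                Set.Subset.rfl (by omega)
          refine ⟨?_, ?_, hM3T⟩
          · intro x hx
            have hx' := Set.mem_Icc.mp hx
            by_cases hxL : x ≤ a0 + 2 ^ j
            · exact (hM1L x (Set.mem_Icc.mpr (by omega))).mono hsubL (by omega)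
            · exact ((hM3L.mono hsubL le_rfl).trans
                ((hM1R x (Set.mem_Icc.mpr (by omega))).mono hsubR le_rfl)).mono
                Set.Subset.rfl (by omega)
          · intro x hx
            have hx' := Set.mem_Icc.mp hx
            by_cases hxL : x ≤ a0 + 2 ^ j
            · exact ((hM3R.symm.mono hsubR le_rfl).trans
                ((hM2L x (Set.mem_Icc.mpr (by omega))).mono hsubL le_rfl)).mono
                Set.Subset.rfl (by omega)
            · exact (hM2R x (Set.mem_Icc.mpr (by omega))).mono hsubR (by omega)
        · -- left connected, right split
          have ht : s(a0, a0 + 2 ^ (j+1)) ∉ D := by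
            intro ht
            have h1 : RI D (Set.Icc a0 (a0 + 2 ^ (j+1))) (a0 + 2 ^ (j+1)) (a0 + 2 ^ j) :=
              (hconn _ hmemT1).symm.trans (hconn _ hmemTm)
            rcases clK1 hdiv ht h1 with h | ⟨h, _⟩ <;> exact hPR h.symm
          have hconnL : ∀ v ∈ Set.Icc a0 (a0 + 2 ^ j), RI D (Set.Icc a0 (a0 + 2 ^ j)) a0 v :=
            fun v hv => ((hcovL v hv).elim (fun h => h.symm) (fun h => hPL.trans h.symm))
          obtain ⟨hM1L, hM2L, hM3L⟩ := ihL.1 hconnL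
          obtain ⟨hS1R, hS2R⟩ := ihR.2 hPR (fun v hv => (hcovR v hv).imp RI.symm RI.symm)
          have eT : RB D (Set.Icc a0 (a0 + 2 ^ (j+1))) a0 (a0 + 2 ^ (j+1)) 1 :=
            RB.edge (gInf_adj_step (j+1) hdiv) ht hmemT0 hmemT1
          refine ⟨?_, ?_, eT.mono Set.Subset.rfl (by omega)⟩
          · intro x hx
            have hx' := Set.mem_Icc.mp hx
            by_cases hxL : x ≤ a0 + 2 ^ j
            · exact (hM1L x (Set.mem_Icc.mpr (by omega))).mono hsubL (by omega)
            · rcases hcovR x (Set.mem_Icc.mpr (by omega)) with h | h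
              · exact ((hM3L.mono hsubL le_rfl).trans
                  ((hS1R x h.symm).mono hsubR le_rfl)).mono Set.Subset.rfl (by omega)
              · exact (eT.trans ((hS2R x h.symm).mono hsubR le_rfl)).mono
                  Set.Subset.rfl (by omega)
          · intro x hx
            have hx' := Set.mem_Icc.mp hx
            by_cases hxL : x ≤ a0 + 2 ^ j
            · exact (eT.symm.trans ((hM1L x (Set.mem_Icc.mpr (by omega))).mono hsubL
                le_rfl)).mono Set.Subset.rfl (by omega)
            · rcases hcovR x (Set.mem_Icc.mpr (by omega)) with h | h
              · exact ((eT.symm.trans (hM3L.mono hsubL le_rfl)).trans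
                  ((hS1R x h.symm).mono hsubR le_rfl)).mono Set.Subset.rfl (by omega)
              · exact ((hS2R x h.symm).mono hsubR le_rfl).mono Set.Subset.rfl (by omega)
      · -- left split
        have ht : s(a0, a0 + 2 ^ (j+1)) ∉ D := by
          intro ht
          rcases clK hdiv ht (hconn _ hmemTm) with h | ⟨h, _⟩ <;> exact hPL h
        have hPR : RI D (Set.Icc (a0 + 2 ^ j) (a0 + 2 ^ (j+1))) (a0 + 2 ^ j)
            (a0 + 2 ^ (j+1)) := by
          by_contra hPR
          rcases clM hdiv hPL hPR (hconn _ hmemTm).symm with h | h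
          · exact hPL h.symm
          · have := Set.mem_Icc.mp h.mem_right; omega
        have hconnR : ∀ v ∈ Set.Icc (a0 + 2 ^ j) (a0 + 2 ^ (j+1)),
            RI D (Set.Icc (a0 + 2 ^ j) (a0 + 2 ^ (j+1))) (a0 + 2 ^ j) v :=
          fun v hv => ((hcovR v hv).elim (fun h => h.symm) (fun h => hPR.trans h.symm))
        obtain ⟨hM1R, hM2R, hM3R⟩ := ihR.1 hconnR
        obtain ⟨hS1L, hS2L⟩ := ihL.2 hPL (fun v hv => (hcovL v hv).imp RI.symm RI.symm)
        have eT : RB D (Set.Icc a0 (a0 + 2 ^ (j+1))) a0 (a0 + 2 ^ (j+1)) 1 :=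
          RB.edge (gInf_adj_step (j+1) hdiv) ht hmemT0 hmemT1
        refine ⟨?_, ?_, eT.mono Set.Subset.rfl (by omega)⟩
        · intro x hx
          have hx' := Set.mem_Icc.mp hx
          by_cases hxL : x ≤ a0 + 2 ^ j
          · rcases hcovL x (Set.mem_Icc.mpr (by omega)) with h | h
            · exact ((hS1L x h.symm).mono hsubL le_rfl).mono Set.Subset.rfl (by omega)
            · exact ((eT.trans (hM3R.symm.mono hsubR le_rfl)).trans
                ((hS2L x h.symm).mono hsubL le_rfl)).mono Set.Subset.rfl (by omega)
          · exact (eT.trans ((hM2R x (Set.mem_Icc.mpr (by omega))).mono hsubR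
              le_rfl)).mono Set.Subset.rfl (by omega)
        · intro x hx
          have hx' := Set.mem_Icc.mp hx
          by_cases hxL : x ≤ a0 + 2 ^ j
          · rcases hcovL x (Set.mem_Icc.mpr (by omega)) with h | h
            · exact (eT.symm.trans ((hS1L x h.symm).mono hsubL le_rfl)).mono
                Set.Subset.rfl (by omega)
            · exact ((hM3R.symm.mono hsubR le_rfl).trans
                ((hS2L x h.symm).mono hsubL le_rfl)).mono Set.Subset.rfl (by omega)
          · exact (hM2R x (Set.mem_Icc.mpr (by omega))).mono hsubR (by omega)
    · -- SPLIT
      intro hsep hcov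
      have ht : s(a0, a0 + 2 ^ (j+1)) ∈ D := by
        by_contra ht
        exact hsep (RB.edge (gInf_adj_step (j+1) hdiv) ht hmemT0 hmemT1).ri
      have hcnt := cnt_add_le' hDfin hdiv ht
      by_cases hCm : RI D (Set.Icc a0 (a0 + 2 ^ (j+1))) a0 (a0 + 2 ^ j)
      · -- midpoint on the a0-side
        have hPL' : RI D (Set.Icc a0 (a0 + 2 ^ j)) a0 (a0 + 2 ^ j) := by
          rcases clK hdiv ht hCm with h | ⟨h, _⟩ <;> exact h
        have hnPR : ¬ RI D (Set.Icc (a0 + 2 ^ j) (a0 + 2 ^ (j+1))) (a0 + 2 ^ j)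
            (a0 + 2 ^ (j+1)) :=
          fun h => hsep ((hPL'.mono hsubL).trans (h.mono hsubR))
        have hcovR' : ∀ v ∈ Set.Icc (a0 + 2 ^ j) (a0 + 2 ^ (j+1)),
            RI D (Set.Icc (a0 + 2 ^ j) (a0 + 2 ^ (j+1))) (a0 + 2 ^ j) v ∨
              RI D (Set.Icc (a0 + 2 ^ j) (a0 + 2 ^ (j+1))) (a0 + 2 ^ (j+1)) v := by
          intro v hv
          have hv' := Set.mem_Icc.mp hv
          rcases hcov v (hsubR hv) with h | h
          · rcases clK hdiv ht h with hh | ⟨_, hh⟩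
            · have := Set.mem_Icc.mp hh.mem_right
              have hvm : v = a0 + 2 ^ j := by omega
              rw [hvm]; exact Or.inl (RI.refl hmemRm)
            · exact Or.inl hh
          · rcases clK1 hdiv ht h with hh | ⟨hh, _⟩
            · exact Or.inr hh
            · exact absurd ((hPL'.mono hsubL).trans (hh.symm.mono hsubR)) hsep
        obtain ⟨hS1R, hS2R⟩ := ihR.2 hnPR hcovR'
        have hconnL : ∀ v ∈ Set.Icc a0 (a0 + 2 ^ j), RI D (Set.Icc a0 (a0 + 2 ^ j)) a0 v := by
          intro v hv
          have hv' := Set.mem_Icc.mp hv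
          rcases hcov v (hsubL hv) with h | h
          · rcases clK hdiv ht h with hh | ⟨hh, hh2⟩
            · exact hh
            · have := Set.mem_Icc.mp hh2.mem_right
              have hvm : v = a0 + 2 ^ j := by omega
              rw [hvm]; exact hPL'
          · rcases clK1 hdiv ht h with hh | ⟨hh, _⟩
            · have := Set.mem_Icc.mp hh.mem_right
              have hvm : v = a0 + 2 ^ j := by omega
              exact absurd ((hPL'.mono hsubL).trans ((hvm ▸ hh).symm.mono hsubR)) hsep
            · exact absurd ((hPL'.mono hsubL).trans (hh.symm.mono hsubR)) hsep
        obtain ⟨hM1L, hM2L, hM3L⟩ := ihL.1 hconnL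
        have hnPR' : ¬ RI D (Set.Icc (a0 + 2 ^ j) (a0 + 2 ^ j + 2 ^ j)) (a0 + 2 ^ j)
            (a0 + 2 ^ j + 2 ^ j) := by
          rw [hER]; exact hnPR
        have hmc : j + 1 ≤ (D ∩ ET j (a0 + 2 ^ j)).ncard := mincut hDfin j (a0 + 2 ^ j) hdm hnPR'
        constructor
        · intro x hx
          rcases clK hdiv ht hx with h | ⟨_, h⟩
          · exact ((hM1L x h.mem_right).mono hsubL le_rfl).mono Set.Subset.rfl (by omega)
          · exact ((hM3L.mono hsubL le_rfl).trans ((hS1R x h).mono hsubR le_rfl)).mono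
              Set.Subset.rfl (by omega)
        · intro x hx
          rcases clK1 hdiv ht hx with h | ⟨h, _⟩
          · exact ((hS2R x h).mono hsubR le_rfl).mono Set.Subset.rfl (by omega)
          · exact absurd ((hPL'.mono hsubL).trans (h.symm.mono hsubR)) hsep
      · -- midpoint on the a1-side
        have hCm' : RI D (Set.Icc a0 (a0 + 2 ^ (j+1))) (a0 + 2 ^ (j+1)) (a0 + 2 ^ j) := by
          rcases hcov _ hmemTm with h | h
          · exact absurd h hCm
          · exact h
        have hPR'' : RI D (Set.Icc (a0 + 2 ^ j) (a0 + 2 ^ (j+1))) (a0 + 2 ^ j)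
            (a0 + 2 ^ (j+1)) := by
          rcases clK1 hdiv ht hCm' with h | ⟨h, _⟩ <;> exact h.symm
        have hnPL : ¬ RI D (Set.Icc a0 (a0 + 2 ^ j)) a0 (a0 + 2 ^ j) :=
          fun h => hCm (h.mono hsubL)
        have hcovL' : ∀ v ∈ Set.Icc a0 (a0 + 2 ^ j),
            RI D (Set.Icc a0 (a0 + 2 ^ j)) a0 v ∨
              RI D (Set.Icc a0 (a0 + 2 ^ j)) (a0 + 2 ^ j) v := by
          intro v hv
          have hv' := Set.mem_Icc.mp hv
          rcases hcov v (hsubL hv) with h | h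
          · rcases clK hdiv ht h with hh | ⟨hh, _⟩
            · exact Or.inl hh
            · exact absurd hh hnPL
          · rcases clK1 hdiv ht h with hh | ⟨_, hh⟩
            · have := Set.mem_Icc.mp hh.mem_right
              have hvm : v = a0 + 2 ^ j := by omega
              rw [hvm]; exact Or.inr (RI.refl hmemLm)
            · exact Or.inr hh
        obtain ⟨hS1L, hS2L⟩ := ihL.2 hnPL hcovL'
        have hconnR : ∀ v ∈ Set.Icc (a0 + 2 ^ j) (a0 + 2 ^ (j+1)),
            RI D (Set.Icc (a0 + 2 ^ j) (a0 + 2 ^ (j+1))) (a0 + 2 ^ j) v := by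
          intro v hv
          have hv' := Set.mem_Icc.mp hv
          rcases hcov v (hsubR hv) with h | h
          · rcases clK hdiv ht h with hh | ⟨hh, _⟩
            · have := Set.mem_Icc.mp hh.mem_right
              have hvm : v = a0 + 2 ^ j := by omega
              rw [hvm]; exact RI.refl hmemRm
            · exact absurd hh hnPL
          · rcases clK1 hdiv ht h with hh | ⟨_, hh⟩
            · exact hPR''.trans hh
            · have := Set.mem_Icc.mp hh.mem_right
              have := Set.mem_Icc.mp (hv)
              have hvm : v = a0 + 2 ^ j := by
                have := Set.mem_Icc.mp hh.mem_right; omega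
              rw [hvm]; exact RI.refl hmemRm
        obtain ⟨hM1R, hM2R, hM3R⟩ := ihR.1 hconnR
        have hmc : j + 1 ≤ (D ∩ ET j a0).ncard := mincut hDfin j a0 hd' hnPL
        constructor
        · intro x hx
          rcases clK hdiv ht hx with h | ⟨h, _⟩
          · exact ((hS1L x h).mono hsubL le_rfl).mono Set.Subset.rfl (by omega)
          · exact absurd h hnPL
        · intro x hx
          rcases clK1 hdiv ht hx with h | ⟨h, hh⟩
          · exact ((hM2R x h.mem_right).mono hsubR le_rfl).mono Set.Subset.rfl (by omega)
          · exact ((hM3R.symm.mono hsubR le_rfl).trans ((hS2L x hh).mono hsubL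
              le_rfl)).mono Set.Subset.rfl (by omega)

end MainSplit


section Transfer

lemma frac_iff {q a b : ℕ} (hb : b ≤ 2 ^ q) :
    fracAdjAux q a b ↔ ∃ l, 2 ^ l ∣ a ∧ b = a + 2 ^ l := by
  constructor
  · rintro ⟨i, hi, hdvd, rfl⟩
    exact ⟨q - i, hdvd, rfl⟩
  · rintro ⟨l, hdvd, rfl⟩
    have h0 : 0 < (2:ℕ) ^ l := Nat.two_pow_pos l
    have h1 : (2:ℕ) ^ l ≤ 2 ^ q := by omega
    have hl : l ≤ q := pow_le_exp h1
    refine ⟨q - l, by omega, ?_⟩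
    rw [show q - (q - l) = l by omega]
    exact ⟨hdvd, rfl⟩

lemma tf_adj_iff {q : ℕ} {a b : Fin (2 ^ q + 1)} :
    (TFractal q).Adj a b ↔ gInf.Adj a.val b.val := by
  have ha : (a : ℕ) ≤ 2 ^ q := by omega
  have hb : (b : ℕ) ≤ 2 ^ q := by omega
  show (fracAdjAux q a.val b.val ∨ fracAdjAux q b.val a.val) ↔ _
  rw [frac_iff hb, frac_iff ha]
  rfl

variable {q : ℕ} {D : Set (Sym2 (Fin (2 ^ q + 1)))}

lemma mem_image_iff {a b : Fin (2 ^ q + 1)} :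
    s(a.val, b.val) ∈ Sym2.map Fin.val '' D ↔ s(a, b) ∈ D := by
  constructor
  · rintro ⟨e, he, heq⟩
    rw [show s((a:ℕ), (b:ℕ)) = Sym2.map Fin.val s(a, b) from (Sym2.map_pair_eq _ _ _).symm]
      at heq
    rwa [← Sym2.map.injective Fin.val_injective heq]
  · intro h
    exact ⟨s(a, b), h, Sym2.map_pair_eq _ _ _⟩

/-- Transfer a walk in the `ℕ`-graph staying in `[0, 2^q]` down to the `TFractal`. -/
lemma walkDown :
    ∀ {u v : ℕ} (w : (gInf.deleteEdges (Sym2.map Fin.val '' D)).Walk u v),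
      (∀ x ∈ w.support, x ∈ Set.Icc 0 (0 + 2 ^ q)) → ∀ (hu : u < 2 ^ q + 1)
        (hv : v < 2 ^ q + 1),
      ∃ w' : ((TFractal q).deleteEdges D).Walk ⟨u, hu⟩ ⟨v, hv⟩, w'.length = w.length := by
  intro u v w
  induction w with
  | nil => exact fun _ hu hv => ⟨.nil, rfl⟩
  | @cons u u' v hadj p ih =>
    intro hs hu hv
    have hu' : u' < 2 ^ q + 1 := by
      have := Set.mem_Icc.mp (hs u' (by simp)); omega
    have hga := (SimpleGraph.deleteEdges_adj.mp hadj).1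
    have hnd := (SimpleGraph.deleteEdges_adj.mp hadj).2
    have hadj' : ((TFractal q).deleteEdges D).Adj ⟨u, hu⟩ ⟨u', hu'⟩ := by
      rw [SimpleGraph.deleteEdges_adj]
      refine ⟨tf_adj_iff.mpr hga, fun hc => hnd ?_⟩
      exact mem_image_iff.mpr hc
    obtain ⟨w', hw'⟩ := ih (fun x hx => hs x (by simp [hx])) hu' hv
    exact ⟨.cons hadj' w', by simp [hw']⟩

/-- Transfer a walk in the `TFractal` up to the `ℕ`-graph. -/
lemma walkUp {u v : Fin (2 ^ q + 1)} (w : ((TFractal q).deleteEdges D).Walk u v) :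
    ∃ w' : (gInf.deleteEdges (Sym2.map Fin.val '' D)).Walk u.val v.val,
      ∀ x ∈ w'.support, x ∈ Set.Icc 0 (0 + 2 ^ q) := by
  induction w with
  | nil => exact ⟨.nil, by simp [Set.mem_Icc]; omega⟩
  | @cons u u' v hadj p ih =>
    have hga := (SimpleGraph.deleteEdges_adj.mp hadj).1
    have hnd := (SimpleGraph.deleteEdges_adj.mp hadj).2
    have hadj' : (gInf.deleteEdges (Sym2.map Fin.val '' D)).Adj u.val u'.val := by
      rw [SimpleGraph.deleteEdges_adj]
      exact ⟨tf_adj_iff.mp hga, fun hc => hnd (mem_image_iff.mp hc)⟩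
    obtain ⟨w', hw'⟩ := ih
    refine ⟨.cons hadj' w', ?_⟩
    intro x hx
    simp only [SimpleGraph.Walk.support_cons, List.mem_cons] at hx
    rcases hx with rfl | hx
    · simp [Set.mem_Icc]; omega
    · exact hw' x hx

end Transfer

end TFHelp

/-- if `△_q − D` is connected, then every vertex `x` satisfies
`dist_{△_q − D}(σ, x) ≤ q + |D| + 1`. -/
theorem tfractal_connected_distance_bound (q : ℕ) (D : Set (Sym2 (Fin (2 ^ q + 1))))
    (hD : D ⊆ (TFractal q).edgeSet)
    (hconn : ((TFractal q).deleteEdges D).Connected) :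
    ∀ x : Fin (2 ^ q + 1),
      ((TFractal q).deleteEdges D).dist (sigV q) x ≤ q + D.ncard + 1 := by
  intro x
  set D' : Set (Sym2 ℕ) := Sym2.map Fin.val '' D with hD'
  have hDfin : D'.Finite := (Set.toFinite D).image _
  have hdiv : 2 ^ q ∣ 0 := dvd_zero _
  have hconn' : ∀ v ∈ Set.Icc 0 (0 + 2 ^ q), TFHelp.RI D' (Set.Icc 0 (0 + 2 ^ q)) 0 v := by
    intro v hv
    have hvlt : v < 2 ^ q + 1 := by have := Set.mem_Icc.mp hv; omega
    obtain ⟨w⟩ := hconn.preconnected (sigV q) ⟨v, hvlt⟩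
    obtain ⟨w', hw'⟩ := TFHelp.walkUp w
    exact ⟨w', hw'⟩
  obtain ⟨M1, -, -⟩ := (TFHelp.mainsplit hDfin q 0 hdiv).1 hconn'
  have hx : (x : ℕ) ∈ Set.Icc 0 (0 + 2 ^ q) := Set.mem_Icc.mpr (by omega)
  obtain ⟨w, hsupp, hlen⟩ := M1 x.val hx
  obtain ⟨w', hw'len⟩ := TFHelp.walkDown w hsupp (by omega) x.isLt
  have hdist : ((TFractal q).deleteEdges D).dist (sigV q) x ≤ w'.length := by
    exact SimpleGraph.dist_le w'
  have hcard : (D' ∩ TFHelp.ET q 0).ncard ≤ D.ncard := by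
    have h1 : (D' ∩ TFHelp.ET q 0).ncard ≤ D'.ncard :=
      Set.ncard_le_ncard Set.inter_subset_left hDfin
    have h2 : D'.ncard = D.ncard :=
      Set.ncard_image_of_injective _ (Sym2.map.injective Fin.val_injective)
    omega
  omega
end

section
/- Let D be a set of edges of the q-T-fractal △_q such that △_q − D has exactly two connected components, with σ and τ in different components. Then every vertex x of △_q satisfies min(dist_{△_q − D}(σ, x), dist_{△_q − D}(τ, x)) ≤ q + |D| − 1, where the distance is taken in the component containing x. -/
namespace TFracProof

/-- The fractal graph on the interval `[A, A + 2^k]` of `ℕ`. -/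
def IG (A k : ℕ) : SimpleGraph ℕ where
  Adj a b := (∃ j ≤ k, 2 ^ j ∣ a ∧ b = a + 2 ^ j ∧ A ≤ a ∧ a + 2 ^ j ≤ A + 2 ^ k) ∨
             (∃ j ≤ k, 2 ^ j ∣ b ∧ a = b + 2 ^ j ∧ A ≤ b ∧ b + 2 ^ j ≤ A + 2 ^ k)
  symm := ⟨fun _ _ h => h.symm⟩
  loopless := by
    constructor
    intro a h
    rcases h with ⟨j, _, _, h, _, _⟩ | ⟨j, _, _, h, _, _⟩ <;>
      · have := Nat.two_pow_pos j; omega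

lemma IG_adj_bounds {A k a b : ℕ} (h : (IG A k).Adj a b) :
    A ≤ a ∧ a ≤ A + 2 ^ k ∧ A ≤ b ∧ b ≤ A + 2 ^ k := by
  rcases h with ⟨j, _, _, rfl, h1, h2⟩ | ⟨j, _, _, rfl, h1, h2⟩ <;>
    · have := Nat.two_pow_pos j; omega

lemma IG_left_le {A k : ℕ} : IG A k ≤ IG A (k + 1) := by
  intro a b h
  have hpow : (2:ℕ) ^ (k+1) = 2 ^ k + 2 ^ k := by rw [pow_succ]; ring
  rcases h with ⟨j, hj, h1, h2, h3, h4⟩ | ⟨j, hj, h1, h2, h3, h4⟩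
  · exact Or.inl ⟨j, by omega, h1, h2, h3, by omega⟩
  · exact Or.inr ⟨j, by omega, h1, h2, h3, by omega⟩

lemma IG_right_le {A k : ℕ} : IG (A + 2 ^ k) k ≤ IG A (k + 1) := by
  intro a b h
  have hpow : (2:ℕ) ^ (k+1) = 2 ^ k + 2 ^ k := by rw [pow_succ]; ring
  rcases h with ⟨j, hj, h1, h2, h3, h4⟩ | ⟨j, hj, h1, h2, h3, h4⟩
  · exact Or.inl ⟨j, by omega, h1, h2, by omega, by omega⟩
  · exact Or.inr ⟨j, by omega, h1, h2, by omega, by omega⟩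

lemma IG_top_adj {A k : ℕ} (hA : 2 ^ k ∣ A) : (IG A k).Adj A (A + 2 ^ k) :=
  Or.inl ⟨k, le_refl k, hA, rfl, le_refl A, le_refl _⟩

lemma mult_gap {d x y : ℕ} (hx : d ∣ x) (hy : d ∣ y) (hd : 0 < d) (h : x < y) :
    x + d ≤ y := by
  have h1 : d ∣ y - x := Nat.dvd_sub hy hx
  have h2 : d ≤ y - x := Nat.le_of_dvd (by omega) h1
  omega

private lemma IG_classify_aux {A k a b : ℕ} (hA : 2 ^ (k + 1) ∣ A)
    (h : ∃ j ≤ k + 1, 2 ^ j ∣ a ∧ b = a + 2 ^ j ∧ A ≤ a ∧ a + 2 ^ j ≤ A + 2 ^ (k + 1)) :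
    s(a, b) = s(A, A + 2 ^ (k + 1)) ∨ (IG A k).Adj a b ∨ (IG (A + 2 ^ k) k).Adj a b := by
  obtain ⟨j, hj, hdvd, rfl, h1, h2⟩ := h
  have hpow : (2:ℕ) ^ (k+1) = 2 ^ k + 2 ^ k := by rw [pow_succ]; ring
  rcases Nat.lt_or_ge j (k + 1) with hjk | hjk
  · by_cases hmid : a + 2 ^ j ≤ A + 2 ^ k
    · exact Or.inr (Or.inl (Or.inl ⟨j, by omega, hdvd, rfl, h1, hmid⟩))
    · have hge : A + 2 ^ k ≤ a := by
        by_contra hlt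
        have hd1 : (2:ℕ) ^ j ∣ A + 2 ^ k := by
          refine Nat.dvd_add (dvd_trans ?_ hA) (pow_dvd_pow 2 (by omega))
          exact pow_dvd_pow 2 (by omega)
        have := mult_gap hdvd hd1 (Nat.two_pow_pos j) (by omega)
        omega
      exact Or.inr (Or.inr (Or.inl ⟨j, by omega, hdvd, rfl, hge, by omega⟩))
  · have hjeq : j = k + 1 := by omega
    subst hjeq
    have ha : a = A := by omega
    subst ha
    exact Or.inl rfl

lemma IG_classify {A k a b : ℕ} (hA : 2 ^ (k + 1) ∣ A) (h : (IG A (k + 1)).Adj a b) :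
    s(a, b) = s(A, A + 2 ^ (k + 1)) ∨ (IG A k).Adj a b ∨ (IG (A + 2 ^ k) k).Adj a b := by
  rcases h with h | h
  · exact IG_classify_aux hA h
  · rcases IG_classify_aux hA h with h' | h' | h'
    · exact Or.inl (by rw [Sym2.eq_swap]; exact h')
    · exact Or.inr (Or.inl h'.symm)
    · exact Or.inr (Or.inr h'.symm)

lemma IG_edgeFinite (A k : ℕ) : (IG A k).edgeSet.Finite := by
  have hfin : ((fun p : ℕ × ℕ => s(p.1, p.2)) '' (Set.Icc A (A + 2 ^ k) ×ˢ Set.Icc A (A + 2 ^ k))).Finite :=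
    ((Set.finite_Icc A (A + 2 ^ k)).prod (Set.finite_Icc A (A + 2 ^ k))).image (fun p : ℕ × ℕ => s(p.1, p.2))
  refine Set.Finite.subset hfin ?_
  intro e he
  induction e with
  | _ a b =>
    rw [SimpleGraph.mem_edgeSet] at he
    obtain ⟨h1, h2, h3, h4⟩ := IG_adj_bounds he
    exact ⟨(a, b), ⟨⟨h1, h2⟩, ⟨h3, h4⟩⟩, rfl⟩


variable {V : Type*}

lemma del_mono {G G' : SimpleGraph V} {E : Set (Sym2 V)} (h : G ≤ G') :
    G.deleteEdges E ≤ G'.deleteEdges E := by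
  intro a b hab
  rw [SimpleGraph.deleteEdges_adj] at *
  exact ⟨h hab.1, hab.2⟩

lemma del_anti {G : SimpleGraph V} {E E' : Set (Sym2 V)} (h : E ⊆ E') :
    G.deleteEdges E' ≤ G.deleteEdges E := by
  intro a b hab
  rw [SimpleGraph.deleteEdges_adj] at *
  exact ⟨hab.1, fun hx => hab.2 (h hx)⟩

lemma del_inter_eq (G : SimpleGraph V) (E : Set (Sym2 V)) :
    G.deleteEdges (E ∩ G.edgeSet) = G.deleteEdges E := by
  ext a b
  simp only [SimpleGraph.deleteEdges_adj, Set.mem_inter_iff, SimpleGraph.mem_edgeSet]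
  constructor
  · rintro ⟨h1, h2⟩; exact ⟨h1, fun hE => h2 ⟨hE, h1⟩⟩
  · rintro ⟨h1, h2⟩; exact ⟨h1, fun hE => h2 hE.1⟩

lemma del_mono_inter {G G' : SimpleGraph V} {E : Set (Sym2 V)} (h : G ≤ G') :
    G.deleteEdges (E ∩ G.edgeSet) ≤ G'.deleteEdges E := by
  intro a b hab
  rw [SimpleGraph.deleteEdges_adj] at *
  exact ⟨h hab.1, fun hE => hab.2 ⟨hE, hab.1⟩⟩

lemma reach_eq_of_no_adj {G : SimpleGraph V} (h : ∀ a b, ¬ G.Adj a b) {u v : V}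
    (hr : G.Reachable u v) : u = v := by
  obtain ⟨w⟩ := hr
  cases w with
  | nil => rfl
  | cons h' _ => exact absurd h' (h _ _)


lemma top_not_left {A k : ℕ} : s(A, A + 2 ^ (k + 1)) ∉ (IG A k).edgeSet := by
  intro h
  rw [SimpleGraph.mem_edgeSet] at h
  have := IG_adj_bounds h
  have hpow : (2:ℕ) ^ (k+1) = 2 ^ k + 2 ^ k := by rw [pow_succ]; ring
  have := Nat.two_pow_pos k
  omega

lemma top_not_right {A k : ℕ} : s(A, A + 2 ^ (k + 1)) ∉ (IG (A + 2 ^ k) k).edgeSet := by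
  intro h
  rw [SimpleGraph.mem_edgeSet] at h
  have := IG_adj_bounds h
  have := Nat.two_pow_pos k
  omega

lemma LR_edge_disjoint {A k : ℕ} :
    Disjoint ((IG A k).edgeSet) ((IG (A + 2 ^ k) k).edgeSet) := by
  rw [Set.disjoint_left]
  intro e heL heR
  induction e with
  | _ a b =>
    rw [SimpleGraph.mem_edgeSet] at heL heR
    obtain ⟨l1, l2, l3, l4⟩ := IG_adj_bounds heL
    obtain ⟨r1, r2, r3, r4⟩ := IG_adj_bounds heR
    have hab : a = b := by omega
    exact (IG A k).loopless.irrefl a (hab ▸ heL)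

lemma E_split {A k : ℕ} {E : Set (Sym2 ℕ)} (hA : 2 ^ (k + 1) ∣ A)
    (hE : E ⊆ (IG A (k + 1)).edgeSet) (htop : s(A, A + 2 ^ (k + 1)) ∈ E) :
    E.ncard = 1 + (E ∩ (IG A k).edgeSet).ncard + (E ∩ (IG (A + 2 ^ k) k).edgeSet).ncard := by
  classical
  set T : Sym2 ℕ := s(A, A + 2 ^ (k + 1)) with hT
  have hEfin : E.Finite := (IG_edgeFinite A (k + 1)).subset hE
  have hLfin : (E ∩ (IG A k).edgeSet).Finite := hEfin.subset Set.inter_subset_left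
  have hRfin : (E ∩ (IG (A + 2 ^ k) k).edgeSet).Finite := hEfin.subset Set.inter_subset_left
  have hUnion : E = {T} ∪ ((E ∩ (IG A k).edgeSet) ∪ (E ∩ (IG (A + 2 ^ k) k).edgeSet)) := by
    apply Set.Subset.antisymm
    · intro e he
      have hedge : e ∈ (IG A (k + 1)).edgeSet := hE he
      induction e with
      | _ a b =>
        rw [SimpleGraph.mem_edgeSet] at hedge
        rcases IG_classify hA hedge with h | h | h
        · exact Or.inl (by rw [h]; rfl)
        · exact Or.inr (Or.inl ⟨he, ((IG A k).mem_edgeSet).mpr h⟩)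
        · exact Or.inr (Or.inr ⟨he, ((IG (A + 2 ^ k) k).mem_edgeSet).mpr h⟩)
    · intro e he
      rcases he with he | he | he
      · rw [Set.mem_singleton_iff] at he; rw [he]; exact htop
      · exact he.1
      · exact he.1
  have hdisj1 : Disjoint ({T} : Set (Sym2 ℕ))
      ((E ∩ (IG A k).edgeSet) ∪ (E ∩ (IG (A + 2 ^ k) k).edgeSet)) := by
    rw [Set.disjoint_left]
    rintro e he (h | h)
    · rw [Set.mem_singleton_iff] at he; subst he; exact top_not_left h.2
    · rw [Set.mem_singleton_iff] at he; subst he; exact top_not_right h.2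
  have hdisj2 : Disjoint (E ∩ (IG A k).edgeSet) (E ∩ (IG (A + 2 ^ k) k).edgeSet) :=
    Disjoint.mono Set.inter_subset_right Set.inter_subset_right LR_edge_disjoint
  nth_rewrite 1 [hUnion]
  rw [Set.ncard_union_eq hdisj1 (Set.finite_singleton T) (hLfin.union hRfin),
    Set.ncard_union_eq hdisj2 hLfin hRfin, Set.ncard_singleton]
  ring


/-- The remaining graph: fractal on `[A, A+2^k]` minus the deleted edges `E`. -/
abbrev HG (A k : ℕ) (E : Set (Sym2 ℕ)) : SimpleGraph ℕ := (IG A k).deleteEdges E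

lemma HG_inter (A k : ℕ) (E : Set (Sym2 ℕ)) :
    HG A k (E ∩ (IG A k).edgeSet) = HG A k E :=
  del_inter_eq _ _

lemma trimL {A k : ℕ} {E : Set (Sym2 ℕ)} (hA : 2 ^ (k + 1) ∣ A)
    (htop : s(A, A + 2 ^ (k + 1)) ∈ E) :
    ∀ {y t : ℕ} (_ : (HG A (k + 1) E).Walk y t), t ≤ A + 2 ^ k →
      (y ≤ A + 2 ^ k → (HG A k E).Reachable y t) ∧
      (A + 2 ^ k ≤ y → (HG A k E).Reachable (A + 2 ^ k) t) := by
  intro y t w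
  induction w with
  | nil =>
    intro ht
    refine ⟨fun _ => SimpleGraph.Reachable.refl _, fun hy => ?_⟩
    rename_i u
    rw [show u = A + 2 ^ k by omega]
  | @cons a b c hab w ih =>
    intro ht
    rw [SimpleGraph.deleteEdges_adj] at hab
    have ihh := ih ht
    rcases IG_classify hA hab.1 with htopEq | hL | hR
    · exact absurd (htopEq.symm ▸ htop) hab.2
    · obtain ⟨ha1, ha2, hb1, hb2⟩ := IG_adj_bounds hL
      have hAdj : (HG A k E).Adj a b := by
        rw [SimpleGraph.deleteEdges_adj]; exact ⟨hL, hab.2⟩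
      refine ⟨fun _ => hAdj.reachable.trans (ihh.1 hb2), fun hy => ?_⟩
      rw [show A + 2 ^ k = a by omega]
      exact hAdj.reachable.trans (ihh.1 hb2)
    · obtain ⟨ha1, ha2, hb1, hb2⟩ := IG_adj_bounds hR
      refine ⟨fun hy => ?_, fun _ => ihh.2 hb1⟩
      rw [show a = A + 2 ^ k by omega]
      exact ihh.2 hb1

lemma trimR {A k : ℕ} {E : Set (Sym2 ℕ)} (hA : 2 ^ (k + 1) ∣ A)
    (htop : s(A, A + 2 ^ (k + 1)) ∈ E) :
    ∀ {y t : ℕ} (_ : (HG A (k + 1) E).Walk y t), A + 2 ^ k ≤ t →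
      (A + 2 ^ k ≤ y → (HG (A + 2 ^ k) k E).Reachable y t) ∧
      (y ≤ A + 2 ^ k → (HG (A + 2 ^ k) k E).Reachable (A + 2 ^ k) t) := by
  intro y t w
  induction w with
  | nil =>
    intro ht
    refine ⟨fun _ => SimpleGraph.Reachable.refl _, fun hy => ?_⟩
    rename_i u
    rw [show u = A + 2 ^ k by omega]
  | @cons a b c hab w ih =>
    intro ht
    rw [SimpleGraph.deleteEdges_adj] at hab
    have ihh := ih ht
    rcases IG_classify hA hab.1 with htopEq | hL | hR
    · exact absurd (htopEq.symm ▸ htop) hab.2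
    · obtain ⟨ha1, ha2, hb1, hb2⟩ := IG_adj_bounds hL
      refine ⟨fun hy => ?_, fun _ => ihh.2 hb2⟩
      rw [show a = A + 2 ^ k by omega]
      exact ihh.2 hb2
    · obtain ⟨ha1, ha2, hb1, hb2⟩ := IG_adj_bounds hR
      have hAdj : (HG (A + 2 ^ k) k E).Adj a b := by
        rw [SimpleGraph.deleteEdges_adj]; exact ⟨hR, hab.2⟩
      refine ⟨fun _ => hAdj.reachable.trans (ihh.1 hb1), fun hy => ?_⟩
      have haa : a = A + 2 ^ k := by omega
      subst haa
      exact hAdj.reachable.trans (ihh.1 hb1)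

lemma truncTop {G : SimpleGraph ℕ} {E : Set (Sym2 ℕ)} {p p' : ℕ} :
    ∀ {u v : ℕ} (_ : (G.deleteEdges E).Walk u v),
      (G.deleteEdges (E ∪ {s(p, p')})).Reachable u v ∨
      (G.deleteEdges (E ∪ {s(p, p')})).Reachable p v ∨
      (G.deleteEdges (E ∪ {s(p, p')})).Reachable p' v := by
  intro u v w
  induction w with
  | nil => exact Or.inl (SimpleGraph.Reachable.refl _)
  | @cons a b c hab w ih =>
    rw [SimpleGraph.deleteEdges_adj] at hab
    by_cases hT : s(a, b) = s(p, p')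
    · rw [Sym2.eq_iff] at hT
      rcases hT with ⟨_, rfl⟩ | ⟨_, rfl⟩
      · rcases ih with r | r | r
        · exact Or.inr (Or.inr r)
        · exact Or.inr (Or.inl r)
        · exact Or.inr (Or.inr r)
      · rcases ih with r | r | r
        · exact Or.inr (Or.inl r)
        · exact Or.inr (Or.inl r)
        · exact Or.inr (Or.inr r)
    · have hAdj : (G.deleteEdges (E ∪ {s(p, p')})).Adj a b := by
        rw [SimpleGraph.deleteEdges_adj]
        refine ⟨hab.1, ?_⟩
        rintro (h | h)
        · exact hab.2 h
        · exact hT h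
      rcases ih with r | r | r
      · exact Or.inl (hAdj.reachable.trans r)
      · exact Or.inr (Or.inl r)
      · exact Or.inr (Or.inr r)


lemma HGL_le {A k : ℕ} {E : Set (Sym2 ℕ)} :
    HG A k (E ∩ (IG A k).edgeSet) ≤ HG A (k + 1) E := del_mono_inter IG_left_le

lemma HGR_le {A k : ℕ} {E : Set (Sym2 ℕ)} :
    HG (A + 2 ^ k) k (E ∩ (IG (A + 2 ^ k) k).edgeSet) ≤ HG A (k + 1) E :=
  del_mono_inter IG_right_le

/-- two-components statement -/
def PM (k : ℕ) : Prop := ∀ A E, 2 ^ k ∣ A → E ⊆ (IG A k).edgeSet →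
  ¬ (HG A k E).Reachable A (A + 2 ^ k) →
  (∀ x, A ≤ x → x ≤ A + 2 ^ k →
    (HG A k E).Reachable A x ∨ (HG A k E).Reachable (A + 2 ^ k) x) →
  ∀ x, A ≤ x → x ≤ A + 2 ^ k →
    ∃ z, (z = A ∨ z = A + 2 ^ k) ∧ ∃ w : (HG A k E).Walk z x, w.length + 1 ≤ k + E.ncard

/-- connected: σ-τ path bound -/
def PB (k : ℕ) : Prop := ∀ A E, 2 ^ k ∣ A → E ⊆ (IG A k).edgeSet →
  (∀ x, A ≤ x → x ≤ A + 2 ^ k → (HG A k E).Reachable A x) →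
  ∃ w : (HG A k E).Walk A (A + 2 ^ k), w.length ≤ E.ncard + 1

/-- connected: eccentricity bound from σ -/
def PS (k : ℕ) : Prop := ∀ A E, 2 ^ k ∣ A → E ⊆ (IG A k).edgeSet →
  (∀ x, A ≤ x → x ≤ A + 2 ^ k → (HG A k E).Reachable A x) →
  ∀ x, A ≤ x → x ≤ A + 2 ^ k →
    ∃ w : (HG A k E).Walk A x, w.length ≤ k + E.ncard + 1

/-- connected: eccentricity bound from τ -/
def PT (k : ℕ) : Prop := ∀ A E, 2 ^ k ∣ A → E ⊆ (IG A k).edgeSet →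
  (∀ x, A ≤ x → x ≤ A + 2 ^ k → (HG A k E).Reachable A x) →
  ∀ x, A ≤ x → x ≤ A + 2 ^ k →
    ∃ w : (HG A k E).Walk (A + 2 ^ k) x, w.length ≤ k + E.ncard + 1

lemma IG0_adj {A a b : ℕ} : (IG A 0).Adj a b ↔ (a = A ∧ b = A + 1) ∨ (a = A + 1 ∧ b = A) := by
  constructor
  · rintro (⟨j, hj, _, rfl, h1, h2⟩ | ⟨j, hj, _, rfl, h1, h2⟩) <;>
      · have hj0 : j = 0 := by omega
        subst hj0
        rw [pow_zero] at *
        omega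
  · rintro (⟨rfl, rfl⟩ | ⟨rfl, rfl⟩)
    · exact Or.inl ⟨0, le_refl 0, one_dvd _, by rw [pow_zero], le_refl _, by rw [pow_zero]⟩
    · exact Or.inr ⟨0, le_refl 0, one_dvd _, by rw [pow_zero], le_refl _, by rw [pow_zero]⟩

lemma base_noedge {A : ℕ} {E : Set (Sym2 ℕ)} (htop : s(A, A + 2 ^ 0) ∈ E)
    (hconn : ∀ x, A ≤ x → x ≤ A + 2 ^ 0 → (HG A 0 E).Reachable A x) : False := by
  have h20 : (2:ℕ) ^ 0 = 1 := pow_zero 2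
  have hnoadj : ∀ a b, ¬ (HG A 0 E).Adj a b := by
    intro a b hab
    rw [SimpleGraph.deleteEdges_adj] at hab
    rcases IG0_adj.mp hab.1 with ⟨rfl, rfl⟩ | ⟨rfl, rfl⟩
    · exact hab.2 (by rw [h20] at htop; exact htop)
    · exact hab.2 (by rw [h20] at htop; rw [Sym2.eq_swap]; exact htop)
  have := reach_eq_of_no_adj hnoadj (hconn (A + 2 ^ 0) (by omega) (le_refl _))
  omega

lemma topAdjHG {A k : ℕ} {E : Set (Sym2 ℕ)} (hA : 2 ^ k ∣ A)
    (htop : s(A, A + 2 ^ k) ∉ E) : (HG A k E).Adj A (A + 2 ^ k) := by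
  rw [SimpleGraph.deleteEdges_adj]; exact ⟨IG_top_adj hA, htop⟩

lemma baseM : PM 0 := by
  intro A E hA hE hcut htwo x hx1 hx2
  have h20 : (2:ℕ) ^ 0 = 1 := pow_zero 2
  have htop : s(A, A + 2 ^ 0) ∈ E := by
    by_contra h
    exact hcut (topAdjHG hA h).reachable
  have hfin : E.Finite := (IG_edgeFinite A 0).subset hE
  have hpos : 0 < E.ncard := (Set.ncard_pos hfin).mpr ⟨_, htop⟩
  rcases (show x = A ∨ x = A + 2 ^ 0 by omega) with h | h
  · exact ⟨x, Or.inl h, SimpleGraph.Walk.nil, by simp; omega⟩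
  · exact ⟨x, Or.inr h, SimpleGraph.Walk.nil, by simp; omega⟩

lemma baseB : PB 0 := by
  intro A E hA hE hconn
  by_cases htop : s(A, A + 2 ^ 0) ∈ E
  · exact (base_noedge htop hconn).elim
  · exact ⟨SimpleGraph.Walk.cons (topAdjHG hA htop) SimpleGraph.Walk.nil, by simp⟩

lemma baseS : PS 0 := by
  intro A E hA hE hconn x hx1 hx2
  have h20 : (2:ℕ) ^ 0 = 1 := pow_zero 2
  rcases (show x = A ∨ x = A + 2 ^ 0 by omega) with h | h
  · exact ⟨SimpleGraph.Walk.nil.copy rfl h.symm, by simp⟩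
  · by_cases htop : s(A, A + 2 ^ 0) ∈ E
    · exact (base_noedge htop hconn).elim
    · exact ⟨(SimpleGraph.Walk.cons (topAdjHG hA htop) SimpleGraph.Walk.nil).copy rfl h.symm,
        by simp⟩

lemma baseT : PT 0 := by
  intro A E hA hE hconn x hx1 hx2
  have h20 : (2:ℕ) ^ 0 = 1 := pow_zero 2
  rcases (show x = A + 2 ^ 0 ∨ x = A by omega) with h | h
  · exact ⟨SimpleGraph.Walk.nil.copy rfl h.symm, by simp⟩
  · by_cases htop : s(A, A + 2 ^ 0) ∈ E
    · exact (base_noedge htop hconn).elim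
    · exact ⟨(SimpleGraph.Walk.cons (topAdjHG hA htop).symm SimpleGraph.Walk.nil).copy rfl h.symm,
        by simp⟩


lemma connL_of_top {A k : ℕ} {E : Set (Sym2 ℕ)} (hA : 2 ^ (k + 1) ∣ A)
    (htop : s(A, A + 2 ^ (k + 1)) ∈ E)
    (hconn : ∀ x, A ≤ x → x ≤ A + 2 ^ (k + 1) → (HG A (k + 1) E).Reachable A x) :
    ∀ x, A ≤ x → x ≤ A + 2 ^ k → (HG A k (E ∩ (IG A k).edgeSet)).Reachable A x := by
  intro x hx1 hx2
  have hpow : (2:ℕ) ^ (k + 1) = 2 ^ k + 2 ^ k := by rw [pow_succ]; ring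
  obtain ⟨w⟩ := hconn x hx1 (by omega)
  rw [HG_inter]
  exact (trimL hA htop w hx2).1 (by omega)

lemma connR_of_top {A k : ℕ} {E : Set (Sym2 ℕ)} (hA : 2 ^ (k + 1) ∣ A)
    (htop : s(A, A + 2 ^ (k + 1)) ∈ E)
    (hconn : ∀ x, A ≤ x → x ≤ A + 2 ^ (k + 1) → (HG A (k + 1) E).Reachable A x) :
    ∀ x, A + 2 ^ k ≤ x → x ≤ A + 2 ^ k + 2 ^ k →
      (HG (A + 2 ^ k) k (E ∩ (IG (A + 2 ^ k) k).edgeSet)).Reachable (A + 2 ^ k) x := by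
  intro x hx1 hx2
  have hpow : (2:ℕ) ^ (k + 1) = 2 ^ k + 2 ^ k := by rw [pow_succ]; ring
  obtain ⟨w⟩ := hconn x (by omega) (by omega)
  rw [HG_inter]
  exact (trimR hA htop w hx1).2 (by omega)

lemma stepB {k : ℕ} (ihB : PB k) : PB (k + 1) := by
  intro A E hA hE hconn
  have hpow : (2:ℕ) ^ (k + 1) = 2 ^ k + 2 ^ k := by rw [pow_succ]; ring
  have hAk : 2 ^ k ∣ A := dvd_trans (pow_dvd_pow 2 (by omega)) hA
  have hmk : 2 ^ k ∣ A + 2 ^ k := Nat.dvd_add hAk dvd_rfl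
  by_cases htop : s(A, A + 2 ^ (k + 1)) ∈ E
  · obtain ⟨wL, hwL⟩ := ihB A _ hAk Set.inter_subset_right (connL_of_top hA htop hconn)
    obtain ⟨wR, hwR⟩ := ihB (A + 2 ^ k) _ hmk Set.inter_subset_right
      (connR_of_top hA htop hconn)
    have esplit := E_split hA hE htop
    refine ⟨((wL.mapLe HGL_le).append (wR.mapLe HGR_le)).copy rfl (by omega), ?_⟩
    rw [SimpleGraph.Walk.length_copy, SimpleGraph.Walk.length_append,
      SimpleGraph.Walk.length_map, SimpleGraph.Walk.length_map]
    omega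
  · exact ⟨SimpleGraph.Walk.cons (topAdjHG hA htop) SimpleGraph.Walk.nil, by simp⟩


lemma hint_eq {A k : ℕ} {E : Set (Sym2 ℕ)} {G' : SimpleGraph ℕ}
    (hnot : s(A, A + 2 ^ (k + 1)) ∉ G'.edgeSet) :
    (E ∪ {s(A, A + 2 ^ (k + 1))}) ∩ G'.edgeSet = E ∩ G'.edgeSet := by
  ext e
  simp only [Set.mem_inter_iff, Set.mem_union, Set.mem_singleton_iff]
  constructor
  · rintro ⟨h | h, h2⟩
    · exact ⟨h, h2⟩
    · exact absurd (h ▸ h2) hnot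
  · rintro ⟨h, h2⟩
    exact ⟨Or.inl h, h2⟩

lemma stepS {k : ℕ} (ihB : PB k) (ihS : PS k) (ihT : PT k) (hM : PM (k + 1)) :
    PS (k + 1) := by
  intro A E hA hE hconn x hx1 hx2
  have hpow : (2:ℕ) ^ (k + 1) = 2 ^ k + 2 ^ k := by rw [pow_succ]; ring
  have hAk : 2 ^ k ∣ A := dvd_trans (pow_dvd_pow 2 (by omega)) hA
  have hmk : 2 ^ k ∣ A + 2 ^ k := Nat.dvd_add hAk dvd_rfl
  have hEfin : E.Finite := (IG_edgeFinite _ _).subset hE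
  by_cases htop : s(A, A + 2 ^ (k + 1)) ∈ E
  · have esplit := E_split hA hE htop
    by_cases hxm : x ≤ A + 2 ^ k
    · obtain ⟨w, hw⟩ := ihS A _ hAk Set.inter_subset_right
        (connL_of_top hA htop hconn) x hx1 hxm
      exact ⟨w.mapLe HGL_le, by rw [SimpleGraph.Walk.length_map]; omega⟩
    · obtain ⟨wL, hwL⟩ := ihB A _ hAk Set.inter_subset_right (connL_of_top hA htop hconn)
      obtain ⟨wR, hwR⟩ := ihS (A + 2 ^ k) _ hmk Set.inter_subset_right
        (connR_of_top hA htop hconn) x (by omega) (by omega)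
      refine ⟨(wL.mapLe HGL_le).append (wR.mapLe HGR_le), ?_⟩
      rw [SimpleGraph.Walk.length_append, SimpleGraph.Walk.length_map,
        SimpleGraph.Walk.length_map]
      omega
  · set E' := E ∪ {s(A, A + 2 ^ (k + 1))} with hE'def
    have htop' : s(A, A + 2 ^ (k + 1)) ∈ E' := Or.inr rfl
    have hE' : E' ⊆ (IG A (k + 1)).edgeSet := by
      refine Set.union_subset hE ?_
      intro e he
      rw [Set.mem_singleton_iff] at he
      rw [he]
      exact ((IG A (k + 1)).mem_edgeSet).mpr (IG_top_adj hA)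
    have hpart : ∀ y, A ≤ y → y ≤ A + 2 ^ (k + 1) →
        (HG A (k + 1) E').Reachable A y ∨ (HG A (k + 1) E').Reachable (A + 2 ^ (k + 1)) y := by
      intro y h1 h2
      obtain ⟨w⟩ := hconn y h1 h2
      rcases truncTop w with r | r | r
      · exact Or.inl r
      · exact Or.inl r
      · exact Or.inr r
    have hLle : (E ∩ (IG A k).edgeSet).ncard ≤ E.ncard :=
      Set.ncard_le_ncard Set.inter_subset_left hEfin
    have hRle : (E ∩ (IG (A + 2 ^ k) k).edgeSet).ncard ≤ E.ncard :=
      Set.ncard_le_ncard Set.inter_subset_left hEfin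
    by_cases hAτ : (HG A (k + 1) E').Reachable A (A + 2 ^ (k + 1))
    · have hconn' : ∀ y, A ≤ y → y ≤ A + 2 ^ (k + 1) → (HG A (k + 1) E').Reachable A y :=
        fun y h1 h2 => (hpart y h1 h2).elim id fun h => hAτ.trans h
      by_cases hxm : x ≤ A + 2 ^ k
      · have hcL := connL_of_top hA htop' hconn'
        rw [hint_eq top_not_left] at hcL
        obtain ⟨w, hw⟩ := ihS A _ hAk Set.inter_subset_right hcL x hx1 hxm
        exact ⟨w.mapLe HGL_le, by rw [SimpleGraph.Walk.length_map]; omega⟩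
      · have hcR := connR_of_top hA htop' hconn'
        rw [hint_eq top_not_right] at hcR
        obtain ⟨w, hw⟩ := ihT (A + 2 ^ k) _ hmk Set.inter_subset_right hcR x (by omega) (by omega)
        refine ⟨SimpleGraph.Walk.cons (topAdjHG hA htop)
          ((w.mapLe HGR_le).copy (by omega) rfl), ?_⟩
        rw [SimpleGraph.Walk.length_cons, SimpleGraph.Walk.length_copy,
          SimpleGraph.Walk.length_map]
        omega
    · have hEcard : E'.ncard = E.ncard + 1 := by
        rw [hE'def, Set.union_singleton, Set.ncard_insert_of_notMem htop hEfin]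
      obtain ⟨z, hz, w, hw⟩ := hM A E' hA hE' hAτ hpart x hx1 hx2
      rcases hz with h | h
      · refine ⟨((w.mapLe (del_anti Set.subset_union_left)).copy h rfl), ?_⟩
        rw [SimpleGraph.Walk.length_copy, SimpleGraph.Walk.length_map]
        omega
      · refine ⟨SimpleGraph.Walk.cons (topAdjHG hA htop)
          ((w.mapLe (del_anti Set.subset_union_left)).copy h rfl), ?_⟩
        rw [SimpleGraph.Walk.length_cons, SimpleGraph.Walk.length_copy,
          SimpleGraph.Walk.length_map]
        omega


lemma stepT {k : ℕ} (ihB : PB k) (ihS : PS k) (ihT : PT k) (hM : PM (k + 1)) :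
    PT (k + 1) := by
  intro A E hA hE hconn x hx1 hx2
  have hpow : (2:ℕ) ^ (k + 1) = 2 ^ k + 2 ^ k := by rw [pow_succ]; ring
  have hAk : 2 ^ k ∣ A := dvd_trans (pow_dvd_pow 2 (by omega)) hA
  have hmk : 2 ^ k ∣ A + 2 ^ k := Nat.dvd_add hAk dvd_rfl
  have hEfin : E.Finite := (IG_edgeFinite _ _).subset hE
  by_cases htop : s(A, A + 2 ^ (k + 1)) ∈ E
  · have esplit := E_split hA hE htop
    by_cases hxm : A + 2 ^ k ≤ x
    · obtain ⟨w, hw⟩ := ihT (A + 2 ^ k) _ hmk Set.inter_subset_right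
        (connR_of_top hA htop hconn) x hxm (by omega)
      exact ⟨(w.mapLe HGR_le).copy (by omega) rfl,
        by rw [SimpleGraph.Walk.length_copy, SimpleGraph.Walk.length_map]; omega⟩
    · obtain ⟨wR, hwR⟩ := ihB (A + 2 ^ k) _ hmk Set.inter_subset_right
        (connR_of_top hA htop hconn)
      obtain ⟨wL, hwL⟩ := ihT A _ hAk Set.inter_subset_right
        (connL_of_top hA htop hconn) x hx1 (by omega)
      refine ⟨(((wR.mapLe HGR_le).reverse.copy (by omega) rfl).append (wL.mapLe HGL_le)), ?_⟩
      rw [SimpleGraph.Walk.length_append, SimpleGraph.Walk.length_copy,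
        SimpleGraph.Walk.length_reverse, SimpleGraph.Walk.length_map,
        SimpleGraph.Walk.length_map]
      omega
  · set E' := E ∪ {s(A, A + 2 ^ (k + 1))} with hE'def
    have htop' : s(A, A + 2 ^ (k + 1)) ∈ E' := Or.inr rfl
    have hE' : E' ⊆ (IG A (k + 1)).edgeSet := by
      refine Set.union_subset hE ?_
      intro e he
      rw [Set.mem_singleton_iff] at he
      rw [he]
      exact ((IG A (k + 1)).mem_edgeSet).mpr (IG_top_adj hA)
    have hpart : ∀ y, A ≤ y → y ≤ A + 2 ^ (k + 1) →
        (HG A (k + 1) E').Reachable A y ∨ (HG A (k + 1) E').Reachable (A + 2 ^ (k + 1)) y := by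
      intro y h1 h2
      obtain ⟨w⟩ := hconn y h1 h2
      rcases truncTop w with r | r | r
      · exact Or.inl r
      · exact Or.inl r
      · exact Or.inr r
    have hLle : (E ∩ (IG A k).edgeSet).ncard ≤ E.ncard :=
      Set.ncard_le_ncard Set.inter_subset_left hEfin
    have hRle : (E ∩ (IG (A + 2 ^ k) k).edgeSet).ncard ≤ E.ncard :=
      Set.ncard_le_ncard Set.inter_subset_left hEfin
    by_cases hAτ : (HG A (k + 1) E').Reachable A (A + 2 ^ (k + 1))
    · have hconn' : ∀ y, A ≤ y → y ≤ A + 2 ^ (k + 1) → (HG A (k + 1) E').Reachable A y :=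
        fun y h1 h2 => (hpart y h1 h2).elim id fun h => hAτ.trans h
      by_cases hxm : A + 2 ^ k ≤ x
      · have hcR := connR_of_top hA htop' hconn'
        rw [hint_eq top_not_right] at hcR
        obtain ⟨w, hw⟩ := ihT (A + 2 ^ k) _ hmk Set.inter_subset_right hcR x hxm (by omega)
        exact ⟨(w.mapLe HGR_le).copy (by omega) rfl,
          by rw [SimpleGraph.Walk.length_copy, SimpleGraph.Walk.length_map]; omega⟩
      · have hcL := connL_of_top hA htop' hconn'
        rw [hint_eq top_not_left] at hcL
        obtain ⟨w, hw⟩ := ihS A _ hAk Set.inter_subset_right hcL x hx1 (by omega)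
        refine ⟨SimpleGraph.Walk.cons (topAdjHG hA htop).symm (w.mapLe HGL_le), ?_⟩
        rw [SimpleGraph.Walk.length_cons, SimpleGraph.Walk.length_map]
        omega
    · have hEcard : E'.ncard = E.ncard + 1 := by
        rw [hE'def, Set.union_singleton, Set.ncard_insert_of_notMem htop hEfin]
      obtain ⟨z, hz, w, hw⟩ := hM A E' hA hE' hAτ hpart x hx1 hx2
      rcases hz with h | h
      · refine ⟨SimpleGraph.Walk.cons (topAdjHG hA htop).symm
          ((w.mapLe (del_anti Set.subset_union_left)).copy h rfl), ?_⟩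
        rw [SimpleGraph.Walk.length_cons, SimpleGraph.Walk.length_copy,
          SimpleGraph.Walk.length_map]
        omega
      · refine ⟨((w.mapLe (del_anti Set.subset_union_left)).copy h rfl), ?_⟩
        rw [SimpleGraph.Walk.length_copy, SimpleGraph.Walk.length_map]
        omega


lemma stepM {k : ℕ} (ihM : PM k) (ihB : PB k) (ihS : PS k) (ihT : PT k) : PM (k + 1) := by
  intro A E hA hE hcut htwo x hx1 hx2
  have hpow : (2:ℕ) ^ (k + 1) = 2 ^ k + 2 ^ k := by rw [pow_succ]; ring
  have hAk : 2 ^ k ∣ A := dvd_trans (pow_dvd_pow 2 (by omega)) hA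
  have hmk : 2 ^ k ∣ A + 2 ^ k := Nat.dvd_add hAk dvd_rfl
  have htop : s(A, A + 2 ^ (k + 1)) ∈ E := by
    by_contra h
    exact hcut (topAdjHG hA h).reachable
  have esplit := E_split hA hE htop
  rcases htwo (A + 2 ^ k) (by omega) (by omega) with hσm | hτm
  · -- the midpoint lies on the σ side
    have hcL : ∀ y, A ≤ y → y ≤ A + 2 ^ k →
        (HG A k (E ∩ (IG A k).edgeSet)).Reachable A y := by
      intro y h1 h2
      rcases htwo y (by omega) (by omega) with h | h
      · obtain ⟨w⟩ := h
        rw [HG_inter]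
        exact (trimL hA htop w h2).1 (by omega)
      · exfalso
        obtain ⟨w⟩ := h.symm
        have hr : (HG (A + 2 ^ k) k E).Reachable (A + 2 ^ k) (A + 2 ^ (k + 1)) :=
          (trimR hA htop w (by omega)).2 (by omega)
        exact hcut (hσm.trans (hr.mono (del_mono IG_right_le)))
    by_cases hxm : x ≤ A + 2 ^ k
    · obtain ⟨w, hw⟩ := ihS A _ hAk Set.inter_subset_right hcL x hx1 hxm
      exact ⟨A, Or.inl rfl, w.mapLe HGL_le, by rw [SimpleGraph.Walk.length_map]; omega⟩
    · have hcutR : ¬ (HG (A + 2 ^ k) k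
          (E ∩ (IG (A + 2 ^ k) k).edgeSet)).Reachable (A + 2 ^ k) (A + 2 ^ k + 2 ^ k) := by
        intro h
        rw [HG_inter] at h
        have h' := h.mono (del_mono IG_right_le)
        rw [show A + 2 ^ k + 2 ^ k = A + 2 ^ (k + 1) by omega] at h'
        exact hcut (hσm.trans h')
      have htwoR : ∀ y, A + 2 ^ k ≤ y → y ≤ A + 2 ^ k + 2 ^ k →
          (HG (A + 2 ^ k) k (E ∩ (IG (A + 2 ^ k) k).edgeSet)).Reachable (A + 2 ^ k) y ∨
          (HG (A + 2 ^ k) k (E ∩ (IG (A + 2 ^ k) k).edgeSet)).Reachable (A + 2 ^ k + 2 ^ k) y := by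
        intro y h1 h2
        rcases htwo y (by omega) (by omega) with h | h
        · left
          obtain ⟨w⟩ := h
          rw [HG_inter]
          exact (trimR hA htop w h1).2 (by omega)
        · right
          obtain ⟨w⟩ := h
          rw [HG_inter]
          have hr := (trimR hA htop w h1).1 (by omega)
          rw [show A + 2 ^ k + 2 ^ k = A + 2 ^ (k + 1) by omega]
          exact hr
      obtain ⟨z, hz, w, hw⟩ := ihM (A + 2 ^ k) _ hmk Set.inter_subset_right hcutR htwoR
        x (by omega) (by omega)
      rcases hz with h | h
      · obtain ⟨wl, hwl⟩ := ihB A _ hAk Set.inter_subset_right hcL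
        refine ⟨A, Or.inl rfl,
          (wl.mapLe HGL_le).append (((w.copy h rfl).mapLe HGR_le)), ?_⟩
        rw [SimpleGraph.Walk.length_append, SimpleGraph.Walk.length_map,
          SimpleGraph.Walk.length_map, SimpleGraph.Walk.length_copy]
        omega
      · refine ⟨A + 2 ^ (k + 1), Or.inr rfl,
          ((w.copy h rfl).mapLe HGR_le).copy (by omega) rfl, ?_⟩
        rw [SimpleGraph.Walk.length_copy, SimpleGraph.Walk.length_map,
          SimpleGraph.Walk.length_copy]
        omega
  · -- the midpoint lies on the τ side
    have hcR : ∀ y, A + 2 ^ k ≤ y → y ≤ A + 2 ^ k + 2 ^ k →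
        (HG (A + 2 ^ k) k (E ∩ (IG (A + 2 ^ k) k).edgeSet)).Reachable (A + 2 ^ k + 2 ^ k) y := by
      intro y h1 h2
      rcases htwo y (by omega) (by omega) with h | h
      · exfalso
        obtain ⟨w⟩ := h
        have hr := (trimR hA htop w h1).2 (by omega)
        have hr' := hr.mono (del_mono IG_right_le)
        have hAy : (HG A (k + 1) E).Reachable A y := ⟨w⟩
        exact hcut ((hAy.trans hr'.symm).trans hτm.symm)
      · obtain ⟨w⟩ := h
        rw [HG_inter]
        have hr := (trimR hA htop w h1).1 (by omega)
        rw [show A + 2 ^ k + 2 ^ k = A + 2 ^ (k + 1) by omega]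
        exact hr
    have hcRm : ∀ y, A + 2 ^ k ≤ y → y ≤ A + 2 ^ k + 2 ^ k →
        (HG (A + 2 ^ k) k (E ∩ (IG (A + 2 ^ k) k).edgeSet)).Reachable (A + 2 ^ k) y :=
      fun y h1 h2 => ((hcR (A + 2 ^ k) (le_refl _) (by omega)).symm).trans (hcR y h1 h2)
    by_cases hxm : A + 2 ^ k ≤ x
    · obtain ⟨w, hw⟩ := ihT (A + 2 ^ k) _ hmk Set.inter_subset_right hcRm x hxm (by omega)
      refine ⟨A + 2 ^ (k + 1), Or.inr rfl, (w.mapLe HGR_le).copy (by omega) rfl, ?_⟩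
      rw [SimpleGraph.Walk.length_copy, SimpleGraph.Walk.length_map]
      omega
    · have hcutL : ¬ (HG A k (E ∩ (IG A k).edgeSet)).Reachable A (A + 2 ^ k) := by
        intro h
        rw [HG_inter] at h
        have h' := h.mono (del_mono IG_left_le)
        exact hcut (h'.trans hτm.symm)
      have htwoL : ∀ y, A ≤ y → y ≤ A + 2 ^ k →
          (HG A k (E ∩ (IG A k).edgeSet)).Reachable A y ∨
          (HG A k (E ∩ (IG A k).edgeSet)).Reachable (A + 2 ^ k) y := by
        intro y h1 h2
        rcases htwo y (by omega) (by omega) with h | h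
        · left
          obtain ⟨w⟩ := h
          rw [HG_inter]
          exact (trimL hA htop w h2).1 (by omega)
        · right
          obtain ⟨w⟩ := h
          rw [HG_inter]
          exact (trimL hA htop w h2).2 (by omega)
      obtain ⟨z, hz, w, hw⟩ := ihM A _ hAk Set.inter_subset_right hcutL htwoL x hx1 (by omega)
      rcases hz with h | h
      · exact ⟨A, Or.inl rfl, (w.copy h rfl).mapLe HGL_le,
          by rw [SimpleGraph.Walk.length_map, SimpleGraph.Walk.length_copy]; omega⟩
      · obtain ⟨wr, hwr⟩ := ihB (A + 2 ^ k) _ hmk Set.inter_subset_right hcRm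
        refine ⟨A + 2 ^ (k + 1), Or.inr rfl,
          ((wr.mapLe HGR_le).reverse.copy (by omega) rfl).append
            ((w.copy h rfl).mapLe HGL_le), ?_⟩
        rw [SimpleGraph.Walk.length_append, SimpleGraph.Walk.length_copy,
          SimpleGraph.Walk.length_reverse, SimpleGraph.Walk.length_map,
          SimpleGraph.Walk.length_map, SimpleGraph.Walk.length_copy]
        omega

theorem bigInd (k : ℕ) : PM k ∧ PB k ∧ PS k ∧ PT k := by
  induction k with
  | zero => exact ⟨baseM, baseB, baseS, baseT⟩
  | succ k ih =>
    obtain ⟨hM, hB, hS, hT⟩ := ih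
    have hM' := stepM hM hB hS hT
    exact ⟨hM', stepB hB, stepS hB hS hT hM', stepT hB hS hT hM'⟩


section Transfer

variable {q : ℕ} {D : Set (Sym2 (Fin (2 ^ q + 1)))}

/-- image of the deleted edge set in `ℕ` -/
def Dnat (D : Set (Sym2 (Fin (2 ^ q + 1)))) : Set (Sym2 ℕ) := (Sym2.map Fin.val) '' D

lemma adj_iff {u v : Fin (2 ^ q + 1)} :
    (TFractal q).Adj u v ↔ (IG 0 q).Adj u.val v.val := by
  constructor
  · rintro (⟨i, hi, hdvd, heq⟩ | ⟨i, hi, hdvd, heq⟩)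
    · exact Or.inl ⟨q - i, by omega, hdvd, heq, Nat.zero_le _, by have := v.isLt; omega⟩
    · exact Or.inr ⟨q - i, by omega, hdvd, heq, Nat.zero_le _, by have := u.isLt; omega⟩
  · rintro (⟨j, hj, hdvd, heq, _, hb⟩ | ⟨j, hj, hdvd, heq, _, hb⟩)
    · exact Or.inl ⟨q - j, by omega, by rw [Nat.sub_sub_self hj]; exact hdvd,
        by rw [Nat.sub_sub_self hj]; exact heq⟩
    · exact Or.inr ⟨q - j, by omega, by rw [Nat.sub_sub_self hj]; exact hdvd,
        by rw [Nat.sub_sub_self hj]; exact heq⟩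

lemma mem_Dnat {u v : Fin (2 ^ q + 1)} :
    s(u.val, v.val) ∈ Dnat D ↔ s(u, v) ∈ D := by
  constructor
  · rintro ⟨e, he, heq⟩
    have hinj : Function.Injective (Sym2.map (Fin.val : Fin (2 ^ q + 1) → ℕ)) :=
      Sym2.map.injective Fin.val_injective
    have : e = s(u, v) := by
      apply hinj
      rw [heq, Sym2.map_pair_eq]
    rwa [this] at he
  · intro h
    exact ⟨s(u, v), h, by rw [Sym2.map_pair_eq]⟩

lemma adj_del_iff {u v : Fin (2 ^ q + 1)} :
    ((TFractal q).deleteEdges D).Adj u v ↔ (HG 0 q (Dnat D)).Adj u.val v.val := by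
  rw [SimpleGraph.deleteEdges_adj, SimpleGraph.deleteEdges_adj, adj_iff]
  constructor
  · rintro ⟨h1, h2⟩
    exact ⟨h1, fun hx => h2 (mem_Dnat.mp hx)⟩
  · rintro ⟨h1, h2⟩
    exact ⟨h1, fun hx => h2 (mem_Dnat.mpr hx)⟩

lemma walk_nat_to_fin :
    ∀ {a b : ℕ} (w : (HG 0 q (Dnat D)).Walk a b) (ha : a < 2 ^ q + 1) (hb : b < 2 ^ q + 1),
      ∃ w' : ((TFractal q).deleteEdges D).Walk ⟨a, ha⟩ ⟨b, hb⟩, w'.length ≤ w.length := by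
  intro a b w
  induction w with
  | nil => intro ha hb; exact ⟨SimpleGraph.Walk.nil, le_refl _⟩
  | @cons a c b hab w ih =>
    intro ha hb
    have hab' := hab
    rw [SimpleGraph.deleteEdges_adj] at hab'
    have hc : c < 2 ^ q + 1 := by
      have := IG_adj_bounds hab'.1
      omega
    obtain ⟨w', hw'⟩ := ih hc hb
    have hAdjF : ((TFractal q).deleteEdges D).Adj ⟨a, ha⟩ ⟨c, hc⟩ := adj_del_iff.mpr hab
    exact ⟨SimpleGraph.Walk.cons hAdjF w', by
      rw [SimpleGraph.Walk.length_cons, SimpleGraph.Walk.length_cons]; omega⟩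

lemma reach_fin_to_nat {u v : Fin (2 ^ q + 1)} :
    ((TFractal q).deleteEdges D).Reachable u v → (HG 0 q (Dnat D)).Reachable u.val v.val := by
  intro h
  exact h.map ⟨Fin.val, fun hadj => adj_del_iff.mp hadj⟩

end Transfer

end TFracProof

/-- if `△_q − D` has exactly two connected components, with `σ` and `τ`
in different components, then every vertex `x` satisfies
`min(dist(σ,x), dist(τ,x)) ≤ q + |D| − 1`, the distance being taken in the component
containing `x` (i.e. to whichever of `σ`, `τ` is reachable from `x`). -/
theorem tfractal_two_components_distance_bound (q : ℕ)
    (D : Set (Sym2 (Fin (2 ^ q + 1)))) (hD : D ⊆ (TFractal q).edgeSet)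
    (hcut : ¬ ((TFractal q).deleteEdges D).Reachable (sigV q) (tauV q))
    (htwo : ∀ x : Fin (2 ^ q + 1),
      ((TFractal q).deleteEdges D).Reachable (sigV q) x ∨
        ((TFractal q).deleteEdges D).Reachable (tauV q) x) :
    ∀ x : Fin (2 ^ q + 1), ∃ z : Fin (2 ^ q + 1), (z = sigV q ∨ z = tauV q) ∧
      ((TFractal q).deleteEdges D).Reachable z x ∧
        ((TFractal q).deleteEdges D).dist z x ≤ q + D.ncard - 1 := by
  intro x
  obtain ⟨hM, -, -, -⟩ := TFracProof.bigInd q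
  have hpos : 0 < 2 ^ q := Nat.two_pow_pos q
  have hDsub : TFracProof.Dnat D ⊆ (TFracProof.IG 0 q).edgeSet := by
    intro e he
    obtain ⟨e0, he0, rfl⟩ := he
    have hedge := hD he0
    clear he0
    revert hedge
    induction e0 with
    | _ u v =>
      intro hedge
      rw [Sym2.map_pair_eq]
      rw [SimpleGraph.mem_edgeSet] at hedge ⊢
      exact TFracProof.adj_iff.mp hedge
  have hcard : (TFracProof.Dnat D).ncard = D.ncard :=
    Set.ncard_image_of_injective _ (Sym2.map.injective Fin.val_injective)
  have hcut' : ¬ (TFracProof.HG 0 q (TFracProof.Dnat D)).Reachable 0 (0 + 2 ^ q) := by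
    intro h
    obtain ⟨w⟩ := h
    obtain ⟨w', -⟩ := TFracProof.walk_nat_to_fin w (by omega) (by omega)
    have htau : (⟨0 + 2 ^ q, by omega⟩ : Fin (2 ^ q + 1)) = tauV q := by
      apply Fin.ext
      simp [tauV]
    apply hcut
    rw [← htau]
    exact ⟨w'⟩
  have htwo' : ∀ y, 0 ≤ y → y ≤ 0 + 2 ^ q →
      (TFracProof.HG 0 q (TFracProof.Dnat D)).Reachable 0 y ∨
      (TFracProof.HG 0 q (TFracProof.Dnat D)).Reachable (0 + 2 ^ q) y := by
    intro y h1 h2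
    have hy : y < 2 ^ q + 1 := by omega
    rcases htwo ⟨y, hy⟩ with h | h
    · exact Or.inl (TFracProof.reach_fin_to_nat h)
    · right
      rw [Nat.zero_add]
      exact TFracProof.reach_fin_to_nat h
  obtain ⟨z, hz, w, hw⟩ := hM 0 (TFracProof.Dnat D) (dvd_zero _) hDsub hcut' htwo'
    x.val (Nat.zero_le _) (by have := x.isLt; omega)
  have hzlt : z < 2 ^ q + 1 := by rcases hz with rfl | rfl <;> omega
  obtain ⟨w', hw'⟩ := TFracProof.walk_nat_to_fin w hzlt x.isLt
  refine ⟨⟨z, hzlt⟩, ?_, ⟨w'⟩, ?_⟩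
  · rcases hz with h | h
    · exact Or.inl (Fin.ext (by simp [sigV, h]))
    · exact Or.inr (Fin.ext (by simp [tauV, h]))
  · have hd := SimpleGraph.dist_le w'
    have hx : (⟨x.val, x.isLt⟩ : Fin (2 ^ q + 1)) = x := Fin.ext rfl
    have hd2 : ((TFractal q).deleteEdges D).dist ⟨z, hzlt⟩ x ≤ w'.length := hd
    omega
end

section
/- Let D be a set of arcs of the directed q-T-fractal and let x be any vertex reachable from σ after removing D. Then the length of a shortest directed σ-x path after removing D is at most q + |D| + 1. -/
/-- The directed `q`-T-fractal: each boundary path is oriented from `σ` towards `τ`,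
i.e. every arc goes from `a` to `a + 2^(q-i)`. -/
def DFractal (q : ℕ) : Fin (2 ^ q + 1) → Fin (2 ^ q + 1) → Prop :=
  fun a b => fracAdjAux q a.val b.val

namespace DFracAux


/-- Exact-length chains for a relation. -/
def chainE {α : Type*} (R : α → α → Prop) : ℕ → α → α → Prop
  | 0, a, b => a = b
  | n+1, a, b => ∃ c, R a c ∧ chainE R n c b

lemma chainE_mono {α : Type*} {R R' : α → α → Prop} (h : ∀ a b, R a b → R' a b) :
    ∀ n a b, chainE R n a b → chainE R' n a b
  | 0, _, _, hc => hc
  | n+1, a, b, ⟨c, h1, h2⟩ => ⟨c, h a c h1, chainE_mono h n c b h2⟩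

lemma chainE_trans {α : Type*} {R : α → α → Prop} :
    ∀ m n a b c, chainE R m a b → chainE R n b c → chainE R (m + n) a c
  | 0, n, a, b, c, h1, h2 => by cases h1; simpa using h2
  | m+1, n, a, b, c, ⟨d, h1, h2⟩, h3 => by
      have : m + 1 + n = (m + n) + 1 := by omega
      rw [this]
      exact ⟨d, h1, chainE_trans m n d b c h2 h3⟩

lemma chainE_exists_fun {α : Type*} {R : α → α → Prop} :
    ∀ n a b, chainE R n a b → ∃ f : Fin (n+1) → α,
      f 0 = a ∧ f (Fin.last n) = b ∧ ∀ i : Fin n, R (f i.castSucc) (f i.succ)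
  | 0, a, b, hc => ⟨fun _ => a, rfl, hc, fun i => i.elim0⟩
  | n+1, a, b, ⟨c, h1, h2⟩ => by
      obtain ⟨f', hf0, hfl, hfs⟩ := chainE_exists_fun n c b h2
      refine ⟨Fin.cons a f', Fin.cons_zero _ _, ?_, ?_⟩
      · rw [← Fin.succ_last, Fin.cons_succ]; exact hfl
      · intro i
        induction i using Fin.cases with
        | zero =>
            have e1 : (Fin.castSucc (0 : Fin (n+1))) = (0 : Fin (n+2)) := rfl
            have e2 : (Fin.succ (0 : Fin (n+1))) = Fin.succ (0 : Fin (n+1)) := rfl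
            rw [e1, Fin.cons_zero, Fin.cons_succ, hf0]
            exact h1
        | succ j =>
            have e1 : (Fin.castSucc (Fin.succ j)) = Fin.succ (Fin.castSucc j) :=
              (Fin.succ_castSucc j).symm
            rw [e1, Fin.cons_succ, Fin.cons_succ]
            exact hfs j

/-- Arcs of the directed `q`-fractal on `ℕ`. -/
def NArc (q a b : ℕ) : Prop :=
  (∃ j, j ≤ q ∧ 2 ^ j ∣ a ∧ b = a + 2 ^ j) ∧ b ≤ 2 ^ q

def NRel (q : ℕ) (D : Set (ℕ × ℕ)) (a b : ℕ) : Prop :=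
  NArc q a b ∧ (a, b) ∉ D

lemma NArc.lt {q a b : ℕ} (h : NArc q a b) : a < b := by
  obtain ⟨⟨j, _, _, rfl⟩, _⟩ := h
  have := Nat.two_pow_pos j
  omega

lemma pow_le_pow_nat {j q : ℕ} (h : 2 ^ j ≤ 2 ^ q) : j ≤ q :=
  (Nat.pow_le_pow_iff_right (by norm_num)).1 h

def SL (q : ℕ) : Set (ℕ × ℕ) := {p | p.1 < 2 ^ q ∧ p.2 ≤ 2 ^ q}
def SR (q : ℕ) : Set (ℕ × ℕ) := {p | 2 ^ q ≤ p.1 ∧ 2 ^ q ≤ p.2}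
def DR (q : ℕ) (D : Set (ℕ × ℕ)) : Set (ℕ × ℕ) :=
  (fun p : ℕ × ℕ => (p.1 - 2 ^ q, p.2 - 2 ^ q)) '' (D ∩ SR q)

lemma mem_DR {q : ℕ} {D : Set (ℕ × ℕ)} {a b : ℕ}
    (h : (a, b) ∈ DR q D) : (a + 2 ^ q, b + 2 ^ q) ∈ D := by
  obtain ⟨⟨p1, p2⟩, ⟨hpD, hp1, hp2⟩, he⟩ := h
  simp only [Prod.mk.injEq] at he
  have : p1 = a + 2 ^ q := by omega
  have : p2 = b + 2 ^ q := by omega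
  simp_all

/-- Restriction of a path ending in the left half to the left copy. -/
lemma left_restrict {q : ℕ} {D : Set (ℕ × ℕ)} {x : ℕ}
    (h : Relation.ReflTransGen (NRel (q+1) D) 0 x) (hx : x ≤ 2 ^ q) :
    Relation.ReflTransGen (NRel q (D ∩ SL q)) 0 x := by
  induction h with
  | refl => exact .refl
  | @tail y z h1 h2 ih =>
      have hyz : y < z := h2.1.lt
      obtain ⟨⟨⟨j, hj, hdvd, rfl⟩, _⟩, hmem⟩ := h2
      have hjq : j ≤ q := pow_le_pow_nat (by omega)
      refine (ih (by omega)).tail ⟨⟨⟨j, hjq, hdvd, rfl⟩, hx⟩, ?_⟩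
      exact fun hc => hmem hc.1

/-- Decomposition of a path ending in the right half. -/
lemma decompose {q : ℕ} {D : Set (ℕ × ℕ)} {x : ℕ}
    (h : Relation.ReflTransGen (NRel (q+1) D) 0 x) (hx : 2 ^ q < x) :
    (x = 2 ^ (q+1) ∧ NRel (q+1) D 0 x) ∨
      (Relation.ReflTransGen (NRel (q+1) D) 0 (2 ^ q) ∧
        Relation.ReflTransGen (NRel (q+1) D) (2 ^ q) x) := by
  induction h with
  | refl => simp at hx
  | @tail y z h1 h2 ih =>
      rcases le_or_gt y (2 ^ q) with hy | hy
      · rcases eq_or_lt_of_le hy with rfl | hy'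
        · exact Or.inr ⟨h1, Relation.ReflTransGen.single h2⟩
        · -- y < 2^q < z : only possible if y = 0, z = 2^(q+1)
          obtain ⟨⟨⟨j, hj, hdvd, rfl⟩, hz⟩, hmem⟩ := h2
          rcases Nat.eq_zero_or_pos y with rfl | hy0
          · -- z = 2^j > 2^q, z ≤ 2^(q+1) ⇒ j = q+1
            have hjq : q < j := by
              by_contra hc
              have : 2 ^ j ≤ 2 ^ q := Nat.pow_le_pow_right (by norm_num) (by omega)
              omega
            have : j = q + 1 := by omega
            subst this
            exact Or.inl ⟨by omega, ⟨⟨q+1, le_rfl, hdvd, rfl⟩, hz⟩, hmem⟩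
          · exfalso
            have hjle : j ≤ q := by
              by_contra hc
              have h2j : 2 ^ j ≤ y := Nat.le_of_dvd hy0 hdvd
              have : 2 ^ (q+1) ≤ 2 ^ j := Nat.pow_le_pow_right (by norm_num) (by omega)
              have : 2 ^ q < 2 ^ (q+1) := Nat.pow_lt_pow_right (by norm_num) (by omega)
              omega
            have hd2 : 2 ^ j ∣ 2 ^ q - y := Nat.dvd_sub (Nat.pow_dvd_pow 2 hjle) hdvd
            have : 2 ^ j ≤ 2 ^ q - y := Nat.le_of_dvd (by omega) hd2
            omega
      · rcases ih hy with ⟨rfl, harc, _⟩ | ⟨hl, hr⟩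
        · exfalso
          have := h2.1.lt
          have := h2.1.2
          omega
        · exact Or.inr ⟨hl, hr.tail h2⟩

/-- Restriction of a path in the right half to the (shifted) right copy. -/
lemma right_restrict {q : ℕ} {D : Set (ℕ × ℕ)} {a b : ℕ}
    (h : Relation.ReflTransGen (NRel (q+1) D) a b) (ha : 2 ^ q ≤ a) :
    Relation.ReflTransGen (NRel q (DR q D)) (a - 2 ^ q) (b - 2 ^ q) := by
  induction h using Relation.ReflTransGen.head_induction_on with
  | refl => exact .refl
  | @head y c h1 h2 ih =>
      obtain ⟨⟨⟨j, hj, hdvd, rfl⟩, hc⟩, hmem⟩ := h1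
      have hp : (0:ℕ) < 2 ^ j := Nat.two_pow_pos j
      have hq1 : 2 ^ (q+1) = 2 ^ q + 2 ^ q := by ring
      have hjq : j ≤ q := pow_le_pow_nat (by omega)
      have hdvd2 : (2:ℕ) ^ j ∣ 2 ^ q := Nat.pow_dvd_pow 2 hjq
      have hc' : 2 ^ q ≤ y + 2 ^ j := by omega
      refine Relation.ReflTransGen.head ⟨⟨⟨j, hjq, Nat.dvd_sub hdvd hdvd2, by omega⟩,
        by omega⟩, ?_⟩ (ih hc')
      intro hmm
      have := mem_DR hmm
      have e1 : y - 2 ^ q + 2 ^ q = y := by omega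
      have e2 : y + 2 ^ j - 2 ^ q + 2 ^ q = y + 2 ^ j := by omega
      rw [e1, e2] at this
      exact hmem this

/-- Lifting a chain in the left copy to the whole fractal. -/
lemma left_lift {q : ℕ} {D : Set (ℕ × ℕ)} {n a b : ℕ}
    (h : chainE (NRel q (D ∩ SL q)) n a b) : chainE (NRel (q+1) D) n a b := by
  refine chainE_mono (fun a b hab => ?_) n a b h
  obtain ⟨⟨⟨j, hj, hdvd, rfl⟩, hb⟩, hmem⟩ := hab
  have hp : (0:ℕ) < 2 ^ j := Nat.two_pow_pos j
  have h2 : 2 ^ q ≤ 2 ^ (q+1) := Nat.pow_le_pow_right (by norm_num) (by omega)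
  refine ⟨⟨⟨j, by omega, hdvd, rfl⟩, by omega⟩, fun hc => hmem ⟨hc, by omega, hb⟩⟩

/-- Lifting a chain in the right copy (shifted by `2^q`). -/
lemma right_lift {q : ℕ} {D : Set (ℕ × ℕ)} :
    ∀ n a b, chainE (NRel q (DR q D)) n a b →
      chainE (NRel (q+1) D) n (a + 2 ^ q) (b + 2 ^ q)
  | 0, a, b, hc => by cases hc; rfl
  | n+1, a, b, ⟨c, ⟨⟨⟨j, hj, hdvd, he⟩, hc2⟩, hmem⟩, hrest⟩ => by
      subst he
      have hdvd2 : (2:ℕ) ^ j ∣ 2 ^ q := Nat.pow_dvd_pow 2 hj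
      have h2 : 2 ^ (q+1) = 2 ^ q + 2 ^ q := by ring
      refine ⟨a + 2 ^ j + 2 ^ q, ⟨⟨⟨j, by omega, hdvd.add hdvd2, by ring⟩, by omega⟩, ?_⟩,
        by have := right_lift n (a + 2 ^ j) b hrest; exact this⟩
      intro hcc
      refine hmem ?_
      have : ((a + 2 ^ q) - 2 ^ q, (a + 2 ^ j + 2 ^ q) - 2 ^ q) ∈ DR q D := by
        exact Set.mem_image_of_mem _ (Set.mem_inter hcc (by simp only [SR, Set.mem_setOf_eq]; omega))
      simpa using this

/-- cardinality bookkeeping -/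
lemma card_split {q : ℕ} {D : Set (ℕ × ℕ)} (hD : D.Finite) :
    (D ∩ SL q).ncard + (DR q D).ncard ≤ D.ncard := by
  have h1 : (DR q D).ncard ≤ (D ∩ SR q).ncard :=
    Set.ncard_image_le (hD.inter_of_left _)
  have hdisj : Disjoint (D ∩ SL q) (D ∩ SR q) := by
    rw [Set.disjoint_iff]
    rintro ⟨p1, p2⟩ ⟨⟨_, h1', _⟩, ⟨_, h2', _⟩⟩
    simp only [SL, SR, Set.mem_setOf_eq] at *
    omega
  have hsub : (D ∩ SL q) ∪ (D ∩ SR q) ⊆ D := by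
    rintro p (⟨h, _⟩ | ⟨h, _⟩) <;> exact h
  calc (D ∩ SL q).ncard + (DR q D).ncard
      ≤ (D ∩ SL q).ncard + (D ∩ SR q).ncard := by omega
    _ = ((D ∩ SL q) ∪ (D ∩ SR q)).ncard :=
        (Set.ncard_union_eq hdisj (hD.inter_of_left _) (hD.inter_of_left _)).symm
    _ ≤ D.ncard := Set.ncard_le_ncard hsub hD

lemma card_split_top {q : ℕ} {D : Set (ℕ × ℕ)} (hD : D.Finite)
    (htop : ((0 : ℕ), 2 ^ (q+1)) ∈ D) :
    (D ∩ SL q).ncard + (DR q D).ncard + 1 ≤ D.ncard := by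
  have h1 : (DR q D).ncard ≤ (D ∩ SR q).ncard :=
    Set.ncard_image_le (hD.inter_of_left _)
  have hq : (0:ℕ) < 2 ^ q := Nat.two_pow_pos q
  have hqq : 2 ^ q < 2 ^ (q+1) := Nat.pow_lt_pow_right (by norm_num) (by omega)
  have hdisj : Disjoint (D ∩ SL q) (D ∩ SR q) := by
    rw [Set.disjoint_iff]
    rintro ⟨p1, p2⟩ ⟨⟨_, h1', _⟩, ⟨_, h2', _⟩⟩
    simp only [SL, SR, Set.mem_setOf_eq] at *
    omega
  have hnot : ((0:ℕ), 2 ^ (q+1)) ∉ (D ∩ SL q) ∪ (D ∩ SR q) := by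
    rintro (⟨_, h, _⟩ | ⟨_, h, _⟩) <;> simp only [SL, SR, Set.mem_setOf_eq] at h <;> omega
  have hsub : insert ((0:ℕ), 2 ^ (q+1)) ((D ∩ SL q) ∪ (D ∩ SR q)) ⊆ D := by
    rintro p (rfl | (⟨h, _⟩ | ⟨h, _⟩)) <;> first | exact htop | exact h
  have hfin : ((D ∩ SL q) ∪ (D ∩ SR q)).Finite :=
    (hD.inter_of_left _).union (hD.inter_of_left _)
  calc (D ∩ SL q).ncard + (DR q D).ncard + 1
      ≤ (D ∩ SL q).ncard + (D ∩ SR q).ncard + 1 := by omega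
    _ = ((D ∩ SL q) ∪ (D ∩ SR q)).ncard + 1 := by
        rw [Set.ncard_union_eq hdisj (hD.inter_of_left _) (hD.inter_of_left _)]
    _ = (insert ((0:ℕ), 2 ^ (q+1)) ((D ∩ SL q) ∪ (D ∩ SR q))).ncard := by
        rw [Set.ncard_insert_of_notMem hnot hfin]
    _ ≤ D.ncard := Set.ncard_le_ncard hsub hD

/-- base-case extraction: a path `0 →* 1` in the `0`-fractal gives the single arc. -/
lemma base_step {D : Set (ℕ × ℕ)}
    (h : Relation.ReflTransGen (NRel 0 D) 0 1) : NRel 0 D 0 1 := by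
  rcases (Relation.ReflTransGen.cases_tail h) with he | ⟨c, hc, hstep⟩
  · omega
  · have : c < 1 := hstep.1.lt
    interval_cases c
    exact hstep

/-- Lemma A: reaching `τ = 2^q` takes at most `|D| + 1` steps. -/
lemma lemA : ∀ (q : ℕ) (D : Set (ℕ × ℕ)), D.Finite →
    Relation.ReflTransGen (NRel q D) 0 (2 ^ q) →
    ∃ n ≤ D.ncard + 1, chainE (NRel q D) n 0 (2 ^ q)
  | 0, D, hD, h => ⟨1, by omega, 1, base_step h, rfl⟩
  | q+1, D, hD, h => by
      by_cases htop : ((0:ℕ), 2 ^ (q+1)) ∈ D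
      · have hdec := decompose h (Nat.pow_lt_pow_right (by norm_num) (by omega))
        rcases hdec with ⟨_, _, hmem⟩ | ⟨hl, hr⟩
        · exact absurd htop hmem
        · obtain ⟨n₁, hn₁, c₁⟩ := lemA q (D ∩ SL q) (hD.inter_of_left _)
            (left_restrict hl le_rfl)
          have hr' := right_restrict hr le_rfl
          have e1 : 2 ^ q - 2 ^ q = 0 := by omega
          have e2 : 2 ^ (q+1) - 2 ^ q = 2 ^ q := by
            rw [pow_succ]; generalize (2:ℕ) ^ q = m; omega
          rw [e1, e2] at hr'
          obtain ⟨n₂, hn₂, c₂⟩ := lemA q (DR q D)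
            ((hD.inter_of_left _).image _) hr'
          have c₂' := right_lift n₂ 0 (2 ^ q) c₂
          have e3 : (0:ℕ) + 2 ^ q = 2 ^ q := by omega
          have e4 : 2 ^ q + 2 ^ q = 2 ^ (q+1) := by ring
          rw [e3, e4] at c₂'
          refine ⟨n₁ + n₂, ?_, chainE_trans n₁ n₂ _ _ _ (left_lift c₁) c₂'⟩
          have := card_split_top hD htop
          omega
      · refine ⟨1, by omega, 2 ^ (q+1), ⟨⟨⟨q+1, le_rfl, Dvd.intro 0 rfl, by omega⟩,
          le_rfl⟩, htop⟩, rfl⟩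

/-- Lemma B: reaching any `x` takes at most `q + |D| + 1` steps. -/
lemma lemB : ∀ (q : ℕ) (D : Set (ℕ × ℕ)) (x : ℕ), D.Finite → x ≤ 2 ^ q →
    Relation.ReflTransGen (NRel q D) 0 x →
    ∃ n ≤ q + D.ncard + 1, chainE (NRel q D) n 0 x
  | 0, D, x, hD, hx, h => by
      interval_cases x
      · exact ⟨0, by omega, rfl⟩
      · exact ⟨1, by omega, 1, base_step h, rfl⟩
  | q+1, D, x, hD, hx, h => by
      rcases le_or_gt x (2 ^ q) with hxl | hxr
      · obtain ⟨n, hn, c⟩ := lemB q (D ∩ SL q) x (hD.inter_of_left _) hxl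
          (left_restrict h hxl)
        refine ⟨n, ?_, left_lift c⟩
        have : (D ∩ SL q).ncard ≤ D.ncard :=
          Set.ncard_le_ncard Set.inter_subset_left hD
        omega
      · rcases decompose h hxr with ⟨rfl, harc⟩ | ⟨hl, hr⟩
        · exact ⟨1, by omega, 2 ^ (q+1), harc, rfl⟩
        · obtain ⟨n₁, hn₁, c₁⟩ := lemA q (D ∩ SL q) (hD.inter_of_left _)
            (left_restrict hl le_rfl)
          have hr' := right_restrict hr le_rfl
          have e1 : 2 ^ q - 2 ^ q = 0 := by omega
          rw [e1] at hr'
          have hx2 : x - 2 ^ q ≤ 2 ^ q := by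
            have : 2 ^ (q+1) = 2 ^ q + 2 ^ q := by ring
            omega
          obtain ⟨n₂, hn₂, c₂⟩ := lemB q (DR q D) (x - 2 ^ q)
            ((hD.inter_of_left _).image _) hx2 hr'
          have c₂' := right_lift n₂ 0 (x - 2 ^ q) c₂
          have e3 : (0:ℕ) + 2 ^ q = 2 ^ q := by omega
          have e4 : x - 2 ^ q + 2 ^ q = x := by omega
          rw [e3, e4] at c₂'
          refine ⟨n₁ + n₂, ?_, chainE_trans n₁ n₂ _ _ _ (left_lift c₁) c₂'⟩
          have := card_split (q := q) hD
          omega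


lemma chain_fin {q : ℕ} {D : Set (Fin (2 ^ q + 1) × Fin (2 ^ q + 1))}
    {D' : Set (ℕ × ℕ)}
    (hfwd : ∀ u v : Fin (2 ^ q + 1), (u, v) ∈ D → (u.val, v.val) ∈ D') :
    ∀ n (a b : ℕ) (ha : a < 2 ^ q + 1), chainE (NRel q D') n a b →
      ∃ hb : b < 2 ^ q + 1,
        chainE (fun u v : Fin (2 ^ q + 1) => DFractal q u v ∧ (u, v) ∉ D) n
          ⟨a, ha⟩ ⟨b, hb⟩
  | 0, a, b, ha, hc => by cases hc; exact ⟨ha, rfl⟩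
  | n+1, a, b, ha, ⟨c, ⟨⟨⟨j, hj, hdvd, he⟩, hc2⟩, hmem⟩, hrest⟩ => by
      subst he
      have hclt : a + 2 ^ j < 2 ^ q + 1 := by omega
      obtain ⟨hb, hch⟩ := chain_fin hfwd n (a + 2 ^ j) b hclt hrest
      refine ⟨hb, ⟨a + 2 ^ j, hclt⟩, ⟨?_, ?_⟩, hch⟩
      · exact ⟨q - j, by omega, by rw [Nat.sub_sub_self hj]; exact ⟨hdvd, rfl⟩⟩
      · intro hm
        exact hmem (hfwd _ _ hm)

end DFracAux

/-- if `D` is a set of arcs of the directed `q`-T-fractal and `x` is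
reachable from `σ` after removing `D`, then there is a directed `σ`-`x` path of length
at most `q + |D| + 1` avoiding `D`. -/
theorem dfractal_reachable_distance_bound (q : ℕ)
    (D : Set (Fin (2 ^ q + 1) × Fin (2 ^ q + 1))) (x : Fin (2 ^ q + 1))
    (hx : Relation.ReflTransGen (fun a b => DFractal q a b ∧ (a, b) ∉ D) (sigV q) x) :
    ∃ n ≤ q + D.ncard + 1, ∃ f : Fin (n + 1) → Fin (2 ^ q + 1),
      f 0 = sigV q ∧ f (Fin.last n) = x ∧
        ∀ i : Fin n, DFractal q (f i.castSucc) (f i.succ) ∧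
          (f i.castSucc, f i.succ) ∉ D := by
  classical
  set D' : Set (ℕ × ℕ) :=
    (fun p : Fin (2 ^ q + 1) × Fin (2 ^ q + 1) => (p.1.val, p.2.val)) '' D with hD'
  have hfinD : D.Finite := Set.toFinite D
  have hfin : D'.Finite := hfinD.image _
  have hcard : D'.ncard ≤ D.ncard := Set.ncard_image_le hfinD
  have hfwd : ∀ u v : Fin (2 ^ q + 1), (u, v) ∈ D → (u.val, v.val) ∈ D' :=
    fun u v h => ⟨(u, v), h, rfl⟩
  have hstep : ∀ a b : Fin (2 ^ q + 1), (DFractal q a b ∧ (a, b) ∉ D) →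
      DFracAux.NRel q D' a.val b.val := by
    intro a b hab
    obtain ⟨⟨i, hi, hdvd, he⟩, hmem⟩ := hab
    refine ⟨⟨⟨q - i, by omega, hdvd, he⟩, by omega⟩, ?_⟩
    rintro ⟨⟨p1, p2⟩, hpD, hpe⟩
    simp only [Prod.mk.injEq] at hpe
    have h1 : p1 = a := Fin.ext hpe.1
    have h2 : p2 = b := Fin.ext hpe.2
    subst h1; subst h2
    exact hmem hpD
  have hmap : Relation.ReflTransGen (DFracAux.NRel q D') 0 x.val :=
    Relation.ReflTransGen.lift (fun u : Fin (2 ^ q + 1) => u.val) hstep _ _ hx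
  have hxle : x.val ≤ 2 ^ q := by omega
  obtain ⟨n, hn, hc⟩ := DFracAux.lemB q D' x.val hfin hxle hmap
  obtain ⟨hb, hcf⟩ := DFracAux.chain_fin hfwd n 0 x.val (by omega) hc
  obtain ⟨f, hf0, hfl, hfs⟩ := DFracAux.chainE_exists_fun n _ _ hcf
  refine ⟨n, by omega, f, ?_, ?_, hfs⟩
  · rw [hf0]; rfl
  · rw [hfl]
end
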